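/- arXiv:math/0411459 — 5 statements merged into one kernel-verified Lean document; each statement's English description precedes it below -/
import Mathlib

section
/- If A is a finite subset of Z^d and B is the set of sites that A separates from infinity (i.e., every infinite nearest-neighbour self-avoiding path starting in B meets A), then |A| ≥ |B|^{1 - 1/d}. -/
open MeasureTheory ProbabilityTheory Filter

/-- Sites of the lattice `ℤ^d`. -/
abbrev Pt (d : ℕ) := Fin d → ℤ

/-- Nearest-neighbour adjacency in `ℤ^d`: the two sites differ by `1` in exactly one
coordinate. -/
def nnAdj {d : ℕ} (x y : Pt d) : Prop := (∑ i, (x i - y i).natAbs) = 1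

/-- A set of sites is connected in the nearest-neighbour graph. -/
def connSet {d : ℕ} (A : Set (Pt d)) : Prop :=
  ∀ x ∈ A, ∀ y ∈ A, Relation.ReflTransGen (fun a b => nnAdj a b ∧ a ∈ A ∧ b ∈ A) x y

/-- A finite set of sites is connected in the nearest-neighbour graph. -/
def connFinset {d : ℕ} (A : Finset (Pt d)) : Prop := connSet (A : Set (Pt d))

/-- The box `B_n = {0, …, n-1}^d`. -/
noncomputable def boxF (d n : ℕ) : Finset (Pt d) := Fintype.piFinset fun _ => Finset.Ico (0:ℤ) (n:ℤ)

section LWAux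
open ENNReal

variable {ι : Type*} [DecidableEq ι]

/-- Projection onto the coordinates in `s`, zeroing out the others. -/
def pr (s : Finset ι) (x : ι → ℤ) : ι → ℤ := fun j => if j ∈ s then x j else 0

lemma pr_pr {a b : Finset ι} (h : a ⊆ b) (x : ι → ℤ) : pr a (pr b x) = pr a x := by
  funext j
  by_cases hj : j ∈ a <;> simp [pr, hj, fun hja => h hja]

lemma pr_comp {a b : Finset ι} (h : a ⊆ b) : pr a ∘ pr b = pr a := funext fun x => pr_pr h x

lemma prod_rpow_aux {κ : Type*} (s : Finset κ) (f : κ → ℝ≥0∞) {r : ℝ} (hr : 0 ≤ r) :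
    (∏ i ∈ s, f i) ^ r = ∏ i ∈ s, f i ^ r := by
  induction s using Finset.cons_induction with
  | empty => simp
  | cons i s hi ih => rw [Finset.prod_cons, Finset.prod_cons, ENNReal.mul_rpow_of_nonneg _ _ hr, ih]

lemma hoelder_count {κ : Type*} (s : Finset κ) (hs : s.Nonempty) (F : κ → ℤ → ℝ≥0∞) :
    ∑' t : ℤ, ∏ i ∈ s, F i t ^ (1/(s.card:ℝ)) ≤ ∏ i ∈ s, (∑' t : ℤ, F i t) ^ (1/(s.card:ℝ)) := by
  simp_rw [← MeasureTheory.lintegral_count]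
  refine ENNReal.lintegral_prod_norm_pow_le s (fun i _ => (measurable_of_countable _).aemeasurable)
    ?_ (fun i _ => by positivity)
  rw [Finset.sum_const, nsmul_eq_mul]
  have : (s.card : ℝ) ≠ 0 := by exact_mod_cast Finset.card_ne_zero_of_mem hs.choose_spec
  field_simp

/-- Discrete Loomis–Whitney inequality. -/
lemma loomis_whitney [DecidableEq (ι → ℤ)] : ∀ (n : ℕ) (s : Finset ι), s.card = n →
    ∀ (T : Finset (ι → ℤ)), T.Nonempty → (∀ x ∈ T, ∀ j ∉ s, x j = 0) →
    ((T.card : ℝ≥0∞)) ^ (n - 1) ≤ ∏ i ∈ s, (((T.image (pr (s.erase i))).card : ℝ≥0∞)) := by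
  intro n
  induction n with
  | zero =>
    intro s hs T hT hsupp
    obtain rfl := Finset.card_eq_zero.mp hs
    simp
  | succ n ih =>
    intro s hs T hT hsupp
    classical
    rcases Nat.eq_zero_or_pos n with hn0 | hn1
    · -- s is a singleton
      subst hn0
      obtain ⟨i₀, rfl⟩ := Finset.card_eq_one.mp hs
      have : ({i₀} : Finset ι).erase i₀ = ∅ := by simp
      simp only [Finset.prod_singleton, this]
      have hpr : pr (∅ : Finset ι) = fun _ => (fun _ => (0:ℤ)) := by
        funext x j; simp [pr]
      rw [hpr, Finset.image_const hT]
      simp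
    · -- main case : n ≥ 1
      have hspos : 0 < s.card := by omega
      obtain ⟨i₀, hi₀⟩ := Finset.card_pos.mp hspos
      set s' := s.erase i₀ with hs'def
      have hs' : s'.card = n := by rw [hs'def, Finset.card_erase_of_mem hi₀, hs]; rfl
      have hins : s = insert i₀ s' := (Finset.insert_erase hi₀).symm
      have hn0 : (n : ℝ) ≠ 0 := by exact_mod_cast hn1.ne'
      set Tt : ℤ → Finset (ι → ℤ) := fun t => T.filter (fun x => x i₀ = t) with hTt
      set keys : Finset ℤ := T.image (fun x => x i₀) with hkeys
      set F : ι → ℤ → ℝ≥0∞ := fun i t => (((Tt t).image (pr (s.erase i))).card : ℝ≥0∞) with hF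
      set G : ι → ℝ≥0∞ := fun i => ((T.image (pr (s.erase i))).card : ℝ≥0∞) with hG
      -- slice membership facts
      have hTtkeys : ∀ t, t ∉ keys → Tt t = ∅ := by
        intro t ht
        rw [Finset.filter_eq_empty_iff]
        intro x hx hxt
        exact ht (Finset.mem_image.mpr ⟨x, hx, hxt⟩)
      -- Step A: slice decomposition
      have hsum : (T.card : ℝ≥0∞) = ∑' t : ℤ, ((Tt t).card : ℝ≥0∞) := by
        rw [tsum_eq_sum (s := keys) (fun t ht => by rw [hTtkeys t ht]; simp)]
        rw [Finset.card_eq_sum_card_fiberwise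
          (f := fun x => x i₀) (t := keys) (fun x hx => Finset.mem_image_of_mem _ hx)]
        push_cast
        rfl
      -- injectivity of pr s' on slices
      have hinj_slice : ∀ t, Set.InjOn (pr s') (Tt t : Set (ι → ℤ)) := by
        intro t x hx y hy h
        simp only [hTt, Finset.coe_filter, Set.mem_setOf_eq] at hx hy
        funext j
        by_cases hj : j ∈ s'
        · have := congrFun h j
          simpa [pr, hj] using this
        · by_cases hj0 : j = i₀
          · rw [hj0, hx.2, hy.2]
          · have hjs : j ∉ s := by
              intro hjs
              exact hj (Finset.mem_erase.mpr ⟨hj0, hjs⟩)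
            rw [hsupp x hx.1 j hjs, hsupp y hy.1 j hjs]
      have hcard_slice : ∀ t, ((Tt t).image (pr s')).card = (Tt t).card := fun t =>
        Finset.card_image_of_injOn (hinj_slice t)
      have hslice_le : ∀ t, (Tt t).card ≤ (T.image (pr s')).card := by
        intro t
        rw [← hcard_slice t]
        exact Finset.card_le_card (Finset.image_subset_image (Finset.filter_subset _ _))
      -- card equality between the two kinds of double projections
      have hFeq : ∀ i ∈ s', ∀ t : ℤ,
          ((Tt t).image (pr (s'.erase i))).card = ((Tt t).image (pr (s.erase i))).card := by
        intro i hi t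
        have hii₀ : i ≠ i₀ := (Finset.mem_erase.mp hi).1
        have hsub : s'.erase i ⊆ s.erase i :=
          Finset.erase_subset_erase i (Finset.erase_subset i₀ s)
        have h1 : (Tt t).image (pr (s'.erase i)) =
            ((Tt t).image (pr (s.erase i))).image (pr (s'.erase i)) := by
          rw [Finset.image_image, pr_comp hsub]
        rw [h1]
        refine Finset.card_image_of_injOn ?_
        intro y hy z hz h
        simp only [Finset.coe_image, Set.mem_image] at hy hz
        obtain ⟨x, hx, rfl⟩ := hy
        obtain ⟨x', hx', rfl⟩ := hz
        have hxt : x i₀ = t := (Finset.mem_filter.mp hx).2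
        have hx't : x' i₀ = t := (Finset.mem_filter.mp hx').2
        have hi₀mem : i₀ ∈ s.erase i := Finset.mem_erase.mpr ⟨hii₀.symm, hi₀⟩
        funext j
        by_cases hj : j ∈ s'.erase i
        · have := congrFun h j
          simpa [pr, hj] using this
        · by_cases hj0 : j = i₀
          · subst hj0
            simp [pr, hi₀mem, hxt, hx't]
          · have hjs : j ∉ s.erase i := by
              intro hjs
              obtain ⟨hji, hjss⟩ := Finset.mem_erase.mp hjs
              exact hj (Finset.mem_erase.mpr ⟨hji, Finset.mem_erase.mpr ⟨hj0, hjss⟩⟩)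
            simp [pr, hjs]
      -- inductive hypothesis applied to slices
      have hIH : ∀ t, (Tt t).Nonempty → ((Tt t).card : ℝ≥0∞) ^ (n - 1) ≤ ∏ i ∈ s', F i t := by
        intro t ht
        have hsupp' : ∀ x ∈ (Tt t).image (pr s'), ∀ j ∉ s', x j = 0 := by
          intro x hx j hj
          obtain ⟨y, _, rfl⟩ := Finset.mem_image.mp hx
          simp [pr, hj]
        have H := ih s' hs' ((Tt t).image (pr s')) (ht.image _) hsupp'
        rw [hcard_slice t] at H
        refine H.trans_eq (Finset.prod_congr rfl fun i hi => ?_)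
        rw [Finset.image_image, pr_comp (Finset.erase_subset _ _)]
        simp only [hF]
        exact_mod_cast hFeq i hi t
      set c : ℝ≥0∞ := ((T.image (pr s')).card : ℝ≥0∞) with hc
      -- per-slice bound
      have hper : ∀ t : ℤ, ((Tt t).card : ℝ≥0∞) ≤
          c ^ (1/(n:ℝ)) * ∏ i ∈ s', F i t ^ (1/(n:ℝ)) := by
        intro t
        rcases (Tt t).eq_empty_or_nonempty with he | hne
        · simp [he]
        have hx : ((Tt t).card : ℝ≥0∞) ^ n ≤ c * ∏ i ∈ s', F i t := by
          have h1 : ((Tt t).card : ℝ≥0∞) ^ n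
              = ((Tt t).card : ℝ≥0∞) * ((Tt t).card : ℝ≥0∞) ^ (n - 1) := by
            rw [← pow_succ']
            congr 1
            omega
          rw [h1]
          refine mul_le_mul' ?_ (hIH t hne)
          rw [hc]
          exact_mod_cast hslice_le t
        calc ((Tt t).card : ℝ≥0∞)
            = (((Tt t).card : ℝ≥0∞) ^ n) ^ (1/(n:ℝ)) := by
              rw [← ENNReal.rpow_natCast _ n, ← ENNReal.rpow_mul, mul_one_div,
                div_self hn0, ENNReal.rpow_one]
          _ ≤ (c * ∏ i ∈ s', F i t) ^ (1/(n:ℝ)) :=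
              ENNReal.rpow_le_rpow hx (by positivity)
          _ = c ^ (1/(n:ℝ)) * ∏ i ∈ s', F i t ^ (1/(n:ℝ)) := by
              rw [ENNReal.mul_rpow_of_nonneg _ _ (by positivity),
                prod_rpow_aux _ _ (by positivity)]
      -- Step C: sums of F are bounded by the projections' cardinality
      have hsumF : ∀ i ∈ s', (∑' t : ℤ, F i t) ≤ G i := by
        intro i hi
        have hii₀ : i ≠ i₀ := (Finset.mem_erase.mp hi).1
        have hi₀mem : i₀ ∈ s.erase i := Finset.mem_erase.mpr ⟨hii₀.symm, hi₀⟩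
        rw [tsum_eq_sum (s := keys) (fun t ht => by simp [hF, hTtkeys t ht])]
        have hdisj : ∀ t ∈ keys, ∀ t' ∈ keys, t ≠ t' →
            Disjoint ((Tt t).image (pr (s.erase i))) ((Tt t').image (pr (s.erase i))) := by
          intro t _ t' _ htt'
          rw [Finset.disjoint_left]
          intro y hy hy'
          obtain ⟨x, hx, rfl⟩ := Finset.mem_image.mp hy
          obtain ⟨x', hx', hxx'⟩ := Finset.mem_image.mp hy'
          have h1 : pr (s.erase i) x i₀ = x i₀ := by simp [pr, hi₀mem]
          have h2 : pr (s.erase i) x' i₀ = x' i₀ := by simp [pr, hi₀mem]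
          apply htt'
          rw [← (Finset.mem_filter.mp hx).2, ← (Finset.mem_filter.mp hx').2,
            ← h1, ← h2, hxx']
        calc ∑ t ∈ keys, F i t
            = ((keys.biUnion fun t => (Tt t).image (pr (s.erase i))).card : ℝ≥0∞) := by
              rw [Finset.card_biUnion hdisj]
              push_cast
              rfl
          _ ≤ G i := by
              have : (keys.biUnion fun t => (Tt t).image (pr (s.erase i)))
                  ⊆ T.image (pr (s.erase i)) := by
                intro y hy
                obtain ⟨t, _, hyt⟩ := Finset.mem_biUnion.mp hy
                exact Finset.image_subset_image (Finset.filter_subset _ _) hyt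
              simp only [hG]
              exact_mod_cast Finset.card_le_card this
      -- Step D: combine
      have hmain : (T.card : ℝ≥0∞) ≤ ∏ i ∈ s, G i ^ (1/(n:ℝ)) := by
        have hcG : c = G i₀ := rfl
        rw [hins, Finset.prod_insert (Finset.notMem_erase i₀ s), ← hcG]
        calc (T.card : ℝ≥0∞) = ∑' t : ℤ, ((Tt t).card : ℝ≥0∞) := hsum
          _ ≤ ∑' t : ℤ, (c ^ (1/(n:ℝ)) * ∏ i ∈ s', F i t ^ (1/(n:ℝ))) :=
              ENNReal.tsum_le_tsum hper
          _ = c ^ (1/(n:ℝ)) * ∑' t : ℤ, ∏ i ∈ s', F i t ^ (1/(n:ℝ)) :=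
              ENNReal.tsum_mul_left
          _ ≤ c ^ (1/(n:ℝ)) * ∏ i ∈ s', (∑' t : ℤ, F i t) ^ (1/(n:ℝ)) := by
              refine mul_le_mul_right ?_ _
              have := hoelder_count s' (Finset.card_pos.mp (by omega)) F
              rwa [hs'] at this
          _ ≤ c ^ (1/(n:ℝ)) * ∏ i ∈ s', G i ^ (1/(n:ℝ)) := by
              refine mul_le_mul_right (Finset.prod_le_prod' fun i hi =>
                ENNReal.rpow_le_rpow (hsumF i hi) (by positivity)) _
      have hfinal : ((T.card : ℝ≥0∞)) ^ n ≤ ∏ i ∈ s, G i := by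
        calc ((T.card : ℝ≥0∞)) ^ n ≤ (∏ i ∈ s, G i ^ (1/(n:ℝ))) ^ n :=
            pow_le_pow_left' hmain n
          _ = ∏ i ∈ s, G i := by
              rw [← Finset.prod_pow]
              refine Finset.prod_congr rfl fun i _ => ?_
              rw [← ENNReal.rpow_natCast (G i ^ (1/(n:ℝ))) n, ← ENNReal.rpow_mul,
                one_div, inv_mul_cancel₀ hn0, ENNReal.rpow_one]
      simpa using hfinal
end LWAux

/-- If `A` is a finite subset of `ℤ^d` and `B` is the set of sites that
`A` separates from infinity (every infinite self-avoiding nearest-neighbour path starting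
in `B` meets `A`), then `|A| ≥ |B|^{1 - 1/d}`. -/
theorem stmt0 (d : ℕ) (hd : 2 ≤ d) (A : Finset (Pt d)) (B : Set (Pt d))
    (hB : B = {x : Pt d | ∀ p : ℕ → Pt d, p 0 = x → Function.Injective p →
      (∀ n, nnAdj (p n) (p (n+1))) → ∃ n, p n ∈ A}) :
    (B.ncard : ℝ) ^ (1 - 1/(d:ℝ)) ≤ (A.card : ℝ) := by
  classical
  have hdR : (2:ℝ) ≤ (d:ℝ) := by exact_mod_cast hd
  have hd0 : (0:ℝ) < 1 - 1/(d:ℝ) := by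
    rw [sub_pos, div_lt_one (by linarith)]
    linarith
  have hdne : (d:ℝ) ≠ 0 := by linarith
  -- trivial cases
  rcases B.finite_or_infinite with hBfin | hBinf
  swap
  · simp only [hBinf.ncard, Nat.cast_zero, Real.zero_rpow hd0.ne']
    positivity
  set Bf : Finset (Pt d) := hBfin.toFinset with hBf
  have hBcard : B.ncard = Bf.card := Set.ncard_eq_toFinset_card B hBfin
  rcases Bf.eq_empty_or_nonempty with hBe | hne
  · rw [hBcard, hBe]
    simp only [Finset.card_empty, Nat.cast_zero, Real.zero_rpow hd0.ne']
    positivity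
  -- projections of B are controlled by projections of A
  have key : ∀ i : Fin d, (Bf.image (pr (Finset.univ.erase i))).card ≤ A.card := by
    intro i
    have hsub : Bf.image (pr (Finset.univ.erase i)) ⊆ A.image (pr (Finset.univ.erase i)) := by
      intro y hy
      obtain ⟨x, hx, rfl⟩ := Finset.mem_image.mp hy
      have hxB : x ∈ B := (Set.Finite.mem_toFinset hBfin).mp hx
      rw [hB] at hxB
      set p : ℕ → Pt d := fun n => Function.update x i (x i + n) with hp
      have hp0 : p 0 = x := by
        simp [hp, Function.update_eq_self]
      have hinj : Function.Injective p := by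
        intro a b h
        have := congrFun h i
        simp only [hp, Function.update_self, add_right_inj] at this
        exact_mod_cast this
      have hadj : ∀ n, nnAdj (p n) (p (n+1)) := by
        intro n
        unfold nnAdj
        rw [Fintype.sum_eq_single i (fun j hj => by
          simp [hp, Function.update_of_ne hj])]
        have h1 : p n i - p (n+1) i = -1 := by
          simp only [hp, Function.update_self]
          push_cast
          ring
        rw [h1]
        rfl
      obtain ⟨n, hn⟩ := hxB p hp0 hinj hadj
      have heq : pr (Finset.univ.erase i) x = pr (Finset.univ.erase i) (p n) := by
        funext j
        by_cases hj : j = i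
        · subst hj
          simp [pr]
        · simp [pr, hj, hp, Function.update_of_ne hj]
      rw [heq]
      exact Finset.mem_image_of_mem _ hn
    exact (Finset.card_le_card hsub).trans (Finset.card_image_le)
  -- Loomis–Whitney
  have hLW := loomis_whitney d (Finset.univ : Finset (Fin d)) (by simp) Bf hne
    (by intro x hx j hj; exact absurd (Finset.mem_univ j) hj)
  have h2 : ∏ i : Fin d, ((Bf.image (pr (Finset.univ.erase i))).card : ENNReal)
      ≤ ((A.card : ENNReal)) ^ d := by
    calc ∏ i : Fin d, ((Bf.image (pr (Finset.univ.erase i))).card : ENNReal)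
        ≤ ∏ _i : Fin d, (A.card : ENNReal) :=
          Finset.prod_le_prod' fun i _ => by exact_mod_cast key i
      _ = ((A.card : ENNReal)) ^ d := by
          rw [Finset.prod_const, Finset.card_univ, Fintype.card_fin]
  have hnat : Bf.card ^ (d-1) ≤ A.card ^ d := by exact_mod_cast hLW.trans h2
  -- final real computation
  rw [hBcard]
  have hb0 : (0:ℝ) ≤ (Bf.card:ℝ) := Nat.cast_nonneg _
  have h1d : (1 : ℝ) - 1/(d:ℝ) = ((d-1 : ℕ) : ℝ) * (1/(d:ℝ)) := by
    have : ((d-1 : ℕ) : ℝ) = (d:ℝ) - 1 := by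
      push_cast [Nat.cast_sub (by omega : 1 ≤ d)]
      ring
    rw [this]
    field_simp
  rw [h1d, Real.rpow_mul hb0, Real.rpow_natCast]
  calc ((Bf.card:ℝ) ^ (d-1)) ^ (1/(d:ℝ))
      ≤ ((A.card:ℝ) ^ d) ^ (1/(d:ℝ)) := by
        refine Real.rpow_le_rpow (by positivity) ?_ (by positivity)
        exact_mod_cast hnat
    _ = (A.card : ℝ) := by
        rw [← Real.rpow_natCast (A.card:ℝ) d, ← Real.rpow_mul (Nat.cast_nonneg _),
          mul_one_div, div_self hdne, Real.rpow_one]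
end

section
/- Let C, D, E ⊆ B_n = {0,…,n-1}^d with C and D nonempty, connected (in the nearest-neighbour graph), disjoint, and suppose E properly separates C and D in B_n (every nearest-neighbour path in B_n from C to D meets E at a point outside C ∪ D). Then |E| ≥ (1/(2d)) · min{ |C|^{1-1/d}, |D|^{1-1/d} }. -/
open MeasureTheory ProbabilityTheory Filter

/-- `x` lies in the box `{0,…,n-1}^d`. -/
def inBox (d n : ℕ) (x : Pt d) : Prop := ∀ i, 0 ≤ x i ∧ x i < (n:ℤ)

section AuxiliaryLemmas
open Finset
open scoped ENNReal

lemma sum_prod_rpow_le {ι α : Type*} [Fintype α] (s : Finset ι) (f : ι → α → ℝ≥0∞)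
    {p : ι → ℝ} (hp : ∑ i ∈ s, p i = 1) (h2p : ∀ i ∈ s, 0 ≤ p i) :
    ∑ a, ∏ i ∈ s, f i a ^ p i ≤ ∏ i ∈ s, (∑ a, f i a) ^ p i := by
  letI : MeasurableSpace α := ⊤
  haveI : MeasurableSingletonClass α := ⟨fun _ => MeasurableSpace.measurableSet_top⟩
  have hmeas : ∀ (g : α → ℝ≥0∞), AEMeasurable g (Measure.count) := fun g =>
    Measurable.aemeasurable (fun _ _ => MeasurableSpace.measurableSet_top)
  have h := ENNReal.lintegral_prod_norm_pow_le (μ := Measure.count) s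
    (fun i _ => hmeas (f i)) hp h2p
  simpa [MeasureTheory.lintegral_count, tsum_fintype] using h

/-- zero out coordinate `i`. -/
def proj (d : ℕ) (i : Fin d) (x : Pt d) : Pt d := Function.update x i 0

lemma proj_inj_aux {d : ℕ} (i : Fin d) {x y : Pt d} (h : proj d i x = proj d i y)
    (h2 : x i = y i) : x = y := by
  funext j
  by_cases hj : j = i
  · subst hj; exact h2
  · have := congrFun h j
    simpa [proj, Function.update_of_ne hj] using this

lemma card_image_proj_const {d : ℕ} (i : Fin d) (s : Finset (Pt d)) (t : ℤ)
    (h : ∀ x ∈ s, x i = t) : (s.image (proj d i)).card = s.card := by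
  apply Finset.card_image_of_injOn
  intro x hx y hy hxy
  exact proj_inj_aux i hxy (by rw [h x hx, h y hy])

lemma LW_aux {d : ℕ} (s : Finset (Fin d)) :
    ∀ (A : Finset (Pt d)), A.Nonempty → (∀ x ∈ A, ∀ i, i ∉ s → x i = 0) →
    (A.card : ℝ≥0∞) ^ ((s.card : ℝ) - 1) ≤ ∏ i ∈ s, ((A.image (proj d i)).card : ℝ≥0∞) := by
  classical
  induction s using Finset.induction with
  | empty =>
    intro A hAne hsupp
    have hcard : A.card = 1 := by
      obtain ⟨a, ha⟩ := hAne
      refine Finset.card_eq_one.2 ⟨a, ?_⟩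
      ext x
      simp only [Finset.mem_singleton]
      constructor
      · intro hx
        funext j
        rw [hsupp x hx j (by simp), hsupp a ha j (by simp)]
      · rintro rfl; exact ha
    simp [hcard]
  | @insert i₀ s' hi₀ IH =>
    intro A hAne hsupp
    set k := s'.card with hk
    by_cases hk0 : k = 0
    · have hs' : s' = ∅ := Finset.card_eq_zero.1 hk0
      subst hs'
      have h1 : (((insert i₀ (∅:Finset (Fin d))).card : ℝ)) - 1 = 0 := by simp
      rw [h1, ENNReal.rpow_zero]
      have hne : (A.image (proj d i₀)).Nonempty := hAne.image _
      rw [Finset.prod_insert (Finset.notMem_empty _), Finset.prod_empty, mul_one]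
      exact_mod_cast Nat.one_le_cast.2 (Finset.card_pos.2 hne)
    · have hkpos : 0 < k := Nat.pos_of_ne_zero hk0
      have hkR : (0:ℝ) < (k:ℝ) := by exact_mod_cast hkpos
      set q : ℝ := 1/(k:ℝ) with hqdef
      have hq0 : (0:ℝ) ≤ q := by positivity
      set V : Finset ℤ := A.image (fun x => x i₀) with hV
      set At : ℤ → Finset (Pt d) := fun t => A.filter (fun x => x i₀ = t) with hAtdef
      set Bt : ℤ → Finset (Pt d) := fun t => (At t).image (proj d i₀) with hBtdef
      set Q : Fin d → ℤ → ℕ := fun i t => ((At t).image (proj d i)).card with hQdef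
      set P : Fin d → ℕ := fun i => (A.image (proj d i)).card with hPdef
      have hAtsub : ∀ t, At t ⊆ A := fun t => Finset.filter_subset _ _
      have hAtcoord : ∀ t, ∀ x ∈ At t, x i₀ = t := fun t x hx => (Finset.mem_filter.1 hx).2
      have f1 : ∀ t, (Bt t).card = (At t).card := fun t =>
        card_image_proj_const i₀ (At t) t (hAtcoord t)
      have f2 : ∀ t ∈ V, (Bt t).Nonempty := by
        intro t ht
        obtain ⟨x, hx, hxt⟩ := Finset.mem_image.1 ht
        exact ⟨proj d i₀ x, Finset.mem_image_of_mem _ (Finset.mem_filter.2 ⟨hx, hxt⟩)⟩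
      have f3 : ∀ t, ∀ x ∈ Bt t, ∀ i, i ∉ s' → x i = 0 := by
        intro t x hx i hi
        obtain ⟨a, ha, rfl⟩ := Finset.mem_image.1 hx
        by_cases hii : i = i₀
        · subst hii; simp [proj]
        · rw [proj, Function.update_of_ne hii]
          exact hsupp a (hAtsub t ha) i (by simp [hii, hi])
      have f4 : ∀ t ∈ V, ((Bt t).card : ℝ≥0∞) ^ ((k:ℝ) - 1)
          ≤ ∏ i ∈ s', (((Bt t).image (proj d i)).card : ℝ≥0∞) :=
        fun t ht => IH (Bt t) (f2 t ht) (f3 t)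
      have f5 : ∀ t, (Bt t).card ≤ P i₀ :=
        fun t => Finset.card_le_card (Finset.image_subset_image (hAtsub t))
      have f6 : ∀ t, ∀ i ∈ s', ((Bt t).image (proj d i)).card = Q i t := by
        intro t i hi
        have hii : i ≠ i₀ := fun h => hi₀ (h ▸ hi)
        have hcomm : (proj d i) ∘ (proj d i₀) = (proj d i₀) ∘ (proj d i) := by
          funext x
          simp only [Function.comp_apply, proj]
          exact Function.update_comm hii.symm 0 0 x
        rw [hBtdef]
        simp only
        rw [Finset.image_image, hcomm, ← Finset.image_image]
        exact card_image_proj_const i₀ _ t (fun y hy => by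
          obtain ⟨a, ha, rfl⟩ := Finset.mem_image.1 hy
          rw [proj, Function.update_of_ne (Ne.symm hii)]
          exact hAtcoord t a ha)
      have f7 : ∀ i ∈ s', ∑ t ∈ V, (Q i t : ℝ≥0∞) ≤ (P i : ℝ≥0∞) := by
        intro i hi
        have hii : i ≠ i₀ := fun h => hi₀ (h ▸ hi)
        have hcoord : ∀ t, ∀ y ∈ (At t).image (proj d i), y i₀ = t := by
          intro t y hy
          obtain ⟨a, ha, rfl⟩ := Finset.mem_image.1 hy
          rw [proj, Function.update_of_ne (Ne.symm hii)]
          exact hAtcoord t a ha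
        have hdisj : ∀ a ∈ V, ∀ b ∈ V, a ≠ b →
            Disjoint ((At a).image (proj d i)) ((At b).image (proj d i)) := by
          intro a _ b _ hab
          refine Finset.disjoint_left.2 fun y hya hyb => hab ?_
          rw [← hcoord a y hya, ← hcoord b y hyb]
        have hnat : ∑ t ∈ V, Q i t ≤ P i := by
          rw [hQdef, hPdef]
          simp only
          rw [← Finset.card_biUnion hdisj]
          exact Finset.card_le_card (Finset.biUnion_subset.2
            (fun t _ => Finset.image_subset_image (hAtsub t)))
        calc ∑ t ∈ V, (Q i t : ℝ≥0∞) = ((∑ t ∈ V, Q i t : ℕ) : ℝ≥0∞) := by push_cast; rfl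
          _ ≤ (P i : ℝ≥0∞) := by exact_mod_cast hnat
      have f8 : A.card = ∑ t ∈ V, (At t).card :=
        Finset.card_eq_sum_card_fiberwise (fun x hx => Finset.mem_image_of_mem _ hx)
      -- step 1 : pointwise bound
      have step1 : ∀ t ∈ V, ((At t).card : ℝ≥0∞)
          ≤ ((P i₀ : ℝ≥0∞) * ∏ i ∈ s', (Q i t : ℝ≥0∞)) ^ q := by
        intro t ht
        set x : ℝ≥0∞ := ((Bt t).card : ℝ≥0∞) with hxdef
        have hx0 : x ≠ 0 := by
          rw [hxdef]
          exact_mod_cast (Finset.card_pos.2 (f2 t ht)).ne'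
        have hxtop : x ≠ ⊤ := ENNReal.natCast_ne_top _
        have hxk : x ^ (k:ℝ) ≤ (P i₀ : ℝ≥0∞) * ∏ i ∈ s', (Q i t : ℝ≥0∞) := by
          have hsplit : x ^ (k:ℝ) = x ^ ((k:ℝ)-1) * x := by
            have : (k:ℝ) = ((k:ℝ)-1) + 1 := by ring
            conv_lhs => rw [this]
            rw [ENNReal.rpow_add _ _ hx0 hxtop, ENNReal.rpow_one]
          rw [hsplit]
          calc x ^ ((k:ℝ)-1) * x
              ≤ (∏ i ∈ s', (((Bt t).image (proj d i)).card : ℝ≥0∞)) * (P i₀ : ℝ≥0∞) := by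
                gcongr
                · exact f4 t ht
                · rw [hxdef]; exact_mod_cast f5 t
            _ = (P i₀ : ℝ≥0∞) * ∏ i ∈ s', (Q i t : ℝ≥0∞) := by
                rw [mul_comm]
                congr 1
                exact Finset.prod_congr rfl fun i hi => by rw [f6 t i hi]
        calc ((At t).card : ℝ≥0∞) = x := by rw [hxdef, f1 t]
          _ = (x ^ (k:ℝ)) ^ q := by
              rw [← ENNReal.rpow_mul, hqdef, mul_one_div_cancel hkR.ne', ENNReal.rpow_one]
          _ ≤ _ := ENNReal.rpow_le_rpow hxk hq0
      -- Hölder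
      have holder : ∑ t ∈ V, ∏ i ∈ s', ((Q i t : ℝ≥0∞)) ^ q
          ≤ ∏ i ∈ s', (∑ t ∈ V, (Q i t : ℝ≥0∞)) ^ q := by
        have hpsum : ∑ _i ∈ s', q = 1 := by
          rw [Finset.sum_const, ← hk, nsmul_eq_mul, hqdef, mul_one_div_cancel hkR.ne']
        have h := sum_prod_rpow_le (α := {t // t ∈ V}) s'
          (fun i a => (Q i (a:ℤ) : ℝ≥0∞)) (p := fun _ => q) hpsum (fun _ _ => hq0)
        have e1 : ∑ a : {t // t ∈ V}, ∏ i ∈ s', ((Q i (a:ℤ) : ℝ≥0∞)) ^ q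
            = ∑ t ∈ V, ∏ i ∈ s', ((Q i t : ℝ≥0∞)) ^ q :=
          Finset.sum_coe_sort V (fun t => ∏ i ∈ s', ((Q i t : ℝ≥0∞)) ^ q)
        have e2 : ∀ i, (∑ a : {t // t ∈ V}, (Q i (a:ℤ) : ℝ≥0∞))
            = ∑ t ∈ V, (Q i t : ℝ≥0∞) := fun i => Finset.sum_coe_sort V (fun t => (Q i t : ℝ≥0∞))
        rw [e1] at h
        simp only [e2] at h
        exact h
      -- main calc
      have main : (A.card : ℝ≥0∞) ≤ (∏ i ∈ insert i₀ s', (P i : ℝ≥0∞)) ^ q := by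
        calc (A.card : ℝ≥0∞) = ∑ t ∈ V, ((At t).card : ℝ≥0∞) := by
              rw [f8]; push_cast; rfl
          _ ≤ ∑ t ∈ V, ((P i₀ : ℝ≥0∞) * ∏ i ∈ s', (Q i t : ℝ≥0∞)) ^ q :=
              Finset.sum_le_sum step1
          _ = (P i₀ : ℝ≥0∞)^q * ∑ t ∈ V, ∏ i ∈ s', ((Q i t : ℝ≥0∞)) ^ q := by
              rw [Finset.mul_sum]
              refine Finset.sum_congr rfl fun t ht => ?_
              rw [ENNReal.mul_rpow_of_nonneg _ _ hq0, ← ENNReal.prod_rpow_of_nonneg hq0]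
          _ ≤ (P i₀ : ℝ≥0∞)^q * ∏ i ∈ s', (∑ t ∈ V, (Q i t : ℝ≥0∞)) ^ q := by
              gcongr
          _ ≤ (P i₀ : ℝ≥0∞)^q * ∏ i ∈ s', (P i : ℝ≥0∞) ^ q := by
              exact mul_le_mul' le_rfl (Finset.prod_le_prod' fun i hi =>
                ENNReal.rpow_le_rpow (f7 i hi) hq0)
          _ = (∏ i ∈ insert i₀ s', (P i : ℝ≥0∞)) ^ q := by
              rw [Finset.prod_insert hi₀, ENNReal.mul_rpow_of_nonneg _ _ hq0,
                ← ENNReal.prod_rpow_of_nonneg hq0]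
      have hfin : (A.card : ℝ≥0∞) ^ (k:ℝ) ≤ ∏ i ∈ insert i₀ s', (P i : ℝ≥0∞) := by
        calc (A.card : ℝ≥0∞) ^ (k:ℝ)
            ≤ ((∏ i ∈ insert i₀ s', (P i : ℝ≥0∞)) ^ q) ^ (k:ℝ) :=
              ENNReal.rpow_le_rpow main (le_of_lt hkR)
          _ = ∏ i ∈ insert i₀ s', (P i : ℝ≥0∞) := by
              rw [← ENNReal.rpow_mul, hqdef, one_div_mul_cancel hkR.ne', ENNReal.rpow_one]
      have hce : ((insert i₀ s').card : ℝ) - 1 = (k:ℝ) := by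
        rw [Finset.card_insert_of_notMem hi₀]
        push_cast
        ring
      rw [hce]
      exact hfin

lemma LW {d : ℕ} (hd : 1 ≤ d) (A : Finset (Pt d)) (hne : A.Nonempty) :
    A.card ^ (d - 1) ≤ ∏ i : Fin d, (A.image (proj d i)).card := by
  have h := LW_aux (Finset.univ : Finset (Fin d)) A hne (fun x _ i hi => absurd (Finset.mem_univ i) hi)
  rw [Finset.card_univ, Fintype.card_fin] at h
  have hde : ((d:ℝ)) - 1 = ((d - 1 : ℕ) : ℝ) := by
    have : (1:ℕ) ≤ d := hd
    push_cast [this]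
    ring
  rw [hde, ENNReal.rpow_natCast] at h
  have h2 : ((A.card ^ (d-1) : ℕ) : ℝ≥0∞) ≤ ((∏ i : Fin d, (A.image (proj d i)).card : ℕ) : ℝ≥0∞) := by
    push_cast
    exact h
  exact_mod_cast h2

lemma mem_boxF {d n : ℕ} {x : Pt d} : x ∈ boxF d n ↔ ∀ j, 0 ≤ x j ∧ x j < (n:ℤ) := by
  simp [boxF, Fintype.mem_piFinset, Finset.mem_Ico]


lemma exists_boundary_pair (P : ℤ → Prop) : ∀ (m : ℕ) (a : ℤ), P a → ¬ P (a + m) →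
    ∃ u, a ≤ u ∧ u < a + m ∧ P u ∧ ¬ P (u+1) := by
  classical
  intro m
  induction m with
  | zero => intro a ha hb; simp at hb; exact absurd ha hb
  | succ m IH =>
    intro a ha hb
    by_cases hm : P (a + m)
    · refine ⟨a + m, by omega, by push_cast; omega, hm, ?_⟩
      have : a + (m:ℤ) + 1 = a + ((m:ℕ)+1 : ℕ) := by push_cast; ring
      rw [this]; exact hb
    · obtain ⟨u, h1, h2, h3, h4⟩ := IH a ha hm
      exact ⟨u, h1, by push_cast at h2 ⊢; omega, h3, h4⟩

lemma exists_step (P : ℤ → Prop) {a b lo hi : ℤ} (ha : P a) (hb : ¬ P b)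
    (halo : lo ≤ a) (hahi : a < hi) (hblo : lo ≤ b) (hbhi : b < hi) :
    ∃ u v, P u ∧ ¬ P v ∧ (u - v).natAbs = 1 ∧ lo ≤ u ∧ u < hi ∧ lo ≤ v ∧ v < hi := by
  rcases le_or_gt a b with hab | hab
  · have hm : b = a + ((b - a).toNat : ℤ) := by omega
    obtain ⟨u, h1, h2, h3, h4⟩ := exists_boundary_pair P (b - a).toNat a ha (hm ▸ hb)
    exact ⟨u, u+1, h3, h4, by omega, by omega, by omega, by omega, by omega⟩
  · have ha' : P (a + b - b) := by simpa using ha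
    have hb' : ¬ (fun t => P (a + b - t)) (b + ((a - b).toNat : ℤ)) := by
      have : b + ((a-b).toNat : ℤ) = a := by omega
      rw [this]; simpa using hb
    obtain ⟨u, h1, h2, h3, h4⟩ := exists_boundary_pair (fun t => P (a + b - t))
      (a - b).toNat b ha' hb'
    refine ⟨a + b - u, a + b - u - 1, h3, ?_, by omega, by omega, by omega, by omega, by omega⟩
    have : a + b - u - 1 = a + b - (u + 1) := by ring
    rw [this]; exact h4


lemma max_proj {d : ℕ} (hd : 1 ≤ d) (A : Finset (Pt d)) (hne : A.Nonempty) :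
    ∃ i : Fin d, (A.card : ℝ) ^ (1 - 1/(d:ℝ)) ≤ ((A.image (proj d i)).card : ℝ) := by
  have hdR : (0:ℝ) < (d:ℝ) := by exact_mod_cast Nat.pos_of_ne_zero (by omega)
  obtain ⟨i, -, hi⟩ := Finset.exists_max_image (Finset.univ : Finset (Fin d))
    (fun i => (A.image (proj d i)).card) ⟨⟨0, by omega⟩, Finset.mem_univ _⟩
  refine ⟨i, ?_⟩
  set M := (A.image (proj d i)).card with hM
  have hprod : A.card ^ (d - 1) ≤ M ^ d := by
    calc A.card ^ (d-1) ≤ ∏ j : Fin d, (A.image (proj d j)).card := LW hd A hne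
      _ ≤ M ^ (Finset.univ : Finset (Fin d)).card :=
          Finset.prod_le_pow_card _ _ _ (fun j _ => hi j (Finset.mem_univ j))
      _ = M ^ d := by rw [Finset.card_univ, Fintype.card_fin]
  have hprodR : ((A.card : ℝ)) ^ ((d - 1 : ℕ):ℝ) ≤ ((M:ℝ)) ^ ((d:ℕ):ℝ) := by
    rw [Real.rpow_natCast, Real.rpow_natCast]
    exact_mod_cast hprod
  have he : (1 - 1/(d:ℝ)) = ((d - 1 : ℕ):ℝ) * (1/(d:ℝ)) := by
    have h1 : ((d - 1 : ℕ):ℝ) = (d:ℝ) - 1 := by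
      have : (1:ℕ) ≤ d := hd
      push_cast [this]; ring
    rw [h1]; field_simp
  rw [he, Real.rpow_mul (by positivity)]
  calc ((A.card : ℝ) ^ ((d - 1 : ℕ):ℝ)) ^ (1/(d:ℝ))
      ≤ ((M:ℝ) ^ ((d:ℕ):ℝ)) ^ (1/(d:ℝ)) := by
        apply Real.rpow_le_rpow (by positivity) hprodR (by positivity)
    _ = (M:ℝ) := by
        rw [← Real.rpow_mul (by positivity)]
        push_cast
        rw [mul_one_div_cancel hdR.ne', Real.rpow_one]

lemma bernoulli_bound {d : ℕ} (hd : 2 ≤ d) :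
    ((1:ℝ)/2) ^ (1/(d:ℝ)) ≤ 1 - 1/(2*(d:ℝ)) := by
  have hdR : (0:ℝ) < (d:ℝ) := by exact_mod_cast Nat.pos_of_ne_zero (by omega)
  set c : ℝ := 1 - 1/(2*(d:ℝ)) with hc
  have hc0 : 0 < c := by
    have h4 : (4:ℝ) ≤ 2*(d:ℝ) := by
      have : (2:ℝ) ≤ (d:ℝ) := by exact_mod_cast hd
      linarith
    have : 1/(2*(d:ℝ)) ≤ 1/4 := by
      apply div_le_div_of_nonneg_left (by norm_num) (by norm_num) h4
    rw [hc]; linarith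
  have hbern : (1:ℝ)/2 ≤ c ^ d := by
    have hlt : 1/(2*(d:ℝ)) < 1 := by rw [hc] at hc0; linarith
    have h := one_add_mul_le_pow (a := -(1/(2*(d:ℝ)))) (by linarith) d
    have he : 1 + (d:ℝ) * (-(1/(2*(d:ℝ)))) = 1/2 := by field_simp; ring
    rw [he] at h
    rw [hc, sub_eq_add_neg]; exact h
  calc ((1:ℝ)/2) ^ (1/(d:ℝ)) ≤ (c ^ d) ^ (1/(d:ℝ)) := by
        apply Real.rpow_le_rpow (by norm_num) hbern (by positivity)
    _ = c := by
        rw [← Real.rpow_natCast c d, ← Real.rpow_mul hc0.le,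
          mul_one_div_cancel hdR.ne', Real.rpow_one]

lemma isoCore (d n : ℕ) (hd : 2 ≤ d) (hn : 1 ≤ n) (A W : Finset (Pt d))
    (hA : A ⊆ boxF d n) (hA2 : 2 * A.card ≤ n ^ d)
    (hW : ∀ x y, x ∈ A → y ∈ boxF d n → y ∉ A → nnAdj x y → x ∈ W ∨ y ∈ W) :
    (1/(2*(d:ℝ))) * (A.card : ℝ) ^ (1 - 1/(d:ℝ)) ≤ (W.card : ℝ) := by
  have hdR : (0:ℝ) < (d:ℝ) := by exact_mod_cast (by omega : 0 < d)
  have hnR : (0:ℝ) < (n:ℝ) := by exact_mod_cast hn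
  have hexp : (0:ℝ) < 1 - 1/(d:ℝ) := by
    have h2 : (2:ℝ) ≤ (d:ℝ) := by exact_mod_cast hd
    have h3 : 1/(d:ℝ) ≤ 1/2 := by
      apply div_le_div_of_nonneg_left (by norm_num) (by norm_num) h2
    linarith
  rcases A.eq_empty_or_nonempty with rfl | hne
  · rw [Finset.card_empty]
    push_cast
    rw [Real.zero_rpow hexp.ne', mul_zero]
    positivity
  obtain ⟨i, hproj⟩ := max_proj (by omega) A hne
  set Pn := A.image (proj d i) with hPn
  set F := Pn.filter (fun z => ∀ t ∈ Finset.Ico (0:ℤ) (n:ℤ), Function.update z i t ∈ A)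
    with hFdef
  have hz0 : ∀ z ∈ Pn, z i = 0 := by
    intro z hz
    obtain ⟨x, _, rfl⟩ := Finset.mem_image.1 hz
    simp [proj]
  have hFsub : F ⊆ Pn := Finset.filter_subset _ _
  -- full lines
  have hfull : F.card * n ≤ A.card := by
    have hmaps : ∀ p ∈ F ×ˢ Finset.Ico (0:ℤ) (n:ℤ),
        (fun p : Pt d × ℤ => Function.update p.1 i p.2) p ∈ A := by
      intro p hp
      rw [Finset.mem_product] at hp
      exact (Finset.mem_filter.1 hp.1).2 p.2 hp.2
    have hinj : Set.InjOn (fun p : Pt d × ℤ => Function.update p.1 i p.2)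
        ↑(F ×ˢ Finset.Ico (0:ℤ) (n:ℤ)) := by
      intro p hp q hq hpq
      rw [Finset.mem_coe, Finset.mem_product] at hp hq
      have e1 : p.2 = q.2 := by
        have := congrFun hpq i
        simpa using this
      have e2 : p.1 = q.1 := by
        funext j
        by_cases hj : j = i
        · subst hj
          rw [hz0 p.1 (hFsub hp.1), hz0 q.1 (hFsub hq.1)]
        · have := congrFun hpq j
          simpa [Function.update_of_ne hj] using this
      exact Prod.ext e2 e1
    have h := Finset.card_le_card_of_injOn _ hmaps hinj
    rw [Finset.card_product] at h
    simpa using h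
  -- boundary witness
  have key : ∀ z ∈ Pn \ F, ∃ w, w ∈ W ∧ proj d i w = z := by
    intro z hz
    obtain ⟨hzP, hzF⟩ := Finset.mem_sdiff.1 hz
    obtain ⟨x₀, hx₀A, hx₀⟩ := Finset.mem_image.1 hzP
    have hx₀box := mem_boxF.1 (hA hx₀A)
    have hPt₀ : Function.update z i (x₀ i) ∈ A := by
      have hzi : Function.update z i (x₀ i) = x₀ := by
        rw [← hx₀]
        simp [proj, Function.update_idem]
      rw [hzi]; exact hx₀A
    have hs₀ : ∃ s₀ ∈ Finset.Ico (0:ℤ) (n:ℤ), Function.update z i s₀ ∉ A := by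
      by_contra h
      push_neg at h
      exact hzF (Finset.mem_filter.2 ⟨hzP, h⟩)
    obtain ⟨s₀, hs₀m, hs₀A⟩ := hs₀
    rw [Finset.mem_Ico] at hs₀m
    obtain ⟨u, v, hu, hv, habs, hul, huh, hvl, hvh⟩ :=
      exists_step (fun t => Function.update z i t ∈ A) hPt₀ hs₀A
        (hx₀box i).1 (hx₀box i).2 hs₀m.1 hs₀m.2
    set x := Function.update z i u with hxd
    set y := Function.update z i v with hyd
    have hzcoord : ∀ j, j ≠ i → z j = x₀ j := by
      intro j hj
      rw [← hx₀]
      simp [proj, Function.update_of_ne hj]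
    have hybox : y ∈ boxF d n := by
      rw [mem_boxF]
      intro j
      by_cases hj : j = i
      · subst hj
        rw [hyd]
        simpa using ⟨hvl, hvh⟩
      · rw [hyd, Function.update_of_ne hj, hzcoord j hj]
        exact hx₀box j
    have hadj : nnAdj x y := by
      unfold nnAdj
      rw [Finset.sum_eq_single_of_mem i (Finset.mem_univ i)]
      · rw [hxd, hyd]
        simpa using habs
      · intro j _ hj
        rw [hxd, hyd]
        simp [Function.update_of_ne hj]
    have hprojx : proj d i x = z := by
      rw [hxd, proj]
      rw [Function.update_idem]
      conv_rhs => rw [← Function.update_eq_self i z]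
      rw [hz0 z hzP]
    have hprojy : proj d i y = z := by
      rw [hyd, proj]
      rw [Function.update_idem]
      conv_rhs => rw [← Function.update_eq_self i z]
      rw [hz0 z hzP]
    rcases hW x y hu hybox hv hadj with hw | hw
    · exact ⟨x, hw, hprojx⟩
    · exact ⟨y, hw, hprojy⟩
  have hPF : (Pn \ F).card ≤ W.card := by
    set f : Pt d → Pt d :=
      fun z => if h : z ∈ Pn \ F then (key z h).choose else z with hf
    have hfw : ∀ z ∈ Pn \ F, f z ∈ W ∧ proj d i (f z) = z := by
      intro z hz
      rw [hf]
      simp only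
      rw [dif_pos hz]
      exact (key z hz).choose_spec
    apply Finset.card_le_card_of_injOn f (fun z hz => (hfw z hz).1)
    intro z1 h1 z2 h2 heq
    have e1 := (hfw z1 h1).2
    have e2 := (hfw z2 h2).2
    rw [← e1, ← e2, heq]
  -- numerics
  have hcard_sdiff : ((Pn \ F).card : ℝ) = (Pn.card : ℝ) - (F.card : ℝ) := by
    rw [Finset.card_sdiff_of_subset hFsub]
    exact_mod_cast Nat.cast_sub (Finset.card_le_card hFsub)
  set a : ℝ := (A.card : ℝ) with ha
  have ha0 : (0:ℝ) < a := by
    rw [ha]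
    exact_mod_cast Finset.card_pos.2 hne
  set X : ℝ := a ^ (1 - 1/(d:ℝ)) with hX
  have hWge : X - (F.card:ℝ) ≤ (W.card:ℝ) := by
    have h1 : (Pn.card:ℝ) - (F.card:ℝ) ≤ (W.card:ℝ) := by
      rw [← hcard_sdiff]
      exact_mod_cast hPF
    have h2 : X ≤ (Pn.card:ℝ) := hproj
    linarith
  have hFle : (F.card : ℝ) ≤ a / n := by
    rw [le_div_iff₀ hnR]
    have : ((F.card * n : ℕ) : ℝ) ≤ a := by
      rw [ha]; exact_mod_cast hfull
    push_cast at this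
    linarith
  have hkey : a / n ≤ (1 - 1/(2*(d:ℝ))) * X := by
    have hsplit : a = X * a ^ (1/(d:ℝ)) := by
      rw [hX, ← Real.rpow_add ha0]
      norm_num
    have hroot : a ^ (1/(d:ℝ)) ≤ (n:ℝ) * (1 - 1/(2*(d:ℝ))) := by
      have h1 : a ≤ (n:ℝ)^(d:ℕ) / 2 := by
        have h2 : 2 * a ≤ ((n^d : ℕ):ℝ) := by
          rw [ha]; exact_mod_cast hA2
        push_cast at h2
        linarith
      have h2 : a ^ (1/(d:ℝ)) ≤ ((n:ℝ)^(d:ℕ) / 2) ^ (1/(d:ℝ)) :=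
        Real.rpow_le_rpow ha0.le h1 (by positivity)
      have h3 : ((n:ℝ)^(d:ℕ) / 2) ^ (1/(d:ℝ)) = (n:ℝ) * ((1:ℝ)/2)^(1/(d:ℝ)) := by
        rw [Real.div_rpow (by positivity) (by norm_num)]
        rw [← Real.rpow_natCast (n:ℝ) d, ← Real.rpow_mul hnR.le,
          mul_one_div_cancel hdR.ne', Real.rpow_one]
        rw [Real.div_rpow (by norm_num) (by norm_num), Real.one_rpow, mul_one_div]
      have h4 := bernoulli_bound hd
      calc a ^ (1/(d:ℝ)) ≤ (n:ℝ) * ((1:ℝ)/2)^(1/(d:ℝ)) := by rw [← h3]; exact h2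
        _ ≤ (n:ℝ) * (1 - 1/(2*(d:ℝ))) := by
            apply mul_le_mul_of_nonneg_left h4 hnR.le
    have hX0 : (0:ℝ) ≤ X := by rw [hX]; exact Real.rpow_nonneg ha0.le _
    calc a / n = X * a^(1/(d:ℝ)) / n := by rw [← hsplit]
      _ ≤ X * ((n:ℝ) * (1 - 1/(2*(d:ℝ)))) / n := by
          exact div_le_div_of_nonneg_right (mul_le_mul_of_nonneg_left hroot hX0) hnR.le
      _ = (1 - 1/(2*(d:ℝ))) * X := by field_simp
  have hring : (1/(2*(d:ℝ))) * X = X - (1 - 1/(2*(d:ℝ))) * X := by ring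
  linarith

lemma card_boxF (d n : ℕ) : (boxF d n).card = n ^ d := by
  rw [boxF, Fintype.card_piFinset]
  simp [Int.card_Ico]

lemma nnAdj_symm {d : ℕ} {x y : Pt d} (h : nnAdj x y) : nnAdj y x := by
  unfold nnAdj at *
  rw [← h]
  exact Finset.sum_congr rfl fun j _ => by omega

lemma chain_to_path {d : ℕ} (good : Pt d → Prop) {c x : Pt d}
    (h : Relation.ReflTransGen (fun a b => nnAdj a b ∧ good a ∧ good b) c x) (hc : good c) :
    ∃ (k : ℕ) (p : ℕ → Pt d), p 0 = c ∧ p k = x ∧ (∀ j < k, nnAdj (p j) (p (j+1))) ∧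
      (∀ j ≤ k, good (p j)) := by
  induction h with
  | refl => exact ⟨0, fun _ => c, rfl, rfl, by omega, fun j _ => hc⟩
  | @tail b x' hab hbx IH =>
    obtain ⟨k, p, h0, hk, hadj, hgood⟩ := IH
    refine ⟨k+1, fun j => if j ≤ k then p j else x', ?_, ?_, ?_, ?_⟩
    · simp [h0]
    · simp
    · intro j hj
      by_cases hjk : j < k
      · have h1 : j ≤ k := le_of_lt hjk
        have h2 : j + 1 ≤ k := hjk
        simp only [if_pos h1, if_pos h2]
        exact hadj j hjk
      · have hjeq : j = k := by omega
        subst hjeq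
        simp only [le_refl, if_pos, if_neg (by omega : ¬ (j + 1 ≤ j))]
        rw [hk]
        exact hbx.1
    · intro j hj
      by_cases hjk : j ≤ k
      · simp only [if_pos hjk]; exact hgood j hjk
      · simp only [if_neg hjk]; exact hbx.2.2


end AuxiliaryLemmas

/-- If `C, D, E ⊆ B_n`, with `C` and `D` nonempty, connected and
disjoint, and `E` properly separates `C` and `D` in `B_n` (every nearest-neighbour path
in the box from `C` to `D` meets `E` at a point outside `C ∪ D`), then
`|E| ≥ (1/(2d)) · min(|C|^{1-1/d}, |D|^{1-1/d})`. -/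
theorem stmt3 (d n : ℕ) (hd : 2 ≤ d) (C D E : Set (Pt d))
    (hCbox : C ⊆ {x | inBox d n x}) (hDbox : D ⊆ {x | inBox d n x})
    (hEbox : E ⊆ {x | inBox d n x})
    (hCne : C.Nonempty) (hDne : D.Nonempty)
    (hCconn : connSet C) (hDconn : connSet D)
    (hCD : Disjoint C D)
    (hsep : ∀ (k : ℕ) (p : ℕ → Pt d), p 0 ∈ C → p k ∈ D →
      (∀ j < k, nnAdj (p j) (p (j+1))) → (∀ j ≤ k, inBox d n (p j)) →
      ∃ j ≤ k, p j ∈ E ∧ p j ∉ C ∪ D) :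
    (1/(2*(d:ℝ))) * min ((C.ncard : ℝ) ^ (1 - 1/(d:ℝ))) ((D.ncard : ℝ) ^ (1 - 1/(d:ℝ)))
      ≤ (E.ncard : ℝ) := by
  classical
  have hn : 1 ≤ n := by
    obtain ⟨c, hc⟩ := hCne
    have h := (hCbox hc) ⟨0, by omega⟩
    omega
  set good : Pt d → Prop := fun x => inBox d n x ∧ ¬ (x ∈ E ∧ x ∉ C ∪ D) with hgooddef
  set stepR : Pt d → Pt d → Prop := fun a b => nnAdj a b ∧ good a ∧ good b with hstepdef
  set Aset : Set (Pt d) := {x | ∃ c ∈ C, Relation.ReflTransGen stepR c x} with hAsetdef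
  have hgoodC : ∀ c ∈ C, good c := fun c hc => ⟨hCbox hc, fun h => h.2 (Or.inl hc)⟩
  have hAgood : ∀ x ∈ Aset, good x := by
    rintro x ⟨c, hc, h⟩
    induction h with
    | refl => exact hgoodC c hc
    | tail _ hstep _ => exact hstep.2.2
  have hDA : ∀ x ∈ D, x ∉ Aset := by
    rintro x hx ⟨c, hc, h⟩
    obtain ⟨k, p, h0, hk, hadj, hgood⟩ := chain_to_path good h (hgoodC c hc)
    obtain ⟨j, hj, hjE, hjCD⟩ := hsep k p (h0 ▸ hc) (hk ▸ hx) hadj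
      (fun j hj => (hgood j hj).1)
    exact (hgood j hj).2 ⟨hjE, hjCD⟩
  set Abox : Finset (Pt d) := (boxF d n).filter (· ∈ Aset) with hAboxdef
  set S : Finset (Pt d) := (boxF d n) \ Abox with hSdef
  set Bd : Finset (Pt d) := S.filter (fun y => ∃ x ∈ Abox, nnAdj x y) with hBddef
  have hCA : C ⊆ ↑Abox := by
    intro c hc
    rw [Finset.mem_coe, hAboxdef, Finset.mem_filter]
    exact ⟨mem_boxF.2 (hCbox hc), ⟨c, hc, Relation.ReflTransGen.refl⟩⟩
  have hDS : D ⊆ ↑S := by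
    intro x hx
    rw [Finset.mem_coe, hSdef, Finset.mem_sdiff]
    refine ⟨mem_boxF.2 (hDbox hx), fun hmem => ?_⟩
    exact hDA x hx (Finset.mem_filter.1 hmem).2
  have hBdE : ↑Bd ⊆ E := by
    intro y hy
    rw [Finset.mem_coe, hBddef, Finset.mem_filter] at hy
    obtain ⟨hyS, x, hxA, hadj⟩ := hy
    rw [hSdef, Finset.mem_sdiff] at hyS
    have hxAset : x ∈ Aset := (Finset.mem_filter.1 hxA).2
    have hyBox : inBox d n y := mem_boxF.1 hyS.1
    have hyA : y ∉ Aset := fun h => hyS.2 (Finset.mem_filter.2 ⟨hyS.1, h⟩)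
    have hcases : y ∈ E ∧ y ∉ C ∪ D := by
      by_contra hnot
      have hgy : good y := ⟨hyBox, hnot⟩
      obtain ⟨c, hc, hchain⟩ := hxAset
      exact hyA ⟨c, hc, hchain.tail ⟨hadj, hAgood x ⟨c, hc, hchain⟩, hgy⟩⟩
    exact hcases.1
  have hEfin : E.Finite := Set.Finite.subset (boxF d n).finite_toSet
    (fun x hx => Finset.mem_coe.2 (mem_boxF.2 (hEbox hx)))
  have hBdcard : (Bd.card : ℝ) ≤ (E.ncard : ℝ) := by
    have h := Set.ncard_le_ncard hBdE hEfin
    rw [Set.ncard_coe_finset] at h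
    exact_mod_cast h
  have hCcard : C.ncard ≤ Abox.card := by
    have h := Set.ncard_le_ncard hCA Abox.finite_toSet
    rwa [Set.ncard_coe_finset] at h
  have hDcard : D.ncard ≤ S.card := by
    have h := Set.ncard_le_ncard hDS S.finite_toSet
    rwa [Set.ncard_coe_finset] at h
  have hAboxsub : Abox ⊆ boxF d n := by
    rw [hAboxdef]; exact Finset.filter_subset _ _
  have hsplitcard : Abox.card + S.card = n ^ d := by
    have hle := Finset.card_le_card hAboxsub
    rw [hSdef, Finset.card_sdiff_of_subset hAboxsub]
    rw [card_boxF] at hle ⊢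
    omega
  have hexp0 : (0:ℝ) ≤ 1 - 1/(d:ℝ) := by
    have h2 : (2:ℝ) ≤ (d:ℝ) := by exact_mod_cast hd
    have h3 : 1/(d:ℝ) ≤ 1/2 := by
      apply div_le_div_of_nonneg_left (by norm_num) (by norm_num) h2
    linarith
  have hmono : ∀ (m k : ℕ), m ≤ k → ((m:ℝ))^(1-1/(d:ℝ)) ≤ ((k:ℝ))^(1-1/(d:ℝ)) :=
    fun m k h => Real.rpow_le_rpow (by positivity) (by exact_mod_cast h) hexp0
  have hfac : (0:ℝ) ≤ 1/(2*(d:ℝ)) := by positivity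
  rcases le_or_gt (2 * Abox.card) (n^d) with hcase | hcase
  · have hiso := isoCore d n hd hn Abox Bd (Finset.filter_subset _ _) hcase ?_
    · calc (1/(2*(d:ℝ))) * min ((C.ncard : ℝ) ^ (1 - 1/(d:ℝ))) ((D.ncard : ℝ) ^ (1 - 1/(d:ℝ)))
          ≤ (1/(2*(d:ℝ))) * ((C.ncard : ℝ) ^ (1 - 1/(d:ℝ))) :=
            mul_le_mul_of_nonneg_left (min_le_left _ _) hfac
        _ ≤ (1/(2*(d:ℝ))) * ((Abox.card : ℝ) ^ (1 - 1/(d:ℝ))) :=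
            mul_le_mul_of_nonneg_left (hmono _ _ hCcard) hfac
        _ ≤ (Bd.card : ℝ) := hiso
        _ ≤ (E.ncard : ℝ) := hBdcard
    · intro x y hx hy hyA hadj
      right
      rw [hBddef, Finset.mem_filter]
      exact ⟨by rw [hSdef, Finset.mem_sdiff]; exact ⟨hy, hyA⟩, x, hx, hadj⟩
  · have hS2 : 2 * S.card ≤ n ^ d := by omega
    have hiso := isoCore d n hd hn S Bd (hSdef ▸ Finset.sdiff_subset) hS2 ?_
    · calc (1/(2*(d:ℝ))) * min ((C.ncard : ℝ) ^ (1 - 1/(d:ℝ))) ((D.ncard : ℝ) ^ (1 - 1/(d:ℝ)))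
          ≤ (1/(2*(d:ℝ))) * ((D.ncard : ℝ) ^ (1 - 1/(d:ℝ))) :=
            mul_le_mul_of_nonneg_left (min_le_right _ _) hfac
        _ ≤ (1/(2*(d:ℝ))) * ((S.card : ℝ) ^ (1 - 1/(d:ℝ))) :=
            mul_le_mul_of_nonneg_left (hmono _ _ hDcard) hfac
        _ ≤ (Bd.card : ℝ) := hiso
        _ ≤ (E.ncard : ℝ) := hBdcard
    · intro x y hx hy hyS hadj
      left
      have hyA : y ∈ Abox := by
        by_contra hcon
        exact hyS (by rw [hSdef, Finset.mem_sdiff]; exact ⟨hy, hcon⟩)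
      rw [hBddef, Finset.mem_filter]
      exact ⟨hx, y, hyA, nnAdj_symm hadj⟩
end

section
/- For A ⊆ B_n = {0,…,n-1}^d with |A| ≤ n^d/2, the boundary of A within the box satisfies |∂_{B_n} A| ≥ (1/(2d)) |A|^{1-1/d}, where ∂_{B_n} A is the set of sites of B_n \ A adjacent (nearest-neighbour) to a site of A. -/
open MeasureTheory ProbabilityTheory Filter

/-- Equal-exponent generalized Hölder inequality in `ℝ≥0`. -/
lemma holder_equal {ι κ : Type*} (I : Finset ι) (hI : I.Nonempty) (T : Finset κ)
    (f : ι → κ → NNReal) :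
    ∑ t ∈ T, ∏ i ∈ I, f i t
      ≤ ∏ i ∈ I, (∑ t ∈ T, f i t ^ (I.card : ℝ)) ^ (1 / (I.card : ℝ)) := by
  classical
  set k : ℕ := I.card with hk
  have hkpos : 0 < k := hI.card_pos
  have hk0 : (k : ℝ) ≠ 0 := by positivity
  have hk0' : (k : NNReal) ≠ 0 := by positivity
  set S : ι → NNReal := fun i => ∑ t ∈ T, f i t ^ (k : ℝ) with hS
  by_cases hzero : ∃ i ∈ I, S i = 0
  · obtain ⟨i₀, hi₀, hSi₀⟩ := hzero
    have hf0 : ∀ t ∈ T, f i₀ t = 0 := by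
      intro t ht
      have h2 : f i₀ t ^ (k:ℝ) = 0 := (Finset.sum_eq_zero_iff.mp hSi₀) t ht
      rwa [NNReal.rpow_eq_zero_iff, and_iff_left hk0] at h2
    have : ∀ t ∈ T, ∏ i ∈ I, f i t = 0 := fun t ht =>
      Finset.prod_eq_zero hi₀ (hf0 t ht)
    rw [Finset.sum_eq_zero this]
    exact zero_le
  push_neg at hzero
  set g : ι → κ → NNReal := fun i t => f i t / (S i) ^ (1/(k:ℝ)) with hg
  have hSpow_ne : ∀ i ∈ I, (S i) ^ (1/(k:ℝ)) ≠ 0 := by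
    intro i hi
    simp only [ne_eq, NNReal.rpow_eq_zero_iff, not_and_or]
    exact Or.inl (hzero i hi)
  have hgk : ∀ i ∈ I, ∑ t ∈ T, g i t ^ (k:ℝ) = 1 := by
    intro i hi
    have he : ∀ t ∈ T, g i t ^ (k:ℝ) = f i t ^ (k:ℝ) / S i := by
      intro t ht
      rw [hg]
      simp only
      rw [NNReal.div_rpow, ← NNReal.rpow_mul, one_div, inv_mul_cancel₀ hk0,
        NNReal.rpow_one]
    rw [Finset.sum_congr rfl he, ← Finset.sum_div]
    exact div_self (hzero i hi)
  have hcoe : (((k:NNReal)⁻¹ : NNReal) : ℝ) = 1/(k:ℝ) := by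
    push_cast
    rw [one_div]
  have hsum1 : ∑ t ∈ T, ∏ i ∈ I, g i t ≤ 1 := by
    have hptwise : ∀ t ∈ T, ∏ i ∈ I, g i t ≤ ∑ i ∈ I, (k:NNReal)⁻¹ * g i t ^ (k:ℝ) := by
      intro t ht
      have hw : ∑ _i ∈ I, (k:NNReal)⁻¹ = 1 := by
        rw [Finset.sum_const, ← hk, nsmul_eq_mul, mul_inv_cancel₀ hk0']
      have := NNReal.geom_mean_le_arith_mean_weighted I (fun _ => (k:NNReal)⁻¹)
        (fun i => g i t ^ (k:ℝ)) hw
      refine le_trans (le_of_eq (Finset.prod_congr rfl fun i hi => ?_)) this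
      rw [hcoe, ← NNReal.rpow_mul, mul_one_div, div_self hk0, NNReal.rpow_one]
    calc ∑ t ∈ T, ∏ i ∈ I, g i t
        ≤ ∑ t ∈ T, ∑ i ∈ I, (k:NNReal)⁻¹ * g i t ^ (k:ℝ) := Finset.sum_le_sum hptwise
      _ = ∑ i ∈ I, (k:NNReal)⁻¹ * ∑ t ∈ T, g i t ^ (k:ℝ) := by
          rw [Finset.sum_comm]
          exact Finset.sum_congr rfl fun i _ => by rw [Finset.mul_sum]
      _ = ∑ _i ∈ I, (k:NNReal)⁻¹ * 1 := Finset.sum_congr rfl fun i hi => by rw [hgk i hi]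
      _ = 1 := by rw [Finset.sum_const, ← hk, nsmul_eq_mul, mul_one, mul_inv_cancel₀ hk0']
  have hsplit : ∀ t ∈ T, ∏ i ∈ I, f i t = (∏ i ∈ I, (S i) ^ (1/(k:ℝ))) * ∏ i ∈ I, g i t := by
    intro t ht
    rw [← Finset.prod_mul_distrib]
    refine Finset.prod_congr rfl fun i hi => ?_
    rw [hg]
    simp only
    rw [mul_div_cancel₀ _ (hSpow_ne i hi)]
  calc ∑ t ∈ T, ∏ i ∈ I, f i t
      = (∏ i ∈ I, (S i) ^ (1/(k:ℝ))) * ∑ t ∈ T, ∏ i ∈ I, g i t := by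
        rw [Finset.mul_sum]; exact Finset.sum_congr rfl hsplit
    _ ≤ (∏ i ∈ I, (S i) ^ (1/(k:ℝ))) * 1 := by gcongr
    _ = ∏ i ∈ I, (S i) ^ (1/(k:ℝ)) := mul_one _

set_option maxHeartbeats 1000000 in
/-- Discrete Loomis–Whitney inequality, local version over a finset of coordinates. -/
lemma loomis_whitney_aux {ι : Type*} [DecidableEq ι] [DecidableEq (ι → ℤ)] :
    ∀ (m : ℕ) (s : Finset ι) (A : Finset (ι → ℤ)), s.card = m → A.Nonempty →
    (∀ x ∈ A, ∀ y ∈ A, ∀ i, i ∉ s → x i = y i) →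
    A.card ^ (s.card - 1) ≤ ∏ i ∈ s, (A.image (fun x => Function.update x i 0)).card := by
  intro m
  induction m with
  | zero =>
    intro s A hs hA hfix
    rw [Finset.card_eq_zero] at hs
    subst hs
    simp
  | succ k ih =>
    intro s A hs hA hfix
    rcases Nat.eq_zero_or_pos k with hk0 | hkpos
    · subst hk0
      rw [hs]
      simp only [Nat.add_sub_cancel, pow_zero]
      exact Finset.one_le_prod' fun i hi => Finset.card_pos.mpr (hA.image _)
    -- main step
    obtain ⟨i₀, s', hi₀, rfl, hs'⟩ : ∃ i₀ s', i₀ ∉ s' ∧ insert i₀ s' = s ∧ s'.card = k := by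
      obtain ⟨i₀, hi₀⟩ := Finset.card_pos.mp (by omega : 0 < s.card)
      refine ⟨i₀, s.erase i₀, Finset.notMem_erase _ _, Finset.insert_erase hi₀, ?_⟩
      rw [Finset.card_erase_of_mem hi₀, hs]
      omega
    have hcard_s : (insert i₀ s').card = k + 1 := hs
    -- slices
    set π : ι → (ι → ℤ) → (ι → ℤ) := fun i x => Function.update x i 0 with hπ
    set V : Finset ℤ := A.image (fun x => x i₀) with hV
    set Asl : ℤ → Finset (ι → ℤ) := fun t => A.filter (fun x => x i₀ = t) with hAsl
    have hslice_card : A.card = ∑ t ∈ V, (Asl t).card := by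
      apply Finset.card_eq_sum_card_fiberwise
      intro x hx
      exact Finset.mem_image_of_mem _ hx
    have hslice_ne : ∀ t ∈ V, (Asl t).Nonempty := by
      intro t ht
      obtain ⟨x, hx, hxt⟩ := Finset.mem_image.mp ht
      exact ⟨x, Finset.mem_filter.mpr ⟨hx, hxt⟩⟩
    -- each slice is fixed off s'
    have hslice_fix : ∀ t ∈ V, ∀ x ∈ Asl t, ∀ y ∈ Asl t, ∀ i, i ∉ s' → x i = y i := by
      intro t _ x hx y hy i his'
      rcases eq_or_ne i i₀ with rfl | hne
      · rw [(Finset.mem_filter.mp hx).2, (Finset.mem_filter.mp hy).2]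
      · exact hfix x (Finset.mem_filter.mp hx).1 y (Finset.mem_filter.mp hy).1 i
          (by simp [Finset.mem_insert, hne, his'])
    -- IH for slices
    have hIH : ∀ t ∈ V, (Asl t).card ^ (k - 1)
        ≤ ∏ i ∈ s', ((Asl t).image (π i)).card := by
      intro t ht
      have := ih s' (Asl t) hs' (hslice_ne t ht) (hslice_fix t ht)
      rwa [hs'] at this
    -- |Asl t| ≤ |π i₀ A|
    have hslice_le : ∀ t ∈ V, (Asl t).card ≤ (A.image (π i₀)).card := by
      intro t ht
      have hinj : Set.InjOn (π i₀) (Asl t) := by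
        intro x hx y hy hxy
        have hx' := Finset.mem_filter.mp (Finset.mem_coe.mp hx)
        have hy' := Finset.mem_filter.mp (Finset.mem_coe.mp hy)
        funext j
        rcases eq_or_ne j i₀ with rfl | hne
        · rw [hx'.2, hy'.2]
        · have := congrFun hxy j
          simpa [hπ, Function.update_of_ne hne] using this
      calc (Asl t).card = ((Asl t).image (π i₀)).card :=
            (Finset.card_image_of_injOn hinj).symm
        _ ≤ (A.image (π i₀)).card :=
            Finset.card_le_card (Finset.image_subset_image (Finset.filter_subset _ _))
    -- disjoint projections for i ∈ s'
    have hproj_sum : ∀ i ∈ s', ∑ t ∈ V, ((Asl t).image (π i)).card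
        ≤ (A.image (π i)).card := by
      intro i hi
      have hii₀ : i ≠ i₀ := fun h => hi₀ (h ▸ hi)
      have hdisj : ∀ t₁ ∈ V, ∀ t₂ ∈ V, t₁ ≠ t₂ →
          Disjoint ((Asl t₁).image (π i)) ((Asl t₂).image (π i)) := by
        intro t₁ _ t₂ _ hne
        rw [Finset.disjoint_left]
        rintro a ha₁ ha₂
        obtain ⟨x, hx, rfl⟩ := Finset.mem_image.mp ha₁
        obtain ⟨y, hy, hxy⟩ := Finset.mem_image.mp ha₂
        have hx' := (Finset.mem_filter.mp hx).2
        have hy' := (Finset.mem_filter.mp hy).2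
        have := congrFun hxy i₀
        simp only [hπ, Function.update_of_ne (Ne.symm hii₀)] at this
        exact hne (by rw [← hx', ← hy', this])
      calc ∑ t ∈ V, ((Asl t).image (π i)).card
          = (V.biUnion (fun t => (Asl t).image (π i))).card :=
            (Finset.card_biUnion hdisj).symm
        _ ≤ (A.image (π i)).card := by
            apply Finset.card_le_card
            intro a ha
            obtain ⟨t, _, hat⟩ := Finset.mem_biUnion.mp ha
            obtain ⟨x, hx, rfl⟩ := Finset.mem_image.mp hat
            exact Finset.mem_image_of_mem _ ((Finset.mem_filter.mp hx).1)
    -- pointwise slice bound, in ℕ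
    have hk0 : (k:ℝ) ≠ 0 := by positivity
    have hpt : ∀ t ∈ V, (Asl t).card ^ k
        ≤ (A.image (π i₀)).card * ∏ i ∈ s', ((Asl t).image (π i)).card := by
      intro t ht
      calc (Asl t).card ^ k = (Asl t).card * (Asl t).card ^ (k-1) := by
            rw [← pow_succ']
            congr 1
            omega
        _ ≤ (A.image (π i₀)).card * ∏ i ∈ s', ((Asl t).image (π i)).card :=
            Nat.mul_le_mul (hslice_le t ht) (hIH t ht)
    -- move to NNReal
    set P : ι → NNReal := fun i => ((A.image (π i)).card : NNReal) with hP
    set Q : ι → ℤ → NNReal := fun i t => (((Asl t).image (π i)).card : NNReal) with hQ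
    have hptN : ∀ t ∈ V, ((Asl t).card : NNReal)
        ≤ (P i₀) ^ (1/(k:ℝ)) * ∏ i ∈ s', (Q i t) ^ (1/(k:ℝ)) := by
      intro t ht
      have h1 : ((Asl t).card : NNReal) ^ (k:ℝ) ≤ P i₀ * ∏ i ∈ s', Q i t := by
        rw [NNReal.rpow_natCast]
        have := hpt t ht
        calc ((Asl t).card : NNReal) ^ k
            = (((Asl t).card ^ k : ℕ) : NNReal) := by push_cast; ring
          _ ≤ (((A.image (π i₀)).card * ∏ i ∈ s', ((Asl t).image (π i)).card : ℕ) : NNReal) := by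
              exact_mod_cast Nat.cast_le.mpr this
          _ = P i₀ * ∏ i ∈ s', Q i t := by push_cast; ring
      calc ((Asl t).card : NNReal)
          = (((Asl t).card : NNReal) ^ (k:ℝ)) ^ (1/(k:ℝ)) := by
            rw [← NNReal.rpow_mul, mul_one_div, div_self hk0, NNReal.rpow_one]
        _ ≤ (P i₀ * ∏ i ∈ s', Q i t) ^ (1/(k:ℝ)) :=
            NNReal.rpow_le_rpow h1 (by positivity)
        _ = (P i₀) ^ (1/(k:ℝ)) * ∏ i ∈ s', (Q i t) ^ (1/(k:ℝ)) := by
            rw [NNReal.mul_rpow, NNReal.finset_prod_rpow]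
    have hs'ne : s'.Nonempty := Finset.card_pos.mp (by omega)
    have hmain : ((A.card : NNReal))
        ≤ (P i₀) ^ (1/(k:ℝ)) * ∏ i ∈ s', (P i) ^ (1/(k:ℝ)) := by
      have hhold := holder_equal s' hs'ne V (fun i t => (Q i t) ^ (1/(k:ℝ)))
      rw [hs'] at hhold
      have hQsimp : ∀ i ∈ s', ∑ t ∈ V, ((Q i t) ^ (1/(k:ℝ))) ^ (k:ℝ) ≤ P i := by
        intro i hi
        have he : ∀ t ∈ V, ((Q i t) ^ (1/(k:ℝ))) ^ (k:ℝ) = Q i t := by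
          intro t _
          rw [← NNReal.rpow_mul, one_div, inv_mul_cancel₀ hk0, NNReal.rpow_one]
        calc ∑ t ∈ V, ((Q i t) ^ (1/(k:ℝ))) ^ (k:ℝ)
            = ∑ t ∈ V, Q i t := Finset.sum_congr rfl he
          _ = ((∑ t ∈ V, ((Asl t).image (π i)).card : ℕ) : NNReal) := by push_cast; ring
          _ ≤ P i := by exact_mod_cast Nat.cast_le.mpr (hproj_sum i hi)
      calc ((A.card : NNReal)) = ∑ t ∈ V, ((Asl t).card : NNReal) := by
            rw [hslice_card]; push_cast; ring
        _ ≤ ∑ t ∈ V, (P i₀) ^ (1/(k:ℝ)) * ∏ i ∈ s', (Q i t) ^ (1/(k:ℝ)) :=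
            Finset.sum_le_sum hptN
        _ = (P i₀) ^ (1/(k:ℝ)) * ∑ t ∈ V, ∏ i ∈ s', (Q i t) ^ (1/(k:ℝ)) := by
            rw [Finset.mul_sum]
        _ ≤ (P i₀) ^ (1/(k:ℝ)) * ∏ i ∈ s', (∑ t ∈ V, ((Q i t) ^ (1/(k:ℝ))) ^ (k:ℝ)) ^ (1/(k:ℝ)) := by
            gcongr
        _ ≤ (P i₀) ^ (1/(k:ℝ)) * ∏ i ∈ s', (P i) ^ (1/(k:ℝ)) := by
            exact mul_le_mul_of_nonneg_left (Finset.prod_le_prod' fun i hi =>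
              NNReal.rpow_le_rpow (hQsimp i hi) (by positivity)) (by positivity)
    -- raise to the k-th power
    have hfinal : ((A.card : NNReal)) ^ (k:ℕ) ≤ P i₀ * ∏ i ∈ s', P i := by
      have h2 : ((A.card : NNReal)) ^ (k:ℝ)
          ≤ ((P i₀) ^ (1/(k:ℝ)) * ∏ i ∈ s', (P i) ^ (1/(k:ℝ))) ^ (k:ℝ) :=
        NNReal.rpow_le_rpow hmain (by positivity)
      rw [NNReal.mul_rpow, ← NNReal.rpow_mul, one_div, inv_mul_cancel₀ hk0,
        NNReal.rpow_one, ← NNReal.finset_prod_rpow] at h2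
      rw [← NNReal.rpow_natCast]
      refine h2.trans (le_of_eq ?_)
      congr 1
      refine Finset.prod_congr rfl fun i _ => ?_
      rw [← NNReal.rpow_mul, inv_mul_cancel₀ hk0, NNReal.rpow_one]
    have hexp : (insert i₀ s').card - 1 = k := by rw [hcard_s]; omega
    rw [hexp, Finset.prod_insert hi₀]
    have := hfinal
    rw [hP] at this
    simp only at this
    exact_mod_cast this

lemma int_interval_step (Q : ℤ → Prop) (s₀ t₀ : ℤ) (hs : Q s₀) (ht : ¬ Q t₀) :
    ∃ u : ℤ, min s₀ t₀ ≤ u ∧ u ≤ max s₀ t₀ ∧ ¬ Q u ∧ (Q (u-1) ∨ Q (u+1)) := by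
  classical
  set T : Finset ℤ := (Finset.Icc (min s₀ t₀) (max s₀ t₀)).filter (fun t => ¬ Q t) with hT
  have ht₀T : t₀ ∈ T := by
    rw [hT, Finset.mem_filter, Finset.mem_Icc]
    exact ⟨⟨min_le_right _ _, le_max_right _ _⟩, ht⟩
  have hTne : T.Nonempty := ⟨t₀, ht₀T⟩
  rcases lt_trichotomy s₀ t₀ with hlt | heq | hgt
  · set u := T.min' hTne with hu
    have huT : u ∈ T := T.min'_mem hTne
    rw [hT, Finset.mem_filter, Finset.mem_Icc] at huT
    obtain ⟨⟨hu1, hu2⟩, hQu⟩ := huT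
    have hne : u ≠ s₀ := fun h => hQu (h ▸ hs)
    have hmin : min s₀ t₀ = s₀ := min_eq_left hlt.le
    have hs₀u : s₀ < u := lt_of_le_of_ne (hmin ▸ hu1) (Ne.symm hne)
    have hQum : Q (u - 1) := by
      by_contra hQ
      have humem : u - 1 ∈ T := by
        rw [hT, Finset.mem_filter, Finset.mem_Icc]
        exact ⟨⟨by omega, by omega⟩, hQ⟩
      have := T.min'_le _ humem
      omega
    exact ⟨u, hu1, hu2, hQu, Or.inl hQum⟩
  · exact absurd (heq ▸ hs) ht
  · set u := T.max' hTne with hu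
    have huT : u ∈ T := T.max'_mem hTne
    rw [hT, Finset.mem_filter, Finset.mem_Icc] at huT
    obtain ⟨⟨hu1, hu2⟩, hQu⟩ := huT
    have hne : u ≠ s₀ := fun h => hQu (h ▸ hs)
    have hmax : max s₀ t₀ = s₀ := max_eq_left hgt.le
    have hus₀ : u < s₀ := lt_of_le_of_ne (hmax ▸ hu2) hne
    have hQup : Q (u + 1) := by
      by_contra hQ
      have humem : u + 1 ∈ T := by
        rw [hT, Finset.mem_filter, Finset.mem_Icc]
        exact ⟨⟨by omega, by omega⟩, hQ⟩
      have := T.le_max' _ humem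
      omega
    exact ⟨u, hu1, hu2, hQu, Or.inr hQup⟩

set_option maxHeartbeats 2000000 in
/-- isoperimetric inequality in the cube, Bollobás–Leader. For
`A ⊆ B_n = {0,…,n-1}^d` with `|A| ≤ n^d/2`, the boundary of `A` within the box —
the set of sites of `B_n \ A` that are nearest-neighbour adjacent to a site of `A` —
has at least `(1/(2d)) |A|^{1-1/d}` elements. -/
theorem stmt4 (d n : ℕ) (hd : 2 ≤ d) (A : Set (Pt d))
    (hA : A ⊆ {x | inBox d n x}) (hcard : (A.ncard : ℝ) ≤ (n:ℝ)^d / 2) :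
    (1/(2*(d:ℝ))) * (A.ncard : ℝ) ^ (1 - 1/(d:ℝ))
      ≤ (({y : Pt d | inBox d n y ∧ y ∉ A ∧ ∃ x ∈ A, nnAdj x y}).ncard : ℝ) := by
  classical
  have hd0 : 0 < d := by omega
  have hD : (2:ℝ) ≤ (d:ℝ) := by exact_mod_cast hd
  have hDpos : (0:ℝ) < (d:ℝ) := by linarith
  have hexp_ne : (1:ℝ) - 1/(d:ℝ) ≠ 0 := by
    have h1 : 1/(d:ℝ) ≤ 1/2 := by
      rw [div_le_div_iff₀ hDpos (by norm_num)]; linarith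
    intro h; rw [sub_eq_zero] at h; rw [← h] at h1; norm_num at h1
  have hboxmem : ∀ x : Pt d, x ∈ boxF d n ↔ inBox d n x := by
    intro x
    simp [boxF, inBox, Fintype.mem_piFinset, Finset.mem_Ico]
  have hAfin : A.Finite := Set.Finite.subset (boxF d n).finite_toSet
    (fun x hx => by rw [Finset.mem_coe, hboxmem]; exact hA hx)
  have hBfin : ({y : Pt d | inBox d n y ∧ y ∉ A ∧ ∃ x ∈ A, nnAdj x y}).Finite :=
    Set.Finite.subset (boxF d n).finite_toSet
      (fun y hy => by rw [Finset.mem_coe, hboxmem]; exact hy.1)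
  rcases eq_or_ne A.ncard 0 with h0 | hm0
  · rw [h0]
    push_cast
    rw [Real.zero_rpow hexp_ne, mul_zero]
    positivity
  -- main case
  set F : Finset (Pt d) := hAfin.toFinset with hFdef
  set B : Finset (Pt d) := hBfin.toFinset with hBdef
  have hmF : A.ncard = F.card := Set.ncard_eq_toFinset_card A hAfin
  have hmB : ({y : Pt d | inBox d n y ∧ y ∉ A ∧ ∃ x ∈ A, nnAdj x y}).ncard = B.card :=
    Set.ncard_eq_toFinset_card _ hBfin
  have hmemF : ∀ x, x ∈ F ↔ x ∈ A := fun x => hAfin.mem_toFinset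
  have hmemB : ∀ y, y ∈ B ↔ inBox d n y ∧ y ∉ A ∧ ∃ x ∈ A, nnAdj x y := fun y =>
    hBfin.mem_toFinset
  have hm1 : 1 ≤ F.card := by
    rw [← hmF]; omega
  have hFne : F.Nonempty := Finset.card_pos.mp hm1
  -- n ≥ 1
  have hn1 : 1 ≤ n := by
    obtain ⟨x, hx⟩ := hFne
    have hbx := hA ((hmemF x).mp hx)
    have h1 := (hbx ⟨0, hd0⟩).1
    have h2 := (hbx ⟨0, hd0⟩).2
    by_contra hn
    have hn' : n = 0 := by omega
    subst hn'
    simp at h2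
    omega
  -- projections
  set π : Fin d → Pt d → Pt d := fun i x => Function.update x i 0 with hπ
  set P : Fin d → Finset (Pt d) := fun i => F.image (π i) with hP
  have hPzero : ∀ i : Fin d, ∀ p ∈ P i, p i = 0 := by
    intro i p hp
    obtain ⟨x, _, rfl⟩ := Finset.mem_image.mp hp
    simp [hπ]
  -- Loomis–Whitney
  have hLW : F.card ^ (d - 1) ≤ ∏ i, (P i).card := by
    have := loomis_whitney_aux (ι := Fin d) d Finset.univ F (by simp) hFne
      (fun x _ y _ i hi => absurd (Finset.mem_univ i) hi)
    simpa [Finset.card_univ] using this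
  obtain ⟨imax, -, himax⟩ := Finset.exists_max_image Finset.univ (fun i => (P i).card)
    ⟨⟨0, hd0⟩, Finset.mem_univ _⟩
  have hLWmax : F.card ^ (d - 1) ≤ (P imax).card ^ d := by
    calc F.card ^ (d-1) ≤ ∏ i, (P i).card := hLW
      _ ≤ ∏ _i : Fin d, (P imax).card :=
          Finset.prod_le_prod' (fun i _ => himax i (Finset.mem_univ i))
      _ = (P imax).card ^ d := by rw [Finset.prod_const, Finset.card_univ, Fintype.card_fin]
  -- full lines
  set Fl : Finset (Pt d) :=
    (P imax).filter (fun p => ∀ t ∈ Finset.Ico (0:ℤ) (n:ℤ), Function.update p imax t ∈ F)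
    with hFl
  have hfullcount : n * Fl.card ≤ F.card := by
    have hinj : Set.InjOn (fun q : Pt d × ℤ => Function.update q.1 imax q.2)
        ↑(Fl ×ˢ Finset.Ico (0:ℤ) (n:ℤ)) := by
      rintro ⟨p, t⟩ hpt ⟨q, s⟩ hqs heq
      rw [Finset.mem_coe, Finset.mem_product] at hpt hqs
      have hts : t = s := by
        have := congrFun heq imax
        simpa using this
      have hpq : p = q := by
        funext j
        rcases eq_or_ne j imax with rfl | hne
        · rw [hPzero j p (Finset.mem_filter.mp hpt.1).1,
            hPzero j q (Finset.mem_filter.mp hqs.1).1]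
        · have := congrFun heq j
          simpa [Function.update_of_ne hne] using this
      rw [hpq, hts]
    have hmaps : ∀ q ∈ Fl ×ˢ Finset.Ico (0:ℤ) (n:ℤ),
        Function.update q.1 imax q.2 ∈ F := by
      rintro ⟨p, t⟩ hpt
      rw [Finset.mem_product] at hpt
      exact (Finset.mem_filter.mp hpt.1).2 t hpt.2
    have hle := Finset.card_le_card_of_injOn _ hmaps hinj
    rw [Finset.card_product] at hle
    have hicard : (Finset.Ico (0:ℤ) (n:ℤ)).card = n := by
      rw [Int.card_Ico]
      simp
    rw [hicard, mul_comm] at hle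
    exact hle
  -- boundary count
  have hbexists : ∀ p ∈ (P imax) \ Fl, ∃ y, y ∈ B ∧ Function.update y imax 0 = p := by
    intro p hp
    rw [Finset.mem_sdiff] at hp
    obtain ⟨hpP, hpFl⟩ := hp
    obtain ⟨x, hxF, hpx⟩ := Finset.mem_image.mp hpP
    have hxA : x ∈ A := (hmemF x).mp hxF
    have hxbox := hA hxA
    have hupd : ∀ t : ℤ, Function.update p imax t = Function.update x imax t := by
      intro t
      rw [← hpx]
      simp [hπ, Function.update_idem]
    rw [hFl, Finset.mem_filter, not_and] at hpFl
    obtain ⟨t₀, ht₀mem, ht₀⟩ := by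
      have := hpFl hpP
      push_neg at this
      exact this
    rw [Finset.mem_Ico] at ht₀mem
    rw [hupd] at ht₀
    have hs₀ : Function.update x imax (x imax) ∈ F := by
      rw [Function.update_eq_self]; exact hxF
    obtain ⟨u, hu1, hu2, hQu, hQside⟩ :=
      int_interval_step (fun t => Function.update x imax t ∈ F) (x imax) t₀ hs₀ ht₀
    have hxi := hxbox imax
    have hu0 : (0:ℤ) ≤ u := le_trans (le_min hxi.1 ht₀mem.1) hu1
    have hun : u < (n:ℤ) := lt_of_le_of_lt hu2 (max_lt hxi.2 ht₀mem.2)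
    set y : Pt d := Function.update x imax u with hy
    have hybox : inBox d n y := by
      intro j
      rcases eq_or_ne j imax with rfl | hne
      · simpa [hy] using ⟨hu0, hun⟩
      · simpa [hy, Function.update_of_ne hne] using hxbox j
    have hyA : y ∉ A := fun h => hQu ((hmemF y).mpr h)
    have hadj : ∃ x' ∈ A, nnAdj x' y := by
      have hkey : ∀ v : ℤ, (v - u).natAbs = 1 → Function.update x imax v ∈ F →
          ∃ x' ∈ A, nnAdj x' y := by
        intro v hv hvF
        refine ⟨Function.update x imax v, (hmemF _).mp hvF, ?_⟩
        unfold nnAdj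
        rw [Finset.sum_eq_single_of_mem imax (Finset.mem_univ imax)]
        · simpa [hy] using hv
        · intro j _ hne
          simp [hy, Function.update_of_ne hne]
      rcases hQside with h | h
      · exact hkey (u-1) (by simp) h
      · exact hkey (u+1) (by simp) h
    refine ⟨y, (hmemB y).mpr ⟨hybox, hyA, hadj⟩, ?_⟩
    rw [hy, Function.update_idem, ← hupd 0]
    rw [Function.update_eq_self_iff]
    exact (hPzero imax p hpP).symm
  have hbdcount : (P imax).card ≤ B.card + Fl.card := by
    have hsub : Fl ⊆ P imax := Finset.filter_subset _ _
    have hsd : ((P imax) \ Fl).card ≤ B.card := by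
      set φ : Pt d → Pt d := fun p =>
        if h : ∃ y, y ∈ B ∧ Function.update y imax 0 = p then h.choose else p with hφ
      have hmaps : ∀ p ∈ (P imax) \ Fl, φ p ∈ B := by
        intro p hp
        obtain ⟨y, hy⟩ := hbexists p hp
        rw [hφ]
        simp only [dif_pos (⟨y, hy⟩ : ∃ y, y ∈ B ∧ Function.update y imax 0 = p)]
        exact (Exists.choose_spec (⟨y, hy⟩ : ∃ y, y ∈ B ∧ Function.update y imax 0 = p)).1
      have hinj : Set.InjOn φ (↑((P imax) \ Fl) : Set (Pt d)) := by
        intro p₁ hp₁ p₂ hp₂ heq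
        have h₁ := hbexists p₁ (Finset.mem_coe.mp hp₁)
        have h₂ := hbexists p₂ (Finset.mem_coe.mp hp₂)
        have e₁ : Function.update (φ p₁) imax 0 = p₁ := by
          rw [hφ]; simp only [dif_pos h₁]
          exact (Exists.choose_spec h₁).2
        have e₂ : Function.update (φ p₂) imax 0 = p₂ := by
          rw [hφ]; simp only [dif_pos h₂]
          exact (Exists.choose_spec h₂).2
        rw [← e₁, ← e₂, heq]
      exact Finset.card_le_card_of_injOn φ hmaps hinj
    have := Finset.card_sdiff_add_card_eq_card hsub
    omega
  -- real arithmetic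
  have hM1 : (1:ℝ) ≤ (F.card:ℝ) := by exact_mod_cast hm1
  have hN1 : (1:ℝ) ≤ (n:ℝ) := by exact_mod_cast hn1
  have hMpos : (0:ℝ) < (F.card:ℝ) := by linarith
  have hNpos : (0:ℝ) < (n:ℝ) := by linarith
  have hcardM : (F.card:ℝ) ≤ (n:ℝ)^d / 2 := by rw [← hmF]; exact hcard
  have hMp_le_Pr : (F.card:ℝ) ^ (1 - 1/(d:ℝ)) ≤ ((P imax).card : ℝ) := by
    have hPr0 : (0:ℝ) ≤ ((P imax).card : ℝ) := Nat.cast_nonneg _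
    have h1 : (F.card:ℝ) ^ ((d:ℝ) - 1) ≤ ((P imax).card : ℝ) ^ (d:ℝ) := by
      have hcast : ((d:ℝ) - 1) = ((d-1 : ℕ):ℝ) := by
        have h1d : 1 ≤ d := by omega
        push_cast [h1d]
        ring
      rw [hcast, Real.rpow_natCast, Real.rpow_natCast]
      exact_mod_cast hLWmax
    calc (F.card:ℝ) ^ (1 - 1/(d:ℝ)) = ((F.card:ℝ) ^ ((d:ℝ)-1)) ^ (1/(d:ℝ)) := by
          rw [← Real.rpow_mul (le_of_lt hMpos)]
          congr 1
          field_simp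
      _ ≤ (((P imax).card : ℝ) ^ (d:ℝ)) ^ (1/(d:ℝ)) :=
          Real.rpow_le_rpow (Real.rpow_nonneg (le_of_lt hMpos) _) h1 (by positivity)
      _ = ((P imax).card : ℝ) := by
          rw [← Real.rpow_mul hPr0, mul_one_div, div_self (ne_of_gt hDpos), Real.rpow_one]
  have hFuMN : (Fl.card:ℝ) ≤ (F.card:ℝ) / (n:ℝ) := by
    rw [le_div_iff₀ hNpos]
    calc (Fl.card:ℝ) * (n:ℝ) = ((Fl.card * n : ℕ) : ℝ) := by push_cast; ring
      _ ≤ (F.card:ℝ) := by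
          exact_mod_cast (by rw [mul_comm]; exact hfullcount : Fl.card * n ≤ F.card)
  have hMN : (F.card:ℝ) / (n:ℝ)
      ≤ (F.card:ℝ) ^ (1 - 1/(d:ℝ)) * (2:ℝ) ^ (-(1/(d:ℝ))) := by
    have h2pos : (0:ℝ) < (2:ℝ) ^ (1/(d:ℝ)) := Real.rpow_pos_of_pos (by norm_num) _
    have hsplit : (F.card:ℝ) = (F.card:ℝ) ^ (1/(d:ℝ)) * (F.card:ℝ) ^ (1 - 1/(d:ℝ)) := by
      rw [← Real.rpow_add hMpos]
      norm_num
    have hM1d : (F.card:ℝ) ^ (1/(d:ℝ)) ≤ (n:ℝ) / (2:ℝ) ^ (1/(d:ℝ)) := by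
      calc (F.card:ℝ) ^ (1/(d:ℝ)) ≤ ((n:ℝ)^d / 2) ^ (1/(d:ℝ)) :=
            Real.rpow_le_rpow (le_of_lt hMpos) hcardM (by positivity)
        _ = (n:ℝ) / (2:ℝ) ^ (1/(d:ℝ)) := by
            rw [Real.div_rpow (by positivity) (by norm_num)]
            congr 1
            rw [← Real.rpow_natCast (n:ℝ) d, ← Real.rpow_mul (le_of_lt hNpos), mul_one_div,
              div_self (ne_of_gt hDpos), Real.rpow_one]
    have hMp0 : (0:ℝ) ≤ (F.card:ℝ) ^ (1 - 1/(d:ℝ)) := Real.rpow_nonneg (le_of_lt hMpos) _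
    calc (F.card:ℝ) / (n:ℝ)
        = (F.card:ℝ) ^ (1/(d:ℝ)) * (F.card:ℝ) ^ (1 - 1/(d:ℝ)) / (n:ℝ) := by rw [← hsplit]
      _ ≤ ((n:ℝ) / (2:ℝ) ^ (1/(d:ℝ))) * (F.card:ℝ) ^ (1 - 1/(d:ℝ)) / (n:ℝ) :=
          div_le_div_of_nonneg_right (mul_le_mul_of_nonneg_right hM1d hMp0) hNpos.le
      _ = (F.card:ℝ) ^ (1 - 1/(d:ℝ)) * (2:ℝ) ^ (-(1/(d:ℝ))) := by
          rw [Real.rpow_neg (by norm_num : (0:ℝ) ≤ 2)]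
          have hn0 : (n:ℝ) ≠ 0 := ne_of_gt hNpos
          rw [div_mul_eq_mul_div, div_div, mul_comm ((2:ℝ) ^ (1/(d:ℝ))) (n:ℝ), ← div_div,
            mul_div_cancel_left₀ _ hn0, div_eq_mul_inv]
  have hlog : (2:ℝ) ^ (-(1/(d:ℝ))) ≤ 1 - 1/(2*(d:ℝ)) := by
    set L := Real.log 2 with hL
    have hLlb : (0.6931:ℝ) ≤ L := by
      have := Real.log_two_gt_d9
      rw [hL]
      linarith
    have hc_ge : 1 + L/(d:ℝ) ≤ (2:ℝ) ^ (1/(d:ℝ)) := by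
      rw [Real.rpow_def_of_pos (by norm_num : (0:ℝ) < 2)]
      have hexp := Real.add_one_le_exp (L * (1/(d:ℝ)))
      calc 1 + L/(d:ℝ) = L * (1/(d:ℝ)) + 1 := by ring
        _ ≤ Real.exp (L * (1/(d:ℝ))) := hexp
        _ = Real.exp (Real.log 2 * (1/(d:ℝ))) := by rw [hL]
    have hcpos : (0:ℝ) < (2:ℝ) ^ (1/(d:ℝ)) := Real.rpow_pos_of_pos (by norm_num) _
    have hpos2 : (0:ℝ) < 1 - 1/(2*(d:ℝ)) := by
      have : 1/(2*(d:ℝ)) ≤ 1/4 := by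
        rw [div_le_div_iff₀ (by linarith) (by norm_num)]
        linarith
      linarith
    rw [Real.rpow_neg (by norm_num : (0:ℝ) ≤ 2), inv_le_comm₀ hcpos hpos2]
    have hgoal : (1 - 1/(2*(d:ℝ)))⁻¹ ≤ 1 + L/(d:ℝ) := by
      rw [inv_le_iff_one_le_mul₀ hpos2]
      have hkey : (0:ℝ) ≤ ((d:ℝ) - 2) * (2*L - 1) := by nlinarith
      field_simp
      nlinarith [hLlb]
    exact le_trans hgoal hc_ge
  -- final assembly
  rw [hmF, hmB]
  have hbdR : ((P imax).card : ℝ) ≤ (B.card:ℝ) + (Fl.card:ℝ) := by exact_mod_cast hbdcount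
  have hMp0 : (0:ℝ) ≤ (F.card:ℝ) ^ (1 - 1/(d:ℝ)) := Real.rpow_nonneg (le_of_lt hMpos) _
  have hmul := mul_le_mul_of_nonneg_left hlog hMp0
  nlinarith [hMp_le_Pr, hFuMN, hMN, hbdR, hmul, hMp0, hD]
end

section
/- Let C, D, E be subsets of Z^d with C and D connected in the nearest-neighbour graph, C, D, E pairwise disjoint, and suppose every nearest-neighbour path from C to D intersects E. Then there exists a subset of E that is connected in the l∞-adjacency graph L (where x ~ y iff max_i |x_i - y_i| = 1) and that also separates C and D. -/
open MeasureTheory ProbabilityTheory Filter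

/-- `ℒ`-adjacency (sup-norm adjacency): `x ≠ y` and `max_i |x_i - y_i| = 1`. -/
def lAdj {d : ℕ} (x y : Pt d) : Prop := x ≠ y ∧ ∀ i, (x i - y i).natAbs ≤ 1

/-- A set of sites is connected in the `ℒ` (sup-norm adjacency) graph. -/
def lConnSet {d : ℕ} (A : Set (Pt d)) : Prop :=
  ∀ x ∈ A, ∀ y ∈ A, Relation.ReflTransGen (fun a b => lAdj a b ∧ a ∈ A ∧ b ∈ A) x y

/-- `E` separates `C` and `D`: every finite nearest-neighbour path from a point of `C`
to a point of `D` intersects `E`. -/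
def separates {d : ℕ} (E C D : Set (Pt d)) : Prop :=
  ∀ (k : ℕ) (p : ℕ → Pt d), p 0 ∈ C → p k ∈ D →
    (∀ j < k, nnAdj (p j) (p (j+1))) → ∃ j ≤ k, p j ∈ E

namespace Stmt5Aux
open Relation

variable {d : ℕ}

def unitS (s : Pt d) : Prop := (∑ i, (s i).natAbs) = 1

lemma nnAdj_symm {x y : Pt d} (h : nnAdj x y) : nnAdj y x := by
  unfold nnAdj at h ⊢
  rw [← h]
  exact Finset.sum_congr rfl fun i _ => by omega

lemma unitS_sub {x y : Pt d} (h : nnAdj x y) : unitS (y - x) := by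
  unfold nnAdj at h
  unfold unitS
  rw [← h]
  refine Finset.sum_congr rfl fun i _ => ?_
  simp only [Pi.sub_apply]
  omega

lemma nnAdj_of_unit {u s : Pt d} (h : unitS s) : nnAdj u (u + s) := by
  unfold unitS at h
  unfold nnAdj
  rw [← h]
  refine Finset.sum_congr rfl fun i _ => ?_
  simp only [Pi.add_apply]
  omega

lemma unit_struct {s : Pt d} (h : unitS s) : ∃ i, (s i).natAbs = 1 ∧ ∀ j, j ≠ i → s j = 0 := by
  unfold unitS at h
  obtain ⟨i, hi⟩ : ∃ i, s i ≠ 0 := by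
    by_contra hc
    push_neg at hc
    rw [Finset.sum_eq_zero (fun i _ => by rw [hc i]; rfl)] at h
    exact one_ne_zero h.symm
  have h1 : (s i).natAbs ≤ 1 := by
    have := Finset.single_le_sum (f := fun j => (s j).natAbs)
      (fun j _ => Nat.zero_le _) (Finset.mem_univ i)
    omega
  have h2 : (s i).natAbs = 1 := by
    have := Int.natAbs_pos.mpr hi
    omega
  refine ⟨i, h2, fun j hj => ?_⟩
  have herase := Finset.add_sum_erase Finset.univ (fun j => (s j).natAbs) (Finset.mem_univ i)
  have hz : ∑ k ∈ Finset.univ.erase i, (s k).natAbs = 0 := by omega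
  have := (Finset.sum_eq_zero_iff).mp hz j (Finset.mem_erase.mpr ⟨hj, Finset.mem_univ j⟩)
  omega

lemma unit_coord {s : Pt d} (h : unitS s) (i : Fin d) : (s i).natAbs ≤ 1 := by
  unfold unitS at h
  have := Finset.single_le_sum (f := fun j => (s j).natAbs)
    (fun j _ => Nat.zero_le _) (Finset.mem_univ i)
  omega

lemma unit_trichotomy {s t : Pt d} (i : Fin d) (hsi : (s i).natAbs = 1)
    (hs0 : ∀ j, j ≠ i → s j = 0) (ht : unitS t) : t i = 0 ∨ t = s ∨ t = -s := by
  obtain ⟨j, hj1, hj0⟩ := unit_struct ht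
  by_cases hti : t i = 0
  · exact Or.inl hti
  have hij : j = i := by
    by_contra hne
    exact hti (hj0 i fun h => hne h.symm)
  subst hij
  have hcase : t j = s j ∨ t j = -(s j) := by omega
  rcases hcase with hc | hc
  · refine Or.inr (Or.inl (funext fun k => ?_))
    by_cases hk : k = j
    · subst hk; exact hc
    · rw [hj0 k hk, hs0 k hk]
  · refine Or.inr (Or.inr (funext fun k => ?_))
    by_cases hk : k = j
    · subst hk; simpa using hc
    · rw [hj0 k hk]
      simp [hs0 k hk]

lemma list_sum_apply (i : Fin d) : ∀ l : List (Pt d), (l.sum) i = (l.map (fun v => v i)).sum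
  | [] => by simp
  | s :: l => by
    simp [list_sum_apply i l]

lemma list_coord_nonneg (i : Fin d) : ∀ l : List (Pt d), (∀ t ∈ l, 0 ≤ t i) → 0 ≤ (l.sum) i
  | [], _ => by simp
  | x :: l, h => by
    rw [List.sum_cons, Pi.add_apply]
    have h1 := list_coord_nonneg i l (fun y hy => h y (List.mem_cons_of_mem _ hy))
    have h2 := h x (List.mem_cons_self)
    omega

lemma list_coord_nonpos (i : Fin d) : ∀ l : List (Pt d), (∀ t ∈ l, t i ≤ 0) → (l.sum) i ≤ 0
  | [], _ => by simp
  | x :: l, h => by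
    rw [List.sum_cons, Pi.add_apply]
    have h1 := list_coord_nonpos i l (fun y hy => h y (List.mem_cons_of_mem _ hy))
    have h2 := h x (List.mem_cons_self)
    omega

lemma first_split {α : Type*} (a : α) : ∀ l : List α, a ∈ l → ∃ m r, l = m ++ a :: r ∧ a ∉ m := by
  intro l
  induction l with
  | nil => intro h; simp at h
  | cons b t ih =>
    intro h
    by_cases hb : b = a
    · exact ⟨[], t, by rw [hb]; rfl, by simp⟩
    · have : a ∈ t := by
        rcases List.mem_cons.mp h with h1 | h1
        · exact absurd h1.symm hb
        · exact h1
      obtain ⟨m, r, he, hm⟩ := ih this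
      exact ⟨b :: m, r, by rw [he]; rfl, by
        simp only [List.mem_cons, not_or]
        exact ⟨fun h' => hb h'.symm, hm⟩⟩

def crossSum (h : Pt d → Pt d → ZMod 2) : Pt d → List (Pt d) → ZMod 2
  | _, [] => 0
  | u, s :: l => h u (u + s) + crossSum h (u + s) l

lemma crossSum_append (h : Pt d → Pt d → ZMod 2) :
    ∀ (p : List (Pt d)) (u : Pt d) (q : List (Pt d)),
      crossSum h u (p ++ q) = crossSum h u p + crossSum h (u + p.sum) q
  | [], u, q => by simp [crossSum]
  | s :: p, u, q => by
    show h u (u + s) + crossSum h (u + s) (p ++ q) =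
      h u (u + s) + crossSum h (u + s) p + crossSum h (u + (s :: p).sum) q
    rw [crossSum_append h p (u + s) q, List.sum_cons, ← add_assoc u s p.sum]
    exact (add_assoc _ _ _).symm

lemma zmod2_add_self (a : ZMod 2) : a + a = 0 := CharTwo.add_self_eq_zero a


section Word

variable (h : Pt d → Pt d → ZMod 2)
  (hsymm : ∀ u v, h u v = h v u)
  (hsq : ∀ (u a b : Pt d), unitS a → unitS b → (∀ i, a i = 0 ∨ b i = 0) →
    h u (u + a) + h (u + a) (u + a + b) = h u (u + b) + h (u + b) (u + a + b))

include hsymm hsq in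
lemma inner_cancel (s : Pt d) (i : Fin d) (hsi : (s i).natAbs = 1)
    (hs0 : ∀ j, j ≠ i → s j = 0) :
    ∀ (m : List (Pt d)) (u : Pt d) (r : List (Pt d)),
      (∀ t ∈ m, unitS t) → (∀ t ∈ m, t i = 0 ∨ t = s) →
      crossSum h u (s :: (m ++ (-s) :: r)) = crossSum h u (m ++ r) := by
  intro m
  induction m with
  | nil =>
    intro u r _ _
    show h u (u + s) + (h (u + s) (u + s + -s) + crossSum h (u + s + -s) r) =
      crossSum h u r
    rw [add_neg_cancel_right, hsymm (u + s) u, ← add_assoc, zmod2_add_self, zero_add]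
  | cons c m ih =>
    intro u r hu hp
    by_cases hc : c = s
    · subst hc
      show h u (u + c) + crossSum h (u + c) (c :: (m ++ (-c) :: r)) =
        h u (u + c) + crossSum h (u + c) (m ++ r)
      rw [ih (u + c) r (fun t ht => hu t (List.mem_cons_of_mem _ ht))
        (fun t ht => hp t (List.mem_cons_of_mem _ ht))]
    · have hci : c i = 0 := by
        rcases hp c (List.mem_cons_self) with h0 | h0
        · exact h0
        · exact absurd h0 hc
      have hcu : unitS c := hu c (List.mem_cons_self)
      have hsu : unitS s := by
        unfold unitS
        rw [Finset.sum_eq_single i (fun j _ hj => by rw [hs0 j hj]; rfl) (by simp)]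
        exact hsi
      have hdisj : ∀ k, s k = 0 ∨ c k = 0 := by
        intro k
        by_cases hk : k = i
        · subst hk; exact Or.inr hci
        · exact Or.inl (hs0 k hk)
      have key := hsq u s c hsu hcu hdisj
      have hIH := ih (u + c) r (fun t ht => hu t (List.mem_cons_of_mem _ ht))
        (fun t ht => hp t (List.mem_cons_of_mem _ ht))
      show h u (u + s) + (h (u + s) (u + s + c) + crossSum h (u + s + c) (m ++ (-s) :: r)) =
        h u (u + c) + crossSum h (u + c) (m ++ r)
      rw [← hIH]
      show _ = h u (u + c) + (h (u + c) (u + c + s) + crossSum h (u + c + s) (m ++ (-s) :: r))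
      rw [add_right_comm u c s, ← add_assoc, ← add_assoc, key]

include hsymm hsq in
lemma word :
    ∀ (n : ℕ) (l : List (Pt d)) (u : Pt d), l.length ≤ n →
      (∀ s ∈ l, unitS s) → l.sum = 0 → crossSum h u l = 0 := by
  intro n
  induction n with
  | zero =>
    intro l u hl _ _
    have : l = [] := List.eq_nil_of_length_eq_zero (Nat.le_zero.mp hl)
    subst this
    rfl
  | succ n ih =>
    intro l u hl hunit hsum
    match l with
    | [] => rfl
    | s :: l' =>
      obtain ⟨i, hi1, hi0⟩ := unit_struct (hunit s (List.mem_cons_self))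
      have htri : ∀ t ∈ l', t i = 0 ∨ t = s ∨ t = -s := fun t ht =>
        unit_trichotomy i hi1 hi0 (hunit t (List.mem_cons_of_mem _ ht))
      have hneg : (-s) ∈ l' := by
        by_contra hno
        have hall : ∀ t ∈ l', t i = 0 ∨ t = s := by
          intro t ht
          rcases htri t ht with h0 | h0 | h0
          · exact Or.inl h0
          · exact Or.inr h0
          · exact absurd (h0 ▸ ht) hno
        have hco : s i + (l'.sum) i = 0 := by
          have := congrFun hsum i
          rw [List.sum_cons] at this
          simpa using this
        have hsi : s i = 1 ∨ s i = -1 := by omega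
        rcases hsi with hsi | hsi
        · have hnn : 0 ≤ (l'.sum) i := by
            apply list_coord_nonneg
            intro t ht
            rcases hall t ht with h0 | h0
            · omega
            · rw [h0]; omega
          omega
        · have hnn : (l'.sum) i ≤ 0 := by
            apply list_coord_nonpos
            intro t ht
            rcases hall t ht with h0 | h0
            · omega
            · rw [h0]; omega
          omega
      obtain ⟨m, r, hsplit, hnotm⟩ := first_split (-s) l' hneg
      have hmprop : ∀ t ∈ m, t i = 0 ∨ t = s := by
        intro t ht
        have ht' : t ∈ l' := by rw [hsplit]; exact List.mem_append_left _ ht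
        rcases htri t ht' with h0 | h0 | h0
        · exact Or.inl h0
        · exact Or.inr h0
        · exact absurd (h0 ▸ ht) hnotm
      have hmunit : ∀ t ∈ m, unitS t := fun t ht =>
        hunit t (List.mem_cons_of_mem _ (by rw [hsplit]; exact List.mem_append_left _ ht))
      rw [hsplit]
      rw [inner_cancel h hsymm hsq s i hi1 hi0 m u r hmunit hmprop]
      apply ih (m ++ r) u
      · have := congrArg List.length hsplit
        simp only [List.length_cons, List.length_append] at hl this ⊢
        omega
      · intro t ht
        rcases List.mem_append.mp ht with h0 | h0
        · exact hmunit t h0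
        · exact hunit t (List.mem_cons_of_mem _ (by
            rw [hsplit]; exact List.mem_append_right _ (List.mem_cons_of_mem _ h0)))
      · have : (s :: (m ++ (-s) :: r)).sum = 0 := by rw [← hsplit]; exact hsum
        simp only [List.sum_cons, List.sum_append] at this
        simp only [List.sum_append]
        have goal : m.sum + r.sum = s + (m.sum + ((-s) + r.sum)) := by abel
        rw [goal, this]

end Word

/-! ### Reachability -/

def relAvoid (F : Set (Pt d)) (a b : Pt d) : Prop := nnAdj a b ∧ a ∉ F ∧ b ∉ F

lemma relAvoid_symm (F : Set (Pt d)) : Symmetric (relAvoid F) :=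
  fun _ _ h => ⟨nnAdj_symm h.1, h.2.2, h.2.1⟩

def reach (S F : Set (Pt d)) : Set (Pt d) := {x | ∃ c ∈ S, ReflTransGen (relAvoid F) c x}

lemma self_subset_reach (S F : Set (Pt d)) : S ⊆ reach S F :=
  fun c hc => ⟨c, hc, ReflTransGen.refl⟩

lemma reach_avoid {S F : Set (Pt d)} (hSF : Disjoint S F) {x : Pt d}
    (hx : x ∈ reach S F) : x ∉ F := by
  obtain ⟨c, hc, hp⟩ := hx
  induction hp with
  | refl => exact fun h => (Set.disjoint_left.mp hSF) hc h
  | tail _ hbc _ => exact hbc.2.2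

lemma reach_closed {S F : Set (Pt d)} (hSF : Disjoint S F) {x y : Pt d}
    (hx : x ∈ reach S F) (hxy : nnAdj x y) (hy : y ∉ F) : y ∈ reach S F := by
  obtain ⟨c, hc, hp⟩ := hx
  exact ⟨c, hc, hp.tail ⟨hxy, reach_avoid hSF ⟨c, hc, hp⟩, hy⟩⟩

lemma reach_path_in {S F : Set (Pt d)} {c x : Pt d} (hc : c ∈ S)
    (hp : ReflTransGen (relAvoid F) c x) :
    ReflTransGen (fun a b => nnAdj a b ∧ a ∈ reach S F ∧ b ∈ reach S F) c x := by
  induction hp with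
  | refl => exact ReflTransGen.refl
  | @tail b z hab hbz ih =>
    exact ih.tail ⟨hbz.1, ⟨c, hc, hab⟩, ⟨c, hc, hab.tail hbz⟩⟩

lemma reach_conn {S F : Set (Pt d)} (hS : connSet S) {x y : Pt d}
    (hx : x ∈ reach S F) (hy : y ∈ reach S F) :
    ReflTransGen (fun a b => nnAdj a b ∧ a ∈ reach S F ∧ b ∈ reach S F) x y := by
  obtain ⟨c, hc, hpc⟩ := hx
  obtain ⟨c', hc', hpc'⟩ := hy
  have h1 := reach_path_in hc hpc
  have h2 := reach_path_in hc' hpc'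
  have hsymrel : Symmetric (fun a b : Pt d => nnAdj a b ∧ a ∈ reach S F ∧ b ∈ reach S F) :=
    fun _ _ h => ⟨nnAdj_symm h.1, h.2.2, h.2.1⟩
  have h3 : ReflTransGen (fun a b => nnAdj a b ∧ a ∈ reach S F ∧ b ∈ reach S F) c c' :=
    ReflTransGen.mono (fun a b hab =>
      ⟨hab.1, self_subset_reach S F hab.2.1, self_subset_reach S F hab.2.2⟩) _ _ (hS c hc c' hc')
  exact (((@ReflTransGen.symmetric _ _ ⟨fun _ _ h => hsymrel h⟩).symm _ _ h1).trans h3).trans h2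

/-! ### From `ReflTransGen` to indexed paths -/

lemma rtg_to_path {r : Pt d → Pt d → Prop} {u v : Pt d} (hr : ReflTransGen r u v) :
    ∃ (k : ℕ) (p : ℕ → Pt d), p 0 = u ∧ p k = v ∧ ∀ j < k, r (p j) (p (j+1)) := by
  induction hr with
  | refl => exact ⟨0, fun _ => u, rfl, rfl, by omega⟩
  | @tail b z hab hbz ih =>
    obtain ⟨k, p, h0, hk, hstep⟩ := ih
    refine ⟨k + 1, fun j => if j ≤ k then p j else z, by simp [h0], by simp, ?_⟩
    intro j hj
    show r (if j ≤ k then p j else z) (if j + 1 ≤ k then p (j+1) else z)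
    by_cases hjk : j < k
    · rw [if_pos (by omega : j ≤ k), if_pos (by omega : j + 1 ≤ k)]
      exact hstep j hjk
    · have hjeq : j = k := by omega
      subst hjeq
      rw [if_pos le_rfl, if_neg (by omega : ¬ j + 1 ≤ j), hk]
      exact hbz

lemma rtg_to_list {S : Set (Pt d)} (h : Pt d → Pt d → ZMod 2)
    (h0 : ∀ p q, p ∈ S → q ∈ S → h p q = 0) {u v : Pt d}
    (hr : ReflTransGen (fun a b => nnAdj a b ∧ a ∈ S ∧ b ∈ S) u v) :
    ∃ l : List (Pt d), (∀ s ∈ l, unitS s) ∧ u + l.sum = v ∧ crossSum h u l = 0 := by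
  induction hr with
  | refl => exact ⟨[], by simp, by simp, rfl⟩
  | @tail b z hab hbz ih =>
    obtain ⟨l, hl, hsum, hcs⟩ := ih
    refine ⟨l ++ [z - b], ?_, ?_, ?_⟩
    · intro t ht
      rcases List.mem_append.mp ht with h1 | h1
      · exact hl t h1
      · rw [List.mem_singleton.mp h1]
        exact unitS_sub hbz.1
    · rw [List.sum_append, List.sum_singleton, ← add_assoc, hsum]
      abel
    · rw [crossSum_append, hcs, hsum, zero_add]
      show h b (b + (z - b)) + crossSum h (b + (z - b)) ([] : List (Pt d)) = 0
      have e : b + (z - b) = z := by abel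
      rw [e]
      show h b z + 0 = 0
      rw [h0 b z hbz.2.1 hbz.2.2, add_zero]

lemma first_exit (R : Set (Pt d)) (k : ℕ) (p : ℕ → Pt d) (h0 : p 0 ∈ R) (hk : p k ∉ R) :
    ∃ j < k, p j ∈ R ∧ p (j+1) ∉ R := by
  by_contra hcon
  push_neg at hcon
  have hall : ∀ j ≤ k, p j ∈ R := by
    intro j
    induction j with
    | zero => exact fun _ => h0
    | succ m ih =>
      intro hm
      by_contra hns
      exact hns (by
        by_contra hns2
        exact hns2 (by
          have hmk : m < k := by omega
          exact hcon m hmk (ih (by omega))))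
  exact hk (hall k le_rfl)

/-! ### The crossing function and the square identity -/

noncomputable def hfun (B X : Set (Pt d)) (p q : Pt d) : ZMod 2 :=
  letI := Classical.dec ((p ∈ B ∧ q ∉ B ∧ q ∈ X) ∨ (q ∈ B ∧ p ∉ B ∧ p ∈ X))
  if (p ∈ B ∧ q ∉ B ∧ q ∈ X) ∨ (q ∈ B ∧ p ∉ B ∧ p ∈ X) then 1 else 0

lemma hfun_comm (B X : Set (Pt d)) (p q : Pt d) : hfun B X p q = hfun B X q p := by
  unfold hfun
  by_cases h : (p ∈ B ∧ q ∉ B ∧ q ∈ X) ∨ (q ∈ B ∧ p ∉ B ∧ p ∈ X)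
  · rw [if_pos h, if_pos (Or.symm h)]
  · rw [if_neg h, if_neg (fun hh => h (Or.symm hh))]

lemma hfun_BB {B X : Set (Pt d)} {p q : Pt d} (hp : p ∈ B) (hq : q ∈ B) :
    hfun B X p q = 0 := by
  unfold hfun
  rw [if_neg]
  rintro (⟨_, h, _⟩ | ⟨_, h, _⟩)
  · exact h hq
  · exact h hp

lemma hfun_NN {B X : Set (Pt d)} {p q : Pt d} (hp : p ∉ B) (hq : q ∉ B) :
    hfun B X p q = 0 := by
  unfold hfun
  rw [if_neg]
  rintro (⟨h, _, _⟩ | ⟨h, _, _⟩)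
  · exact hp h
  · exact hq h

lemma hfun_BN_pos {B X : Set (Pt d)} {p q : Pt d} (hp : p ∈ B) (hq : q ∉ B) (hx : q ∈ X) :
    hfun B X p q = 1 := by
  unfold hfun
  exact if_pos (Or.inl ⟨hp, hq, hx⟩)

lemma hfun_BN_neg {B X : Set (Pt d)} {p q : Pt d} (hp : p ∈ B) (hq : q ∉ B) (hx : q ∉ X) :
    hfun B X p q = 0 := by
  unfold hfun
  rw [if_neg]
  rintro (⟨_, _, h⟩ | ⟨h, _, _⟩)
  · exact hx h
  · exact hq h

lemma hfun_NB_pos {B X : Set (Pt d)} {p q : Pt d} (hp : p ∉ B) (hq : q ∈ B) (hx : p ∈ X) :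
    hfun B X p q = 1 := by
  rw [hfun_comm]
  exact hfun_BN_pos hq hp hx

lemma hfun_NB_neg {B X : Set (Pt d)} {p q : Pt d} (hp : p ∉ B) (hq : q ∈ B) (hx : p ∉ X) :
    hfun B X p q = 0 := by
  rw [hfun_comm]
  exact hfun_BN_neg hq hp hx

lemma square (B E2 X : Set (Pt d))
    (hBE : ∀ p q : Pt d, p ∉ B → q ∈ B → nnAdj p q → p ∈ E2)
    (hXiff : ∀ p q : Pt d, p ∈ E2 → q ∈ E2 → (∀ i, (p i - q i).natAbs ≤ 1) → (p ∈ X ↔ q ∈ X)) :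
    ∀ (u a b : Pt d), unitS a → unitS b → (∀ i, a i = 0 ∨ b i = 0) →
      hfun B X u (u + a) + hfun B X (u + a) (u + a + b)
        = hfun B X u (u + b) + hfun B X (u + b) (u + a + b) := by
  intro u a b ha hb hd
  have ca := unit_coord ha
  have cb := unit_coord hb
  have nn01 : nnAdj u (u + a) := nnAdj_of_unit ha
  have nn12 : nnAdj (u + a) (u + a + b) := nnAdj_of_unit hb
  have nn03 : nnAdj u (u + b) := nnAdj_of_unit hb
  have nn32 : nnAdj (u + b) (u + a + b) := by
    have := nnAdj_of_unit (u := u + b) ha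
    rwa [add_right_comm] at this
  have close : ∀ p q : Pt d, (∀ i, (p i - q i).natAbs ≤ 1) →
      (∀ i, (p i - q i).natAbs ≤ 1) := fun _ _ h => h
  by_cases h0 : u ∈ B <;> by_cases h1 : (u + a) ∈ B <;>
    by_cases h2 : (u + a + b) ∈ B <;> by_cases h3 : (u + b) ∈ B
  -- 1111
  · rw [hfun_BB h0 h1, hfun_BB h1 h2, hfun_BB h0 h3, hfun_BB h3 h2]
  -- 1110
  · rw [hfun_BB h0 h1, hfun_BB h1 h2]
    have e3 : (u + b) ∈ E2 := hBE _ _ h3 h0 (nnAdj_symm nn03)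
    by_cases hx3 : (u + b) ∈ X
    · rw [hfun_BN_pos h0 h3 hx3, hfun_NB_pos h3 h2 hx3]; decide
    · rw [hfun_BN_neg h0 h3 hx3, hfun_NB_neg h3 h2 hx3]
  -- 1101
  · rw [hfun_BB h0 h1, hfun_BB h0 h3]
    by_cases hx2 : (u + a + b) ∈ X
    · rw [hfun_BN_pos h1 h2 hx2, hfun_BN_pos h3 h2 hx2]
    · rw [hfun_BN_neg h1 h2 hx2, hfun_BN_neg h3 h2 hx2]
  -- 1100
  · rw [hfun_BB h0 h1, hfun_NN h3 h2]
    have e2 : (u + a + b) ∈ E2 := hBE _ _ h2 h1 (nnAdj_symm nn12)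
    have e3 : (u + b) ∈ E2 := hBE _ _ h3 h0 (nnAdj_symm nn03)
    have hiff := hXiff _ _ e2 e3 (fun i => by
      have v1 := ca i; have v2 := cb i; have v3 := hd i
      simp only [Pi.add_apply]; omega)
    by_cases hx2 : (u + a + b) ∈ X
    · rw [hfun_BN_pos h1 h2 hx2, hfun_BN_pos h0 h3 (hiff.mp hx2)]; decide
    · rw [hfun_BN_neg h1 h2 hx2, hfun_BN_neg h0 h3 (fun hh => hx2 (hiff.mpr hh))]
  -- 1011
  · rw [hfun_BB h3 h2, hfun_BB h0 h3]
    have e1 : (u + a) ∈ E2 := hBE _ _ h1 h0 (nnAdj_symm nn01)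
    by_cases hx1 : (u + a) ∈ X
    · rw [hfun_BN_pos h0 h1 hx1, hfun_NB_pos h1 h2 hx1]; decide
    · rw [hfun_BN_neg h0 h1 hx1, hfun_NB_neg h1 h2 hx1]
  -- 1010
  · have e1 : (u + a) ∈ E2 := hBE _ _ h1 h0 (nnAdj_symm nn01)
    have e3 : (u + b) ∈ E2 := hBE _ _ h3 h0 (nnAdj_symm nn03)
    by_cases hx1 : (u + a) ∈ X <;> by_cases hx3 : (u + b) ∈ X
    · rw [hfun_BN_pos h0 h1 hx1, hfun_NB_pos h1 h2 hx1,
        hfun_BN_pos h0 h3 hx3, hfun_NB_pos h3 h2 hx3]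
    · rw [hfun_BN_pos h0 h1 hx1, hfun_NB_pos h1 h2 hx1,
        hfun_BN_neg h0 h3 hx3, hfun_NB_neg h3 h2 hx3]; decide
    · rw [hfun_BN_neg h0 h1 hx1, hfun_NB_neg h1 h2 hx1,
        hfun_BN_pos h0 h3 hx3, hfun_NB_pos h3 h2 hx3]; decide
    · rw [hfun_BN_neg h0 h1 hx1, hfun_NB_neg h1 h2 hx1,
        hfun_BN_neg h0 h3 hx3, hfun_NB_neg h3 h2 hx3]
  -- 1001
  · rw [hfun_NN h1 h2, hfun_BB h0 h3]
    have e1 : (u + a) ∈ E2 := hBE _ _ h1 h0 (nnAdj_symm nn01)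
    have e2 : (u + a + b) ∈ E2 := hBE _ _ h2 h3 (nnAdj_symm nn32)
    have hiff := hXiff _ _ e1 e2 (fun i => by
      have v1 := ca i; have v2 := cb i; have v3 := hd i
      simp only [Pi.add_apply]; omega)
    by_cases hx1 : (u + a) ∈ X
    · rw [hfun_BN_pos h0 h1 hx1, hfun_BN_pos h3 h2 (hiff.mp hx1)]; decide
    · rw [hfun_BN_neg h0 h1 hx1, hfun_BN_neg h3 h2 (fun hh => hx1 (hiff.mpr hh))]
  -- 1000
  · rw [hfun_NN h1 h2, hfun_NN h3 h2]
    have e1 : (u + a) ∈ E2 := hBE _ _ h1 h0 (nnAdj_symm nn01)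
    have e3 : (u + b) ∈ E2 := hBE _ _ h3 h0 (nnAdj_symm nn03)
    have hiff := hXiff _ _ e1 e3 (fun i => by
      have v1 := ca i; have v2 := cb i; have v3 := hd i
      simp only [Pi.add_apply]; omega)
    by_cases hx1 : (u + a) ∈ X
    · rw [hfun_BN_pos h0 h1 hx1, hfun_BN_pos h0 h3 (hiff.mp hx1)]
    · rw [hfun_BN_neg h0 h1 hx1, hfun_BN_neg h0 h3 (fun hh => hx1 (hiff.mpr hh))]
  -- 0111
  · rw [hfun_BB h1 h2, hfun_BB h3 h2]
    have e0 : u ∈ E2 := hBE _ _ h0 h1 nn01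
    by_cases hx0 : u ∈ X
    · rw [hfun_NB_pos h0 h1 hx0, hfun_NB_pos h0 h3 hx0]
    · rw [hfun_NB_neg h0 h1 hx0, hfun_NB_neg h0 h3 hx0]
  -- 0110
  · rw [hfun_BB h1 h2, hfun_NN h0 h3]
    have e0 : u ∈ E2 := hBE _ _ h0 h1 nn01
    have e3 : (u + b) ∈ E2 := hBE _ _ h3 h2 nn32
    have hiff := hXiff _ _ e0 e3 (fun i => by
      have v1 := ca i; have v2 := cb i; have v3 := hd i
      simp only [Pi.add_apply]; omega)
    by_cases hx0 : u ∈ X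
    · rw [hfun_NB_pos h0 h1 hx0, hfun_NB_pos h3 h2 (hiff.mp hx0)]; decide
    · rw [hfun_NB_neg h0 h1 hx0, hfun_NB_neg h3 h2 (fun hh => hx0 (hiff.mpr hh))]
  -- 0101
  · have e0 : u ∈ E2 := hBE _ _ h0 h1 nn01
    have e2 : (u + a + b) ∈ E2 := hBE _ _ h2 h1 (nnAdj_symm nn12)
    by_cases hx0 : u ∈ X <;> by_cases hx2 : (u + a + b) ∈ X
    · rw [hfun_NB_pos h0 h1 hx0, hfun_BN_pos h1 h2 hx2,
        hfun_NB_pos h0 h3 hx0, hfun_BN_pos h3 h2 hx2]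
    · rw [hfun_NB_pos h0 h1 hx0, hfun_BN_neg h1 h2 hx2,
        hfun_NB_pos h0 h3 hx0, hfun_BN_neg h3 h2 hx2]
    · rw [hfun_NB_neg h0 h1 hx0, hfun_BN_pos h1 h2 hx2,
        hfun_NB_neg h0 h3 hx0, hfun_BN_pos h3 h2 hx2]
    · rw [hfun_NB_neg h0 h1 hx0, hfun_BN_neg h1 h2 hx2,
        hfun_NB_neg h0 h3 hx0, hfun_BN_neg h3 h2 hx2]
  -- 0100
  · rw [hfun_NN h3 h2]
    have e0 : u ∈ E2 := hBE _ _ h0 h1 nn01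
    have e2 : (u + a + b) ∈ E2 := hBE _ _ h2 h1 (nnAdj_symm nn12)
    have hiff := hXiff _ _ e0 e2 (fun i => by
      have v1 := ca i; have v2 := cb i; have v3 := hd i
      simp only [Pi.add_apply]; omega)
    rw [hfun_NN h0 h3]
    by_cases hx0 : u ∈ X
    · rw [hfun_NB_pos h0 h1 hx0, hfun_BN_pos h1 h2 (hiff.mp hx0)]; decide
    · rw [hfun_NB_neg h0 h1 hx0, hfun_BN_neg h1 h2 (fun hh => hx0 (hiff.mpr hh))]
  -- 0011
  · rw [hfun_NN h0 h1, hfun_BB h3 h2]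
    have e1 : (u + a) ∈ E2 := hBE _ _ h1 h2 nn12
    have e0 : u ∈ E2 := hBE _ _ h0 h3 nn03
    have hiff := hXiff _ _ e0 e1 (fun i => by
      have v1 := ca i; have v2 := cb i; have v3 := hd i
      simp only [Pi.add_apply]; omega)
    by_cases hx0 : u ∈ X
    · rw [hfun_NB_pos h1 h2 (hiff.mp hx0), hfun_NB_pos h0 h3 hx0]; decide
    · rw [hfun_NB_neg h1 h2 (fun hh => hx0 (hiff.mpr hh)), hfun_NB_neg h0 h3 hx0]
  -- 0010
  · rw [hfun_NN h0 h1, hfun_NN h0 h3]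
    have e1 : (u + a) ∈ E2 := hBE _ _ h1 h2 nn12
    have e3 : (u + b) ∈ E2 := hBE _ _ h3 h2 nn32
    have hiff := hXiff _ _ e1 e3 (fun i => by
      have v1 := ca i; have v2 := cb i; have v3 := hd i
      simp only [Pi.add_apply]; omega)
    by_cases hx1 : (u + a) ∈ X
    · rw [hfun_NB_pos h1 h2 hx1, hfun_NB_pos h3 h2 (hiff.mp hx1)]
    · rw [hfun_NB_neg h1 h2 hx1, hfun_NB_neg h3 h2 (fun hh => hx1 (hiff.mpr hh))]
  -- 0001
  · rw [hfun_NN h0 h1, hfun_NN h1 h2]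
    have e0 : u ∈ E2 := hBE _ _ h0 h3 nn03
    have e2 : (u + a + b) ∈ E2 := hBE _ _ h2 h3 (nnAdj_symm nn32)
    have hiff := hXiff _ _ e0 e2 (fun i => by
      have v1 := ca i; have v2 := cb i; have v3 := hd i
      simp only [Pi.add_apply]; omega)
    by_cases hx0 : u ∈ X
    · rw [hfun_NB_pos h0 h3 hx0, hfun_BN_pos h3 h2 (hiff.mp hx0)]; decide
    · rw [hfun_NB_neg h0 h3 hx0, hfun_BN_neg h3 h2 (fun hh => hx0 (hiff.mpr hh))]
  -- 0000
  · rw [hfun_NN h0 h1, hfun_NN h1 h2, hfun_NN h0 h3, hfun_NN h3 h2]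

/-! ### The construction -/

def E1 (C E : Set (Pt d)) : Set (Pt d) := {e | e ∈ E ∧ ∃ a ∈ reach C E, nnAdj a e}

def Bset (C D E : Set (Pt d)) : Set (Pt d) := reach D (E1 C E)

def E2 (C D E : Set (Pt d)) : Set (Pt d) := {e | e ∈ E1 C E ∧ ∃ b ∈ Bset C D E, nnAdj b e}

variable {C D E : Set (Pt d)}

lemma no_path_avoiding {F : Set (Pt d)} (hsepF : separates F C D) (hCF : Disjoint C F)
    {c z : Pt d} (hc : c ∈ C) (hz : z ∈ D) (hp : ReflTransGen (relAvoid F) c z) : False := by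
  obtain ⟨k, p, h0, hk, hstep⟩ := rtg_to_path hp
  obtain ⟨j, hjk, hjF⟩ := hsepF k p (h0 ▸ hc) (hk ▸ hz) (fun j hj => (hstep j hj).1)
  have : p j ∉ F := by
    cases j with
    | zero => rw [h0]; exact fun h => Set.disjoint_left.mp hCF hc h
    | succ m => exact (hstep m (by omega)).2.2
  exact this hjF

lemma D_disj_A (hsep : separates E C D) (hCE : Disjoint C E) :
    ∀ z ∈ D, z ∉ reach C E := by
  rintro z hz ⟨c, hc, hp⟩
  exact no_path_avoiding hsep hCE hc hz hp

lemma sep1 (hsep : separates E C D) (hCE : Disjoint C E) : separates (E1 C E) C D := by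
  intro k p h0 hk hadj
  have hk' : p k ∉ reach C E := D_disj_A hsep hCE _ hk
  obtain ⟨j, hj, hjA, hjA'⟩ := first_exit (reach C E) k p (self_subset_reach C E h0) hk'
  by_cases hE : p (j+1) ∈ E
  · exact ⟨j+1, by omega, hE, ⟨p j, hjA, hadj j hj⟩⟩
  · exact absurd (reach_closed hCE hjA (hadj j hj) hE) hjA'

lemma C_disj_E1 (hCE : Disjoint C E) : Disjoint C (E1 C E) :=
  Set.disjoint_left.mpr fun _ ha he => Set.disjoint_left.mp hCE ha he.1

lemma D_disj_E1 (hDE : Disjoint D E) : Disjoint D (E1 C E) :=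
  Set.disjoint_left.mpr fun _ ha he => Set.disjoint_left.mp hDE ha he.1

lemma C_disj_B (hsep : separates E C D) (hCE : Disjoint C E) :
    ∀ z ∈ C, z ∉ Bset C D E := by
  rintro z hz ⟨dd, hdd, hp⟩
  have hp' : ReflTransGen (relAvoid (E1 C E)) z dd :=
    (@ReflTransGen.symmetric _ _ ⟨fun _ _ h => relAvoid_symm _ h⟩).symm _ _ hp
  exact no_path_avoiding (sep1 hsep hCE) (C_disj_E1 hCE) hz hdd hp'

lemma A_disj_B (hsep : separates E C D) (hCE : Disjoint C E) :
    ∀ z ∈ reach C E, z ∉ Bset C D E := by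
  rintro z ⟨c, hc, hpc⟩ ⟨dd, hdd, hpd⟩
  have h1 : ReflTransGen (relAvoid (E1 C E)) c z := ReflTransGen.mono (fun a b hab =>
    ⟨hab.1, fun h => hab.2.1 h.1, fun h => hab.2.2 h.1⟩) _ _ hpc
  have h2 : ReflTransGen (relAvoid (E1 C E)) z dd :=
    (@ReflTransGen.symmetric _ _ ⟨fun _ _ h => relAvoid_symm _ h⟩).symm _ _ hpd
  exact no_path_avoiding (sep1 hsep hCE) (C_disj_E1 hCE) hc hdd (h1.trans h2)

lemma B_disj_E1 (hDE : Disjoint D E) : ∀ z ∈ Bset C D E, z ∉ E1 C E :=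
  fun _ hz => reach_avoid (D_disj_E1 hDE) hz

lemma sep2 (hsep : separates E C D) (hCE : Disjoint C E) (hDE : Disjoint D E) :
    separates (E2 C D E) C D := by
  intro k p h0 hk hadj
  let q : ℕ → Pt d := fun j => p (k - j)
  have hq0 : q 0 ∈ Bset C D E := by
    show p (k - 0) ∈ _
    rw [Nat.sub_zero]
    exact self_subset_reach _ _ hk
  have hqk : q k ∉ Bset C D E := by
    show p (k - k) ∉ _
    rw [Nat.sub_self]
    exact C_disj_B hsep hCE _ h0
  have hqadj : ∀ j < k, nnAdj (q j) (q (j+1)) := by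
    intro j hj
    show nnAdj (p (k - j)) (p (k - (j+1)))
    have e1 : k - j = (k - (j+1)) + 1 := by omega
    rw [e1]
    exact nnAdj_symm (hadj (k - (j+1)) (by omega))
  obtain ⟨j, hj, hjB, hjB'⟩ := first_exit (Bset C D E) k q hq0 hqk
  by_cases hE : q (j+1) ∈ E1 C E
  · exact ⟨k - (j+1), by omega, hE, ⟨q j, hjB, hqadj j hj⟩⟩
  · exact absurd (reach_closed (D_disj_E1 hDE) hjB (hqadj j hj) hE) hjB'

lemma lconn (hCconn : connSet C) (hDconn : connSet D) (hsep : separates E C D)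
    (hCE : Disjoint C E) (hDE : Disjoint D E) :
    lConnSet (E2 C D E) := by
  intro x hx y hy
  obtain ⟨hx1, b, hbB, hbx⟩ := hx
  obtain ⟨a, haA, hax⟩ := hx1.2
  obtain ⟨hy1, b', hbB', hby⟩ := hy
  obtain ⟨a', haA', hay⟩ := hy1.2
  set X : Set (Pt d) :=
    {z | ReflTransGen (fun u v => lAdj u v ∧ u ∈ E2 C D E ∧ v ∈ E2 C D E) x z} with hXdef
  have hBE : ∀ p q : Pt d, p ∉ Bset C D E → q ∈ Bset C D E → nnAdj p q → p ∈ E2 C D E := by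
    intro p q hp hq hadj
    by_cases hE : p ∈ E1 C E
    · exact ⟨hE, q, hq, nnAdj_symm hadj⟩
    · exact absurd (reach_closed (D_disj_E1 hDE) hq (nnAdj_symm hadj) hE) hp
  have hXiff : ∀ p q : Pt d, p ∈ E2 C D E → q ∈ E2 C D E →
      (∀ i, (p i - q i).natAbs ≤ 1) → (p ∈ X ↔ q ∈ X) := by
    intro p q hp hq hcl
    by_cases hpq : p = q
    · rw [hpq]
    · constructor
      · intro hh; exact hh.tail ⟨⟨hpq, hcl⟩, hp, hq⟩
      · intro hh
        exact hh.tail ⟨⟨fun he => hpq he.symm, fun i => by have := hcl i; omega⟩, hq, hp⟩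
  have hsymm : ∀ u v, hfun (Bset C D E) X u v = hfun (Bset C D E) X v u := hfun_comm _ _
  have hsq := square (Bset C D E) (E2 C D E) X hBE hXiff
  have hAB := A_disj_B hsep hCE
  have hAc := reach_conn (F := E) hCconn haA haA'
  have hBc := reach_conn (F := E1 C E) hDconn hbB' hbB
  obtain ⟨lA, hlAu, hlAsum, hlAcs⟩ := rtg_to_list (hfun (Bset C D E) X)
    (fun p q hp hq => hfun_NN (hAB p hp) (hAB q hq)) hAc
  obtain ⟨lB, hlBu, hlBsum, hlBcs⟩ := rtg_to_list (hfun (Bset C D E) X)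
    (fun p q hp hq => hfun_BB hp hq) hBc
  have hxB : x ∉ Bset C D E := fun hc => B_disj_E1 hDE x hc hx1
  have hyB : y ∉ Bset C D E := fun hc => B_disj_E1 hDE y hc hy1
  set L : List (Pt d) := (x - b) :: (a - x) :: (lA ++ (y - a') :: (b' - y) :: lB) with hLdef
  have hLu : ∀ s ∈ L, unitS s := by
    intro s hs
    rw [hLdef] at hs
    rcases List.mem_cons.mp hs with rfl | hs
    · exact unitS_sub hbx
    rcases List.mem_cons.mp hs with rfl | hs
    · exact unitS_sub (nnAdj_symm hax)
    rcases List.mem_append.mp hs with hs | hs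
    · exact hlAu s hs
    rcases List.mem_cons.mp hs with rfl | hs
    · exact unitS_sub hay
    rcases List.mem_cons.mp hs with rfl | hs
    · exact unitS_sub (nnAdj_symm hby)
    · exact hlBu s hs
  have eA : lA.sum = a' - a := by rw [← hlAsum]; abel
  have eB : lB.sum = b - b' := by rw [← hlBsum]; abel
  have hLsum : L.sum = 0 := by
    rw [hLdef]
    simp only [List.sum_cons, List.sum_append, eA, eB]
    abel
  have hcs : crossSum (hfun (Bset C D E) X) b L = 0 :=
    word (hfun (Bset C D E) X) hsymm hsq L.length L b le_rfl hLu hLsum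
  have step : crossSum (hfun (Bset C D E) X) b L
      = hfun (Bset C D E) X b x + (hfun (Bset C D E) X x a +
        crossSum (hfun (Bset C D E) X) a (lA ++ (y - a') :: (b' - y) :: lB)) := by
    rw [hLdef]
    show hfun (Bset C D E) X b (b + (x - b)) + (hfun (Bset C D E) X (b + (x - b))
        (b + (x - b) + (a - x)) + crossSum (hfun (Bset C D E) X)
        (b + (x - b) + (a - x)) (lA ++ (y - a') :: (b' - y) :: lB)) = _
    rw [show b + (x - b) = x from by abel]
    rw [show x + (a - x) = a from by abel]
  have step2 : crossSum (hfun (Bset C D E) X) a (lA ++ (y - a') :: (b' - y) :: lB)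
      = crossSum (hfun (Bset C D E) X) a lA + (hfun (Bset C D E) X a' y +
        (hfun (Bset C D E) X y b' + crossSum (hfun (Bset C D E) X) b' lB)) := by
    rw [crossSum_append, hlAsum]
    show _ + (hfun (Bset C D E) X a' (a' + (y - a')) + (hfun (Bset C D E) X (a' + (y - a'))
        (a' + (y - a') + (b' - y)) + crossSum (hfun (Bset C D E) X)
        (a' + (y - a') + (b' - y)) lB)) = _
    rw [show a' + (y - a') = y from by abel]
    rw [show y + (b' - y) = b' from by abel]
  rw [step, step2, hlAcs, hlBcs] at hcs
  rw [hfun_NN hxB (hAB a haA), hfun_NN (hAB a' haA') hyB] at hcs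
  rw [hfun_BN_pos hbB hxB (show x ∈ X from ReflTransGen.refl)] at hcs
  by_cases hyX : y ∈ X
  · exact hyX
  · rw [hfun_NB_neg hyB hbB' hyX] at hcs
    simp at hcs

end Stmt5Aux

/-- second assertion of Lemma lemmbul. If `C, D, E ⊆ ℤ^d` with `C`
and `D` connected in the nearest-neighbour graph, the three sets pairwise disjoint, and
`E` separating `C` from `D`, then some `ℒ`-connected subset of `E` also separates
`C` and `D`. -/
theorem stmt5 (d : ℕ) (hd : 2 ≤ d) (C D E : Set (Pt d))
    (hCconn : connSet C) (hDconn : connSet D)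
    (hCD : Disjoint C D) (hCE : Disjoint C E) (hDE : Disjoint D E)
    (hsep : separates E C D) :
    ∃ E' ⊆ E, lConnSet E' ∧ separates E' C D := by
  exact ⟨Stmt5Aux.E2 C D E, fun _ he => he.1.1,
    Stmt5Aux.lconn hCconn hDconn hsep hCE hDE,
    Stmt5Aux.sep2 hsep hCE hDE⟩
end

section
/- If C ⊆ Z^d is finite and connected in the l∞-adjacency graph L, then its exterior boundary ∂_ext(C) — the set of sites v ∉ C that are L-adjacent to some w ∈ C and from which there is a nearest-neighbour path to infinity disjoint from C — is connected in the nearest-neighbour graph on Z^d. -/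
open MeasureTheory ProbabilityTheory Filter

namespace S6
open Classical
attribute [local instance] Classical.propDecidable
variable {d : ℕ}

noncomputable section

/-- unit vector -/
def ee (i : Fin d) : Pt d := fun j => if j = i then 1 else 0

lemma zm2 : ∀ a : ZMod 2, a + a = 0 := by decide
lemma zm2' : ∀ a b : ZMod 2, a + b = 0 → a = b := by decide
lemma zm2'' : ∀ a b c : ZMod 2, a + b = c → a = c + b := by decide

lemma nnAdj_symm {x y : Pt d} (h : nnAdj x y) : nnAdj y x := by
  unfold nnAdj at h ⊢
  have e : ∀ i, (y i - x i).natAbs = (x i - y i).natAbs := fun i => by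
    rw [← Int.natAbs_neg, neg_sub]
  simp only [e]; exact h

lemma nnAdj_iff {x y : Pt d} :
    nnAdj x y ↔ ∃ i, (x i - y i).natAbs = 1 ∧ ∀ j, j ≠ i → x j = y j := by
  constructor
  · intro h
    unfold nnAdj at h
    have hne : ∃ i, (x i - y i).natAbs ≠ 0 := by
      by_contra hc
      push_neg at hc
      simp only [Finset.sum_eq_zero (fun i _ => hc i)] at h
      exact one_ne_zero h.symm
    obtain ⟨i, hi⟩ := hne
    rw [← Finset.sum_erase_add _ _ (Finset.mem_univ i)] at h
    have hsplit : (x i - y i).natAbs + ∑ j ∈ Finset.univ.erase i, (x j - y j).natAbs = 1 := by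
      omega
    have h1 : (x i - y i).natAbs = 1 := by omega
    have h0 : ∑ j ∈ Finset.univ.erase i, (x j - y j).natAbs = 0 := by omega
    refine ⟨i, h1, fun j hj => ?_⟩
    have := Finset.sum_eq_zero_iff.mp h0 j (Finset.mem_erase.mpr ⟨hj, Finset.mem_univ j⟩)
    have : x j - y j = 0 := Int.natAbs_eq_zero.mp this
    linarith
  · rintro ⟨i, h1, h0⟩
    unfold nnAdj
    rw [Finset.sum_eq_single i]
    · exact h1
    · intro j _ hj; simp [sub_eq_zero.mpr (h0 j hj)]
    · intro hc; exact absurd (Finset.mem_univ i) hc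

lemma nnAdj_lAdj {x y : Pt d} (h : nnAdj x y) : lAdj x y := by
  obtain ⟨i, h1, h0⟩ := nnAdj_iff.mp h
  constructor
  · intro hc; rw [hc] at h1; simp at h1
  · intro j
    by_cases hj : j = i
    · subst hj; omega
    · rw [sub_eq_zero.mpr (h0 j hj)]; simp

lemma nnAdj_add_ee (x : Pt d) (i : Fin d) : nnAdj x (x + ee i) := by
  rw [nnAdj_iff]
  refine ⟨i, ?_, fun j hj => ?_⟩
  · simp [ee]
  · simp [ee, hj]

lemma nnAdj_cases {x y : Pt d} (h : nnAdj x y) : ∃ i, y = x + ee i ∨ x = y + ee i := by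
  obtain ⟨i, h1, h0⟩ := nnAdj_iff.mp h
  refine ⟨i, ?_⟩
  rcases Int.natAbs_eq_iff.mp h1 with hc | hc
  · right; funext j
    by_cases hj : j = i
    · subst hj; simp [ee]; push_cast at hc; linarith
    · simp [ee, hj, (h0 j hj).symm]
  · left; funext j
    by_cases hj : j = i
    · subst hj; simp [ee]; push_cast at hc; linarith
    · simp [ee, hj, h0 j hj]


/-- one nn step avoiding C -/
def estep (C : Set (Pt d)) (a b : Pt d) : Prop := nnAdj a b ∧ a ∉ C ∧ b ∉ C
def Reach (C : Set (Pt d)) : Pt d → Pt d → Prop := Relation.ReflTransGen (estep C)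
/-- v can reach arbitrarily far avoiding C -/
def Vis (C : Set (Pt d)) (v : Pt d) : Prop :=
  v ∉ C ∧ ∀ F : Set (Pt d), F.Finite → ∃ w, w ∉ F ∧ Reach C v w
def AV (C : Set (Pt d)) : Set (Pt d) := {v | (∃ w ∈ C, lAdj v w) ∧ Vis C v}
def astep (C : Set (Pt d)) (a b : Pt d) : Prop := nnAdj a b ∧ a ∈ AV C ∧ b ∈ AV C
def rA (C : Set (Pt d)) : Pt d → Pt d → Prop := Relation.ReflTransGen (astep C)

variable {C : Set (Pt d)}

lemma estep_symm : Symmetric (estep C) := fun _ _ h => ⟨nnAdj_symm h.1, h.2.2, h.2.1⟩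
lemma reach_symm : Symmetric (Reach C) := fun a b h => (@Relation.ReflTransGen.symmetric _ _ ⟨fun a b h => estep_symm h⟩).symm a b h
lemma astep_symm : Symmetric (astep C) := fun _ _ h => ⟨nnAdj_symm h.1, h.2.2, h.2.1⟩
lemma rA_symm : Symmetric (rA C) := fun a b h => (@Relation.ReflTransGen.symmetric _ _ ⟨fun a b h => astep_symm h⟩).symm a b h

lemma reach_notMem {a b : Pt d} (h : Reach C a b) (ha : a ∉ C) : b ∉ C := by
  induction h with
  | refl => exact ha
  | tail _ hstep _ => exact hstep.2.2

lemma vis_of_reach {a b : Pt d} (hv : Vis C a) (h : Reach C a b) : Vis C b := by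
  refine ⟨reach_notMem h hv.1, fun F hF => ?_⟩
  obtain ⟨w, hw, hr⟩ := hv.2 F hF
  exact ⟨w, hw, (reach_symm h).trans hr⟩

lemma rA_of_reach_u0 {u₀ a b : Pt d} (h : rA C a b) (ha : rA C a u₀) : rA C b u₀ :=
  (rA_symm h).trans ha

/-- radius bound for a finite C -/
lemma exists_radius (hfin : C.Finite) : ∃ R : ℤ, 0 < R ∧ ∀ c ∈ C, ∀ i, |c i| < R := by
  classical
  obtain ⟨B, hB⟩ : ∃ B : ℕ, B = hfin.toFinset.sup (fun c => Finset.univ.sup fun i => (c i).natAbs) :=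
    ⟨_, rfl⟩
  refine ⟨(B : ℤ) + 1, by positivity, ?_⟩
  intro c hc i
  have h1 : (c i).natAbs ≤ Finset.univ.sup fun i => (c i).natAbs :=
    Finset.le_sup (f := fun i => (c i).natAbs) (Finset.mem_univ i)
  have h2 : (Finset.univ.sup fun i => (c i).natAbs) ≤ B := by
    rw [hB]
    exact Finset.le_sup (f := fun c => Finset.univ.sup fun i => (c i).natAbs) (hfin.mem_toFinset.mpr hc)
  clear hB
  have habs : |c i| = ((c i).natAbs : ℤ) := by
    rcases abs_cases (c i) with ⟨h3, h4⟩ | ⟨h3, h4⟩ <;> omega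
  omega

/-- move one coordinate freely if all its values stay out of C -/
lemma reach_update (a : Pt d) (i : Fin d)
    (hall : ∀ w : ℤ, Function.update a i w ∉ C) (v : ℤ) :
    Reach C a (Function.update a i v) := by
  have key : ∀ t : ℤ, Reach C a (Function.update a i (a i + t)) := by
    have step : ∀ (s s' : ℤ), (s - s').natAbs = 1 →
        estep C (Function.update a i (a i + s)) (Function.update a i (a i + s')) := by
      intro s s' hss
      refine ⟨?_, hall _, hall _⟩
      rw [nnAdj_iff]
      refine ⟨i, ?_, fun j hj => ?_⟩
      · simpa using hss
      · simp [Function.update_of_ne hj]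
    intro t
    induction t using Int.induction_on with
    | zero => simp; exact Relation.ReflTransGen.refl
    | succ k ih => exact ih.tail (step _ _ (by omega))
    | pred k ih => exact ih.tail (step _ _ (by omega))
  have := key (v - a i)
  simpa using this

lemma far_notMem {R : ℤ} (hR : ∀ c ∈ C, ∀ i, |c i| < R) {x : Pt d} {k : Fin d}
    (h : R < |x k|) : x ∉ C := fun hc => absurd (hR x hc k) (by omega)

/-- any far point reaches the canonical far point (all coords R+1) -/
lemma reach_far_const (hd : 2 ≤ d) {R : ℤ} (hR : 0 < R) (hRC : ∀ c ∈ C, ∀ i, |c i| < R)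
    {a : Pt d} {k : Fin d} (hk : R < |a k|) :
    Reach C a (fun _ => R + 1) := by
  classical
  have stage : ∀ s : Finset (Fin d), k ∉ s →
      Reach C a (fun j => if j ∈ s then R + 1 else a j) := by
    intro s
    induction s using Finset.induction_on with
    | empty => intro _; simp; exact Relation.ReflTransGen.refl
    | @insert b s hb ih =>
      intro hks
      have hkb : k ≠ b := fun hc => hks (by rw [hc]; exact Finset.mem_insert_self b s)
      have hks' : k ∉ s := fun hc => hks (Finset.mem_insert_of_mem hc)
      have heq : (fun j => if j ∈ insert b s then R + 1 else a j)
          = Function.update (fun j => if j ∈ s then R + 1 else a j) b (R + 1) := by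
        funext m
        by_cases hm : m = b
        · subst hm; simp
        · rw [Function.update_of_ne hm]
          simp [Finset.mem_insert, hm]
      rw [heq]
      refine (ih hks').trans (reach_update _ b ?_ (R+1))
      intro w
      apply far_notMem hRC (k := k)
      rw [Function.update_of_ne hkb]
      simp only [hks', if_neg]
      exact hk
  have h1 := stage (Finset.univ.erase k) (Finset.notMem_erase k _)
  have heq2 : (fun _ => R + 1 : Pt d)
      = Function.update (fun j => if j ∈ Finset.univ.erase k then R + 1 else a j) k (R + 1) := by
    funext m
    by_cases hm : m = k
    · subst hm; simp
    · rw [Function.update_of_ne hm]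
      simp [Finset.mem_erase, hm]
  rw [heq2]
  refine h1.trans (reach_update _ k ?_ (R+1))
  have : Nontrivial (Fin d) := Fin.nontrivial_iff_two_le.mpr hd
  obtain ⟨j₀, hj₀⟩ := exists_ne k
  intro w
  apply far_notMem hRC (k := j₀)
  rw [Function.update_of_ne hj₀]
  simp only [Finset.mem_erase]
  rw [if_pos ⟨hj₀, Finset.mem_univ j₀⟩]
  have : |R + 1| = R + 1 := abs_of_pos (by omega)
  omega

/-- the finite box of radius R -/
lemma box_finite (R : ℤ) : ({x : Pt d | ∀ i, |x i| ≤ R}).Finite := by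
  have : ({x : Pt d | ∀ i, |x i| ≤ R}) ⊆ Set.pi Set.univ (fun _ => Set.Icc (-R) R) := by
    intro x hx
    intro i _
    simp only [Set.mem_Icc]
    have := hx i
    constructor <;> [linarith [abs_nonneg (x i), neg_abs_le (x i)]; linarith [le_abs_self (x i)]]
  exact Set.Finite.subset (Set.Finite.pi (fun _ => Set.finite_Icc _ _)) this

lemma vis_reach_far (hv : Vis C v) (R : ℤ) : ∃ w : Pt d, (∃ k, R < |w k|) ∧ Reach C v w := by
  obtain ⟨w, hw, hr⟩ := hv.2 {x : Pt d | ∀ i, |x i| ≤ R} (box_finite R)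
  simp only [Set.mem_setOf_eq, not_forall] at hw
  obtain ⟨k, hk⟩ := hw
  exact ⟨w, ⟨k, by omega⟩, hr⟩

/-- two visible points are connected avoiding C -/
lemma vis_connect (hd : 2 ≤ d) (hfin : C.Finite) {u v : Pt d}
    (hu : Vis C u) (hv : Vis C v) : Reach C u v := by
  obtain ⟨R, hR, hRC⟩ := exists_radius hfin
  obtain ⟨w1, ⟨k1, hk1⟩, hr1⟩ := vis_reach_far hu R
  obtain ⟨w2, ⟨k2, hk2⟩, hr2⟩ := vis_reach_far hv R
  have h1 := hr1.trans (reach_far_const hd hR hRC hk1)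
  have h2 := hr2.trans (reach_far_const hd hR hRC hk2)
  exact h1.trans (reach_symm h2)


lemma reach_walk {a b : Pt d} (hab : Reach C a b) (ha : a ∉ C) :
    ∃ n, ∃ q : ℕ → Pt d, q 0 = a ∧ q n = b ∧ (∀ j, j < n → nnAdj (q j) (q (j+1))) ∧
      (∀ j, q j ∉ C) := by
  induction hab with
  | refl => exact ⟨0, fun _ => a, rfl, rfl, fun j hj => absurd hj (by omega), fun _ => ha⟩
  | @tail b c hr hstep ih =>
    obtain ⟨n, q, h0, hn, hadj, hout⟩ := ih
    refine ⟨n+1, fun m => if m ≤ n then q m else c, by simp [h0], by simp, ?_, ?_⟩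
    · intro j hj
      by_cases h1 : j + 1 ≤ n
      · simp only [if_pos (by omega : j ≤ n), if_pos h1]
        exact hadj j (by omega)
      · have hjn : j = n := by omega
        subst hjn
        simp only [if_pos (le_refl j), if_neg h1, hn]
        exact hstep.1
    · intro j
      by_cases h1 : j ≤ n
      · simp only [if_pos h1]; exact hout j
      · simp only [if_neg h1]; exact hstep.2.2

lemma vis_ray (hfin : C.Finite) {v : Pt d} (hv : Vis C v) :
    ∃ p : ℕ → Pt d, p 0 = v ∧ Function.Injective p ∧
      (∀ n, nnAdj (p n) (p (n+1))) ∧ ∀ n, p n ∉ C := by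
  classical
  obtain ⟨R, hR, hRC⟩ := exists_radius hfin
  obtain ⟨w, ⟨k, hk⟩, hr⟩ := vis_reach_far hv R
  obtain ⟨n, q, hq0, hqn, hqadj, hqout⟩ := reach_walk hr hv.1
  obtain ⟨σ, hσ1, hσ2⟩ : ∃ σ : ℤ, σ.natAbs = 1 ∧ ∀ t : ℤ, 0 ≤ t → |w k + σ * t| = |w k| + t := by
    rcases le_or_gt 0 (w k) with h | h
    · exact ⟨1, by simp, fun t ht => by rw [abs_of_nonneg (by omega), abs_of_nonneg h]; ring⟩
    · refine ⟨-1, by simp, fun t ht => ?_⟩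
      rw [abs_of_nonpos (by omega), abs_of_neg h]; ring
  set Q : ℕ → Pt d := fun m =>
    if m ≤ n then q m else Function.update w k (w k + σ * ((m : ℤ) - n)) with hQdef
  have hQn : Q n = w := by simp [hQdef, hqn]
  have hQabs : ∀ m, n < m → |Q m k| = |w k| + ((m : ℤ) - n) := by
    intro m hm
    simp only [hQdef, if_neg (by omega : ¬ m ≤ n), Function.update_self]
    exact hσ2 _ (by push_cast; omega)
  have hQC : ∀ m, Q m ∉ C := by
    intro m
    by_cases h1 : m ≤ n
    · simp only [hQdef, if_pos h1]; exact hqout m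
    · refine far_notMem hRC (k := k) ?_
      rw [hQabs m (by omega)]
      push_cast
      omega
  have hQadj : ∀ m, nnAdj (Q m) (Q (m+1)) := by
    intro m
    rcases lt_trichotomy m n with h1 | h1 | h1
    · simp only [hQdef, if_pos (by omega : m ≤ n), if_pos (by omega : m + 1 ≤ n)]
      exact hqadj m h1
    · subst h1
      simp only [hQdef, if_pos (le_refl m), if_neg (by omega : ¬ m + 1 ≤ m)]
      rw [nnAdj_iff]
      refine ⟨k, ?_, fun j hj => ?_⟩
      · rw [hqn]
        simp only [Function.update_self]
        have h5 : w k - (w k + σ * (((m + 1 : ℕ) : ℤ) - (m:ℕ))) = -σ := by push_cast; ring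
        rw [h5, Int.natAbs_neg]
        exact hσ1
      · rw [hqn, Function.update_of_ne hj]
    · simp only [hQdef, if_neg (by omega : ¬ m ≤ n), if_neg (by omega : ¬ m + 1 ≤ n)]
      rw [nnAdj_iff]
      refine ⟨k, ?_, fun j hj => ?_⟩
      · simp only [Function.update_self]
        have : w k + σ * ((m:ℤ) - n) - (w k + σ * (((m:ℕ):ℤ)+1 - n)) = -σ := by push_cast; ring
        rw [show (((m+1:ℕ)):ℤ) = ((m:ℕ):ℤ)+1 by push_cast; ring, this, Int.natAbs_neg]
        exact hσ1
      · rw [Function.update_of_ne hj, Function.update_of_ne hj]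
  have hesc : ∀ x : Pt d, ∃ N, ∀ m, N ≤ m → Q m ≠ x := by
    intro x
    refine ⟨n + (x k).natAbs + 1, fun m hm => fun he => ?_⟩
    have h1 := hQabs m (by omega)
    rw [he] at h1
    have h2 : |x k| = ((x k).natAbs : ℤ) := by
      rcases abs_cases (x k) with ⟨h3, h4⟩ | ⟨h3, h4⟩ <;> omega
    have h3 : (0:ℤ) ≤ |w k| := abs_nonneg _
    have h4 : ((n + (x k).natAbs + 1 : ℕ) : ℤ) ≤ (m:ℤ) := by exact_mod_cast hm
    push_cast at h4
    omega
  choose B hB using hesc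
  set L : Pt d → ℕ := fun x => Nat.findGreatest (fun m => Q m = x) (B x) with hLdef
  have hmB : ∀ m, m < B (Q m) := by
    intro m
    by_contra hc
    exact hB (Q m) m (by omega) rfl
  have hocc : ∀ m, Q (L (Q m)) = Q m := by
    intro m
    simp only [hLdef]
    exact Nat.findGreatest_spec (P := fun m' => Q m' = Q m) (le_of_lt (hmB m)) rfl
  have hLge : ∀ m, m ≤ L (Q m) := by
    intro m
    simp only [hLdef]
    exact Nat.le_findGreatest (le_of_lt (hmB m)) rfl
  have hlast : ∀ x m', L x < m' → Q m' ≠ x := by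
    intro x m' hm'
    by_cases h1 : m' ≤ B x
    · simp only [hLdef] at hm'
      exact Nat.findGreatest_is_greatest hm' h1
    · exact hB x m' (by omega)
  set idx : ℕ → ℕ := fun t => Nat.rec (L v) (fun _ prev => L (Q (prev + 1))) t with hidxdef
  have hQ0 : Q 0 = v := by simp [hQdef, hq0]
  set p : ℕ → Pt d := fun t => Q (idx t) with hpdef
  have hp0 : p 0 = v := by
    have : idx 0 = L v := rfl
    rw [hpdef]
    simp only [this]
    rw [← hQ0]
    exact hocc 0
  have hQidx : ∀ t, Q (idx (t+1)) = Q (idx t + 1) := by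
    intro t
    have : idx (t+1) = L (Q (idx t + 1)) := rfl
    rw [this]
    exact hocc _
  have hadj' : ∀ t, nnAdj (p t) (p (t+1)) := by
    intro t
    rw [hpdef]
    simp only
    rw [hQidx t]
    exact hQadj (idx t)
  have hmono : ∀ t, idx t < idx (t+1) := by
    intro t
    have h1 : idx t + 1 ≤ L (Q (idx t + 1)) := hLge (idx t + 1)
    have h2 : idx (t+1) = L (Q (idx t + 1)) := rfl
    omega
  have hsm : StrictMono idx := strictMono_nat_of_lt_succ hmono
  have hidxL : ∀ t, idx t = L (p t) := by
    intro t
    cases t with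
    | zero => rw [hp0]; rfl
    | succ l =>
      have h1 : p (l+1) = Q (idx l + 1) := hQidx l
      have h2 : idx (l+1) = L (Q (idx l + 1)) := rfl
      rw [h1, h2]
  have hne : ∀ s t, s < t → p s ≠ p t := by
    intro s t hst he
    have h1 : L (p s) < idx t := by rw [← hidxL s]; exact hsm hst
    exact hlast (p s) (idx t) h1 he.symm
  refine ⟨p, hp0, ?_, hadj', fun t => hQC (idx t)⟩
  intro s t hst
  by_contra hc
  rcases lt_trichotomy s t with h | h | h
  · exact hne s t h hst
  · exact hc h
  · exact hne t s h hst.symm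

lemma set_eq (hfin : C.Finite) :
    {v : Pt d | v ∉ C ∧ (∃ w ∈ C, lAdj v w) ∧
      ∃ p : ℕ → Pt d, p 0 = v ∧ Function.Injective p ∧
        (∀ n, nnAdj (p n) (p (n+1))) ∧ ∀ n, p n ∉ C} = AV C := by
  ext v
  constructor
  · rintro ⟨hvC, hadj, p, hp0, hpinj, hpadj, hpout⟩
    refine ⟨hadj, hvC, ?_⟩
    intro F hF
    have hpre : (p ⁻¹' F).Finite := Set.Finite.preimage hpinj.injOn hF
    obtain ⟨m, hm⟩ := hpre.infinite_compl.nonempty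
    have hreach : ∀ m, Reach C v (p m) := by
      intro m
      induction m with
      | zero => rw [hp0]; exact Relation.ReflTransGen.refl
      | succ l ih => exact ih.tail ⟨hpadj l, hpout l, hpout (l+1)⟩
    exact ⟨p m, hm, hreach m⟩
  · rintro ⟨hadj, hvis⟩
    exact ⟨hvis.1, hadj, vis_ray hfin hvis⟩


section integrate
variable (φ : Pt d → Pt d → ZMod 2)

def psi : Pt d → Fin d → ZMod 2 := fun x i => φ x (x + ee i)

def Sline (x : Pt d) (i : Fin d) (n : ℤ) : ZMod 2 :=
  if 0 ≤ n then ∑ t ∈ Finset.range n.toNat, psi φ (x + (t:ℤ) • ee i) i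
  else ∑ t ∈ Finset.range (-n).toNat, psi φ (x - ((t:ℤ)+1) • ee i) i

lemma Srec (x : Pt d) (i : Fin d) (n : ℤ) :
    Sline φ x i (n+1) = Sline φ x i n + psi φ (x + n • ee i) i := by
  rcases lt_trichotomy n (-1) with h | h | h
  · rw [Sline, Sline, if_neg (by omega), if_neg (by omega)]
    have h1 : (-n).toNat = (-(n+1)).toNat + 1 := by omega
    rw [h1, Finset.sum_range_succ]
    have h2 : x - (((-(n+1)).toNat : ℤ) + 1) • ee i = x + n • ee i := by
      have : (((-(n+1)).toNat : ℤ) + 1) = -n := by omega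
      rw [this]; module
    rw [h2]
    linear_combination - zm2 (psi φ (x + n • ee i) i)
  · subst h
    rw [Sline, Sline, if_pos (by omega), if_neg (by omega)]
    have h1 : ((-1:ℤ)+1).toNat = 0 := by omega
    have h2 : (-(-1:ℤ)).toNat = 1 := by omega
    rw [h1, h2, Finset.sum_range_zero, Finset.sum_range_one]
    have h3 : x - (((0:ℕ):ℤ)+1) • ee i = x + (-1:ℤ) • ee i := by push_cast; module
    rw [h3]
    exact (zm2 _).symm
  · have hn : 0 ≤ n := by omega
    rw [Sline, Sline, if_pos (by omega), if_pos hn]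
    have h1 : (n+1).toNat = n.toNat + 1 := by omega
    rw [h1, Finset.sum_range_succ]
    have h2 : x + ((n.toNat : ℤ)) • ee i = x + n • ee i := by
      have : ((n.toNat : ℤ)) = n := by omega
      rw [this]
    rw [h2]

lemma Sline_shift
    (hsq : ∀ x (i j : Fin d), i ≠ j →
      psi φ x i + psi φ (x + ee i) j + psi φ (x + ee j) i + psi φ x j = 0)
    (x : Pt d) (i j : Fin d) (hij : i ≠ j) (n : ℤ) :
    Sline φ (x + ee j) i n + Sline φ x i n = psi φ x j + psi φ (x + n • ee i) j := by
  induction n using Int.induction_on with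
  | zero =>
    rw [Sline, Sline, if_pos le_rfl, if_pos le_rfl]
    simp only [Int.toNat_zero, Finset.range_zero, Finset.sum_empty, zero_smul, add_zero]
    exact (zm2 _).symm
  | succ k ih =>
    rw [Srec, Srec]
    have e1 : x + ee j + (k:ℤ) • ee i = x + (k:ℤ) • ee i + ee j := by abel
    have e2 : x + ((k:ℤ)+1) • ee i = x + (k:ℤ) • ee i + ee i := by
      rw [add_smul, one_smul]; abel
    rw [e1, e2]
    have hs := hsq (x + (k:ℤ) • ee i) i j hij
    linear_combination ih + hs - zm2 (psi φ (x + (k:ℤ) • ee i + ee i) j)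
  | pred k ih =>
    have h1 := Srec φ x i (-(k:ℤ)-1)
    have h2 := Srec φ (x + ee j) i (-(k:ℤ)-1)
    have e0 : (-(k:ℤ)-1) + 1 = -(k:ℤ) := by ring
    rw [e0] at h1 h2
    have e1 : x + ee j + (-(k:ℤ)-1) • ee i = x + (-(k:ℤ)-1) • ee i + ee j := by abel
    have e2 : x + (-(k:ℤ)) • ee i = x + (-(k:ℤ)-1) • ee i + ee i := by
      have h3 : (-(k:ℤ)) = (-(k:ℤ)-1) + 1 := by ring
      rw [h3, add_smul, one_smul]; abel
    rw [e1] at h2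
    rw [e2] at ih
    have hs := hsq (x + (-(k:ℤ)-1) • ee i) i j hij
    have goal_eq : Sline φ (x + ee j) i (-(k:ℤ)-1) + Sline φ x i (-(k:ℤ)-1)
        = psi φ x j + psi φ (x + (-(k:ℤ)-1) • ee i) j := by
      linear_combination ih + hs + h1 + h2
        + zm2 (Sline φ (x + ee j) i (-(k:ℤ)-1))
        + zm2 (Sline φ x i (-(k:ℤ)-1))
        - zm2 (psi φ (x + (-(k:ℤ)-1) • ee i) j)
        - zm2 (Sline φ (x + ee j) i (-(k:ℤ)))
        - zm2 (Sline φ x i (-(k:ℤ)))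
    exact goal_eq

def PP (k : ℕ) (x : Pt d) : Pt d := fun j => if (j:ℕ) < k then x j else 0

lemma PP_d (x : Pt d) : PP d x = x := by
  funext j; simp [PP, j.isLt]

lemma PP_succ (x : Pt d) (i : Fin d) : PP ((i:ℕ)+1) x = PP (i:ℕ) x + (x i) • ee i := by
  funext m
  simp only [PP, Pi.add_apply, Pi.smul_apply, ee, smul_eq_mul]
  by_cases hm : m = i
  · subst hm
    rw [if_pos (Nat.lt_succ_self _), if_neg (lt_irrefl _), if_pos rfl, mul_one, zero_add]
  · rw [if_neg hm, mul_zero, add_zero]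
    have hmn : (m:ℕ) ≠ (i:ℕ) := fun hc => hm (Fin.ext hc)
    by_cases h2 : (m:ℕ) < (i:ℕ)
    · rw [if_pos (by omega), if_pos h2]
    · rw [if_neg (by omega), if_neg h2]

def ff (x : Pt d) : ZMod 2 := ∑ i : Fin d, Sline φ (PP (i:ℕ) x) i (x i)

lemma ff_step
    (hsq : ∀ x (i j : Fin d), i ≠ j →
      psi φ x i + psi φ (x + ee i) j + psi φ (x + ee j) i + psi φ x j = 0)
    (x : Pt d) (j : Fin d) :
    ff φ (x + ee j) + ff φ x = psi φ x j := by
  classical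
  set a : ℕ → ZMod 2 := fun k => psi φ (PP k x) j with ha
  set δ : ℕ → ZMod 2 := fun k =>
    if k < (j:ℕ) then 0 else if k = (j:ℕ) then a ((j:ℕ)+1) else a k + a (k+1) with hδ
  have hδ_lt : ∀ k, k < (j:ℕ) → δ k = 0 := by
    intro k hk; rw [hδ]; simp only; rw [if_pos hk]
  have hδ_eq : δ (j:ℕ) = a ((j:ℕ)+1) := by
    simp [hδ]
  have hδ_gt : ∀ k, (j:ℕ) < k → δ k = a k + a (k+1) := by
    intro k hk; rw [hδ]; simp only; rw [if_neg (by omega), if_neg (by omega)]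
  have hsum : ff φ (x + ee j) + ff φ x
      = ∑ i : Fin d, (Sline φ (PP (i:ℕ) (x + ee j)) i ((x + ee j) i)
          + Sline φ (PP (i:ℕ) x) i (x i)) := by
    rw [ff, ff, ← Finset.sum_add_distrib]
  have hterm : ∀ i : Fin d,
      Sline φ (PP (i:ℕ) (x + ee j)) i ((x + ee j) i) + Sline φ (PP (i:ℕ) x) i (x i)
        = δ (i:ℕ) := by
    intro i
    rcases lt_trichotomy ((i:ℕ)) ((j:ℕ)) with hij | hij | hij
    · have hne : i ≠ j := fun hc => by rw [hc] at hij; omega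
      have e1 : PP (i:ℕ) (x + ee j) = PP (i:ℕ) x := by
        funext m
        simp only [PP, Pi.add_apply, ee]
        by_cases hm : (m:ℕ) < (i:ℕ)
        · have hmj : m ≠ j := fun hc => by rw [hc] at hm; omega
          rw [if_pos hm, if_pos hm, if_neg hmj, add_zero]
        · rw [if_neg hm, if_neg hm]
      have e2 : (x + ee j) i = x i := by
        simp [ee, hne]
      rw [e1, e2, hδ_lt _ hij]
      exact zm2 _
    · have hij' : i = j := Fin.ext hij
      subst hij'
      have e1 : PP (i:ℕ) (x + ee i) = PP (i:ℕ) x := by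
        funext m
        simp only [PP, Pi.add_apply, ee]
        by_cases hm : (m:ℕ) < (i:ℕ)
        · have hmj : m ≠ i := fun hc => by rw [hc] at hm; omega
          rw [if_pos hm, if_pos hm, if_neg hmj, add_zero]
        · rw [if_neg hm, if_neg hm]
      have e2 : (x + ee i) i = x i + 1 := by simp [ee]
      rw [e1, e2, Srec, hδ_eq, ha]
      simp only
      rw [← PP_succ]
      linear_combination zm2 (Sline φ (PP (i:ℕ) x) i (x i))
    · have hne : i ≠ j := fun hc => by rw [hc] at hij; omega
      have e1 : PP (i:ℕ) (x + ee j) = PP (i:ℕ) x + ee j := by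
        funext m
        simp only [PP, Pi.add_apply, ee]
        by_cases hm : (m:ℕ) < (i:ℕ)
        · rw [if_pos hm, if_pos hm]
        · have hmj : m ≠ j := fun hc => by rw [hc] at hm; omega
          rw [if_neg hm, if_neg hm, if_neg hmj, add_zero]
      have e2 : (x + ee j) i = x i := by simp [ee, hne]
      rw [e1, e2, Sline_shift φ hsq _ i j hne, hδ_gt _ hij, ha]
      simp only
      rw [← PP_succ]
  have htele : ∀ m, (j:ℕ) < m → ∑ k ∈ Finset.range m, δ k = a m := by
    intro m
    induction m with
    | zero => omega
    | succ l ih =>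
      intro hl
      rcases Nat.lt_succ_iff_lt_or_eq.mp hl with h | h
      · rw [Finset.sum_range_succ, ih h, hδ_gt _ h]
        linear_combination zm2 (a l)
      · subst h
        rw [Finset.sum_range_succ]
        have h0 : ∑ k ∈ Finset.range (j:ℕ), δ k = 0 := by
          apply Finset.sum_eq_zero
          intro k hk
          exact hδ_lt _ (Finset.mem_range.mp hk)
        rw [h0, zero_add, hδ_eq]
  rw [hsum, Finset.sum_congr rfl (fun i _ => hterm i), Fin.sum_univ_eq_sum_range δ d,
    htele d j.isLt, ha]
  simp only [PP_d]

lemma exists_potential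
    (hsym : ∀ a b, φ a b = φ b a)
    (hsq : ∀ x (i j : Fin d), i ≠ j →
      psi φ x i + psi φ (x + ee i) j + psi φ (x + ee j) i + psi φ x j = 0) :
    ∃ f : Pt d → ZMod 2, ∀ a b, nnAdj a b → f a + f b = φ a b := by
  refine ⟨ff φ, fun a b hab => ?_⟩
  rcases nnAdj_cases hab with ⟨i, h | h⟩
  · subst h
    rw [add_comm]
    exact ff_step φ hsq a i
  · subst h
    rw [ff_step φ hsq b i, psi, hsym]

end integrate


section main
variable (C : Set (Pt d)) (u₀ : Pt d)

def phi : Pt d → Pt d → ZMod 2 := fun a b =>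
  (if a ∈ C ∧ Vis C b ∧ rA C b u₀ then 1 else 0) +
  (if b ∈ C ∧ Vis C a ∧ rA C a u₀ then 1 else 0)

def indA (z : Pt d) : ZMod 2 := if Vis C z ∧ rA C z u₀ then 1 else 0

lemma phi_symm (a b : Pt d) : phi C u₀ a b = phi C u₀ b a := add_comm _ _

lemma phi_out {a b : Pt d} (ha : a ∉ C) (hb : b ∉ C) : phi C u₀ a b = 0 := by
  rw [phi, if_neg (fun h => ha h.1), if_neg (fun h => hb h.1), add_zero]

lemma phi_in {a b : Pt d} (ha : a ∈ C) (hb : b ∈ C) : phi C u₀ a b = 0 := by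
  rw [phi, if_neg (fun h => h.2.1.1 hb), if_neg (fun h => h.2.1.1 ha), add_zero]

lemma phi_cross {a b : Pt d} (ha : a ∈ C) (hb : b ∉ C) :
    phi C u₀ a b = indA C u₀ b := by
  rw [phi, indA]
  have h2 : (if b ∈ C ∧ Vis C a ∧ rA C a u₀ then (1:ZMod 2) else 0) = 0 :=
    if_neg (fun h => hb h.1)
  rw [h2, add_zero]
  by_cases h : Vis C b ∧ rA C b u₀
  · rw [if_pos ⟨ha, h⟩, if_pos h]
  · rw [if_neg (fun hc => h hc.2), if_neg h]

lemma phi_cross' {a b : Pt d} (ha : a ∉ C) (hb : b ∈ C) :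
    phi C u₀ a b = indA C u₀ a := by
  rw [phi_symm]; exact phi_cross C u₀ hb ha

lemma vis_step {a b : Pt d} (h : nnAdj a b) (ha : a ∉ C) (hb : b ∉ C) (hv : Vis C a) :
    Vis C b := vis_of_reach hv (Relation.ReflTransGen.single ⟨h, ha, hb⟩)

lemma ind_step {z z' : Pt d} (hadj : nnAdj z z') (hz : z ∉ C) (hz' : z' ∉ C)
    (hw : ∃ w ∈ C, lAdj z w) (hw' : ∃ w ∈ C, lAdj z' w) :
    indA C u₀ z = indA C u₀ z' := by
  by_cases hv : Vis C z
  · have hv' : Vis C z' := vis_step C hadj hz hz' hv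
    have hAV : z ∈ AV C := ⟨hw, hv⟩
    have hAV' : z' ∈ AV C := ⟨hw', hv'⟩
    have hstep : rA C z z' := Relation.ReflTransGen.single ⟨hadj, hAV, hAV'⟩
    by_cases hr : rA C z u₀
    · rw [indA, indA, if_pos ⟨hv, hr⟩, if_pos ⟨hv', rA_of_reach_u0 hstep hr⟩]
    · rw [indA, indA, if_neg (fun h => hr h.2), if_neg ?_]
      rintro ⟨_, hr'⟩
      exact hr (rA_of_reach_u0 (rA_symm hstep) hr')
  · have hv' : ¬ Vis C z' := fun h => hv (vis_step C (nnAdj_symm hadj) hz' hz h)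
    rw [indA, indA, if_neg (fun h => hv h.1), if_neg (fun h => hv' h.1)]

lemma lAdj_symm' {x y : Pt d} (h : lAdj x y) : lAdj y x := by
  refine ⟨h.1.symm, fun i => ?_⟩
  rw [← Int.natAbs_neg, neg_sub]
  exact h.2 i

lemma lAdj_two (x : Pt d) (i j : Fin d) (hij : i ≠ j) : lAdj x (x + ee i + ee j) := by
  constructor
  · intro hc
    have h0 := congrFun hc i
    simp only [Pi.add_apply, ee] at h0
    simp only [if_true] at h0
    rw [if_neg hij] at h0
    omega
  · intro m
    simp only [Pi.add_apply, ee]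
    by_cases h1 : m = i
    · subst h1; rw [if_pos rfl, if_neg hij]; omega
    · by_cases h2 : m = j
      · subst h2; rw [if_neg h1, if_pos rfl]; omega
      · rw [if_neg h1, if_neg h2]; omega

lemma lAdj_diag (x : Pt d) (i j : Fin d) (hij : i ≠ j) : lAdj (x + ee i) (x + ee j) := by
  constructor
  · intro hc
    have h0 := congrFun hc i
    simp only [Pi.add_apply, ee] at h0
    simp only [if_true] at h0
    rw [if_neg hij] at h0
    omega
  · intro m
    simp only [Pi.add_apply, ee]
    by_cases h1 : m = i
    · subst h1; rw [if_pos rfl, if_neg hij]; omega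
    · by_cases h2 : m = j
      · subst h2; rw [if_neg h1, if_pos rfl]; omega
      · rw [if_neg h1, if_neg h2]; omega

lemma phi_sq (x : Pt d) (i j : Fin d) (hij : i ≠ j) :
    psi (phi C u₀) x i + psi (phi C u₀) (x + ee i) j
      + psi (phi C u₀) (x + ee j) i + psi (phi C u₀) x j = 0 := by
  have hrs0 : (x + ee j) + ee i = x + ee i + ee j := by abel
  simp only [psi]
  rw [hrs0]
  have hadj_pq : nnAdj x (x + ee i) := nnAdj_add_ee x i
  have hadj_qs : nnAdj (x + ee i) (x + ee i + ee j) := nnAdj_add_ee (x + ee i) j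
  have hadj_rs : nnAdj (x + ee j) (x + ee i + ee j) := by
    have h := nnAdj_add_ee (x + ee j) i
    rwa [hrs0] at h
  have hadj_pr : nnAdj x (x + ee j) := nnAdj_add_ee x j
  have lpq : lAdj x (x + ee i) := nnAdj_lAdj hadj_pq
  have lqs : lAdj (x + ee i) (x + ee i + ee j) := nnAdj_lAdj hadj_qs
  have lrs : lAdj (x + ee j) (x + ee i + ee j) := nnAdj_lAdj hadj_rs
  have lpr : lAdj x (x + ee j) := nnAdj_lAdj hadj_pr
  have lps : lAdj x (x + ee i + ee j) := lAdj_two x i j hij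
  have lqr : lAdj (x + ee i) (x + ee j) := lAdj_diag x i j hij
  by_cases hp : x ∈ C <;> by_cases hq : x + ee i ∈ C <;>
    by_cases hr : x + ee j ∈ C <;> by_cases hs : x + ee i + ee j ∈ C
  · rw [phi_in C u₀ hp hq, phi_in C u₀ hq hs, phi_in C u₀ hr hs, phi_in C u₀ hp hr]; simp
  · rw [phi_in C u₀ hp hq, phi_cross C u₀ hq hs, phi_cross C u₀ hr hs, phi_in C u₀ hp hr]
    simpa using zm2 _
  · rw [phi_in C u₀ hp hq, phi_in C u₀ hq hs, phi_cross' C u₀ hr hs, phi_cross C u₀ hp hr]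
    simpa using zm2 _
  · rw [phi_in C u₀ hp hq, phi_cross C u₀ hq hs, phi_out C u₀ hr hs, phi_cross C u₀ hp hr]
    have e1 : indA C u₀ (x + ee i + ee j) = indA C u₀ (x + ee j) :=
      ind_step C u₀ (nnAdj_symm hadj_rs) hs hr
        ⟨x + ee i, hq, lAdj_symm' lqs⟩ ⟨x, hp, lAdj_symm' lpr⟩
    rw [e1]
    simpa using zm2 _
  · rw [phi_cross C u₀ hp hq, phi_cross' C u₀ hq hs, phi_in C u₀ hr hs, phi_in C u₀ hp hr]
    simpa using zm2 _
  · rw [phi_cross C u₀ hp hq, phi_out C u₀ hq hs, phi_cross C u₀ hr hs, phi_in C u₀ hp hr]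
    have e1 : indA C u₀ (x + ee i) = indA C u₀ (x + ee i + ee j) :=
      ind_step C u₀ hadj_qs hq hs
        ⟨x, hp, lAdj_symm' lpq⟩ ⟨x + ee j, hr, lAdj_symm' lrs⟩
    rw [e1]
    simpa using zm2 _
  · rw [phi_cross C u₀ hp hq, phi_cross' C u₀ hq hs, phi_cross' C u₀ hr hs, phi_cross C u₀ hp hr]
    linear_combination zm2 (indA C u₀ (x + ee i)) + zm2 (indA C u₀ (x + ee j))
  · rw [phi_cross C u₀ hp hq, phi_out C u₀ hq hs, phi_out C u₀ hr hs, phi_cross C u₀ hp hr]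
    have e1 : indA C u₀ (x + ee i) = indA C u₀ (x + ee i + ee j) :=
      ind_step C u₀ hadj_qs hq hs
        ⟨x, hp, lAdj_symm' lpq⟩ ⟨x, hp, lAdj_symm' lps⟩
    have e2 : indA C u₀ (x + ee i + ee j) = indA C u₀ (x + ee j) :=
      ind_step C u₀ (nnAdj_symm hadj_rs) hs hr
        ⟨x, hp, lAdj_symm' lps⟩ ⟨x, hp, lAdj_symm' lpr⟩
    rw [e1, e2]
    simpa using zm2 _
  · rw [phi_cross' C u₀ hp hq, phi_in C u₀ hq hs, phi_in C u₀ hr hs, phi_cross' C u₀ hp hr]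
    simpa using zm2 _
  · rw [phi_cross' C u₀ hp hq, phi_cross C u₀ hq hs, phi_cross C u₀ hr hs, phi_cross' C u₀ hp hr]
    linear_combination zm2 (indA C u₀ x) + zm2 (indA C u₀ (x + ee i + ee j))
  · rw [phi_cross' C u₀ hp hq, phi_in C u₀ hq hs, phi_cross' C u₀ hr hs, phi_out C u₀ hp hr]
    have e1 : indA C u₀ x = indA C u₀ (x + ee j) :=
      ind_step C u₀ hadj_pr hp hr ⟨x + ee i, hq, lpq⟩ ⟨x + ee i + ee j, hs, lrs⟩
    rw [e1]
    simpa using zm2 _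
  · rw [phi_cross' C u₀ hp hq, phi_cross C u₀ hq hs, phi_out C u₀ hr hs, phi_out C u₀ hp hr]
    have e1 : indA C u₀ x = indA C u₀ (x + ee j) :=
      ind_step C u₀ hadj_pr hp hr ⟨x + ee i, hq, lpq⟩ ⟨x + ee i, hq, lAdj_symm' lqr⟩
    have e2 : indA C u₀ (x + ee j) = indA C u₀ (x + ee i + ee j) :=
      ind_step C u₀ hadj_rs hr hs
        ⟨x + ee i, hq, lAdj_symm' lqr⟩ ⟨x + ee i, hq, lAdj_symm' lqs⟩
    rw [e1, e2]
    simpa using zm2 _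
  · rw [phi_out C u₀ hp hq, phi_cross' C u₀ hq hs, phi_in C u₀ hr hs, phi_cross' C u₀ hp hr]
    have e1 : indA C u₀ (x + ee i) = indA C u₀ x :=
      ind_step C u₀ (nnAdj_symm hadj_pq) hq hp ⟨x + ee i + ee j, hs, lqs⟩ ⟨x + ee j, hr, lpr⟩
    rw [e1]
    simpa using zm2 _
  · rw [phi_out C u₀ hp hq, phi_out C u₀ hq hs, phi_cross C u₀ hr hs, phi_cross' C u₀ hp hr]
    have e1 : indA C u₀ x = indA C u₀ (x + ee i) :=
      ind_step C u₀ hadj_pq hp hq ⟨x + ee j, hr, lpr⟩ ⟨x + ee j, hr, lqr⟩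
    have e2 : indA C u₀ (x + ee i) = indA C u₀ (x + ee i + ee j) :=
      ind_step C u₀ hadj_qs hq hs ⟨x + ee j, hr, lqr⟩ ⟨x + ee j, hr, lAdj_symm' lrs⟩
    rw [e1, e2]
    simpa using zm2 _
  · rw [phi_out C u₀ hp hq, phi_cross' C u₀ hq hs, phi_cross' C u₀ hr hs, phi_out C u₀ hp hr]
    have e1 : indA C u₀ (x + ee i) = indA C u₀ x :=
      ind_step C u₀ (nnAdj_symm hadj_pq) hq hp ⟨x + ee i + ee j, hs, lqs⟩ ⟨x + ee i + ee j, hs, lps⟩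
    have e2 : indA C u₀ x = indA C u₀ (x + ee j) :=
      ind_step C u₀ hadj_pr hp hr ⟨x + ee i + ee j, hs, lps⟩ ⟨x + ee i + ee j, hs, lrs⟩
    rw [e1, e2]
    simpa using zm2 _
  · rw [phi_out C u₀ hp hq, phi_out C u₀ hq hs, phi_out C u₀ hr hs, phi_out C u₀ hp hr]
    simp


def wstep (a b : Pt d) : Prop := nnAdj a b ∨ a = b

lemma seg_reach (z : ℕ → Pt d) (a : ℕ) :
    ∀ b, a ≤ b → (∀ t, a ≤ t → t < b → wstep (z t) (z (t+1))) →
      (∀ t, a ≤ t → t ≤ b → z t ∉ C) → Reach C (z a) (z b) := by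
  intro b hab
  induction b, hab using Nat.le_induction with
  | base => intro _ _; exact Relation.ReflTransGen.refl
  | succ n hn ih =>
    intro hstep hout
    have h1 := ih (fun t ht1 ht2 => hstep t ht1 (by omega))
      (fun t ht1 ht2 => hout t ht1 (by omega))
    rcases hstep n hn (by omega) with hadj | heq
    · exact h1.tail ⟨hadj, hout n hn (by omega), hout (n+1) (by omega) le_rfl⟩
    · rwa [← heq]

lemma seg_rA (z : ℕ → Pt d) (a : ℕ) :
    ∀ b, a ≤ b → (∀ t, a ≤ t → t < b → wstep (z t) (z (t+1))) →
      (∀ t, a ≤ t → t ≤ b → z t ∈ AV C) → rA C (z a) (z b) := by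
  intro b hab
  induction b, hab using Nat.le_induction with
  | base => intro _ _; exact Relation.ReflTransGen.refl
  | succ n hn ih =>
    intro hstep hmem
    have h1 := ih (fun t ht1 ht2 => hstep t ht1 (by omega))
      (fun t ht1 ht2 => hmem t ht1 (by omega))
    rcases hstep n hn (by omega) with hadj | heq
    · exact h1.tail ⟨hadj, hmem n hn (by omega), hmem (n+1) (by omega) le_rfl⟩
    · rwa [← heq]

lemma seg_f (f : Pt d → ZMod 2)
    (hedge : ∀ a b, nnAdj a b → f a + f b = phi C u₀ a b) (z : ℕ → Pt d) (a : ℕ) :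
    ∀ b, a ≤ b → (∀ t, a ≤ t → t < b → wstep (z t) (z (t+1))) →
      (∀ t, a ≤ t → t ≤ b → z t ∉ C) → f (z a) = f (z b) := by
  intro b hab
  induction b, hab using Nat.le_induction with
  | base => intro _ _; rfl
  | succ n hn ih =>
    intro hstep hout
    have h1 := ih (fun t ht1 ht2 => hstep t ht1 (by omega))
      (fun t ht1 ht2 => hout t ht1 (by omega))
    rcases hstep n hn (by omega) with hadj | heq
    · have h2 := hedge _ _ hadj
      rw [phi_out C u₀ (hout n hn (by omega)) (hout (n+1) (by omega) le_rfl)] at h2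
      rw [h1]
      exact zm2' _ _ h2
    · rw [h1, heq]

lemma seg_ind (z : ℕ → Pt d) (a : ℕ) :
    ∀ b, a ≤ b → (∀ t, a ≤ t → t < b → wstep (z t) (z (t+1))) →
      (∀ t, a ≤ t → t ≤ b → z t ∉ C) →
      (∀ t, a ≤ t → t ≤ b → ∃ w ∈ C, lAdj (z t) w) →
      indA C u₀ (z a) = indA C u₀ (z b) := by
  intro b hab
  induction b, hab using Nat.le_induction with
  | base => intro _ _ _; rfl
  | succ n hn ih =>
    intro hstep hout hw
    have h1 := ih (fun t ht1 ht2 => hstep t ht1 (by omega))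
      (fun t ht1 ht2 => hout t ht1 (by omega)) (fun t ht1 ht2 => hw t ht1 (by omega))
    rcases hstep n hn (by omega) with hadj | heq
    · rw [h1]
      exact ind_step C u₀ hadj (hout n hn (by omega)) (hout (n+1) (by omega) le_rfl)
        (hw n hn (by omega)) (hw (n+1) (by omega) le_rfl)
    · rw [h1, heq]

lemma reach_f (f : Pt d → ZMod 2)
    (hedge : ∀ a b, nnAdj a b → f a + f b = phi C u₀ a b) {a b : Pt d}
    (h : Reach C a b) : f a = f b := by
  induction h with
  | refl => rfl
  | tail hr hstep ih =>
    have h2 := hedge _ _ hstep.1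
    rw [phi_out C u₀ hstep.2.1 hstep.2.2] at h2
    rw [ih]
    exact zm2' _ _ h2

/-- the main excursion-parity lemma: along any short walk in the unit ball of an
anchor point of C, from C to C, f is constant -/
lemma walk_parity (f : Pt d → ZMod 2)
    (hedge : ∀ a b, nnAdj a b → f a + f b = phi C u₀ a b)
    (x₀ : Pt d) (hx₀ : x₀ ∈ C) :
    ∀ n, ∀ z : ℕ → Pt d, z 0 ∈ C → z n ∈ C →
      (∀ t, t < n → wstep (z t) (z (t+1))) →
      (∀ t, t ≤ n → ∀ i, (z t i - x₀ i).natAbs ≤ 1) →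
      f (z 0) = f (z n) := by
  intro n
  induction n using Nat.strong_induction_on with
  | _ n IH =>
    intro z h0 hn hstep hball
    rcases Nat.eq_zero_or_pos n with hz | hpos
    · subst hz; rfl
    by_cases h1 : z 1 ∈ C
    · have e : f (z 0) = f (z 1) := by
        rcases hstep 0 hpos with hadj | heq
        · have h2 := hedge _ _ hadj
          rw [phi_in C u₀ h0 h1] at h2
          exact zm2' _ _ h2
        · rw [heq]
      rw [e]
      have h5 := IH (n-1) (by omega) (fun t => z (t+1)) h1
        (by show z (n-1+1) ∈ C; rw [show n-1+1 = n by omega]; exact hn)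
        (fun t ht => hstep (t+1) (by omega))
        (fun t ht i => hball (t+1) (by omega) i)
      have h6 : f (z (0+1)) = f (z ((n-1)+1)) := h5
      rwa [show n-1+1 = n by omega] at h6
    · have hex : ∃ t, 0 < t ∧ t ≤ n ∧ z t ∈ C := ⟨n, hpos, le_rfl, hn⟩
      obtain ⟨⟨hr0, hrn, hrC⟩, hmin0⟩ : (0 < Nat.find hex ∧ Nat.find hex ≤ n ∧
          z (Nat.find hex) ∈ C) ∧ ∀ t, t < Nat.find hex → ¬(0 < t ∧ t ≤ n ∧ z t ∈ C) :=
        ⟨Nat.find_spec hex, fun t ht => Nat.find_min hex ht⟩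
      set r := Nat.find hex with hrdef
      have hmin : ∀ t, 0 < t → t < r → z t ∉ C := by
        intro t ht1 ht2 hc
        exact hmin0 t ht2 ⟨ht1, by omega, hc⟩
      have hr2 : 2 ≤ r := by
        by_contra hc
        have : r = 1 := by omega
        rw [this] at hrC
        exact h1 hrC
      have hout : ∀ t, 1 ≤ t → t ≤ r-1 → z t ∉ C := fun t ha hb => hmin t (by omega) (by omega)
      have hadj01 : nnAdj (z 0) (z 1) := by
        rcases hstep 0 hpos with hadj | heq
        · exact hadj
        · exfalso; rw [← heq] at h1; exact h1 h0
      have er : r - 1 + 1 = r := by omega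
      have hadjr : nnAdj (z (r-1)) (z r) := by
        rcases hstep (r-1) (by omega) with hadj | heq
        · rwa [er] at hadj
        · exfalso
          rw [er] at heq
          rw [← heq] at hrC
          exact hout (r-1) (by omega) le_rfl hrC
      have hφ1 : f (z 0) + f (z 1) = indA C u₀ (z 1) := by
        rw [hedge _ _ hadj01, phi_cross C u₀ h0 (hout 1 le_rfl (by omega))]
      have hφ2 : f (z (r-1)) + f (z r) = indA C u₀ (z (r-1)) := by
        rw [hedge _ _ hadjr, phi_cross' C u₀ (hout (r-1) (by omega) le_rfl) hrC]
      have hfmid : f (z 1) = f (z (r-1)) :=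
        seg_f C u₀ f hedge z 1 (r-1) (by omega)
          (fun t ht1 ht2 => hstep t (by omega))
          (fun t ht1 ht2 => hout t ht1 ht2)
      have hw : ∀ t, 1 ≤ t → t ≤ r-1 → ∃ w ∈ C, lAdj (z t) w := by
        intro t ht1 ht2
        refine ⟨x₀, hx₀, ⟨?_, fun i => hball t (by omega) i⟩⟩
        intro hc
        exact hout t ht1 ht2 (by rw [hc]; exact hx₀)
      have hind : indA C u₀ (z 1) = indA C u₀ (z (r-1)) :=
        seg_ind C u₀ z 1 (r-1) (by omega)
          (fun t ht1 ht2 => hstep t (by omega))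
          (fun t ht1 ht2 => hout t ht1 ht2) hw
      have hstep2 : f (z 0) = f (z r) := by
        linear_combination hφ1 + hφ2 + hfmid + hind + zm2 (f (z 1)) + zm2 (f (z r))
          - zm2 (indA C u₀ (z (r-1))) + 2 * zm2 (indA C u₀ (z (r-1)))
          - 2 * zm2 (f (z r)) - 2 * zm2 (f (z 1))
      rw [hstep2]
      have h5 := IH (n-r) (by omega) (fun t => z (t+r))
        (by show z (0+r) ∈ C; rw [show 0+r = r by omega]; exact hrC)
        (by show z (n-r+r) ∈ C; rw [show n-r+r = n by omega]; exact hn)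
        (fun t ht => by
          show wstep (z (t+r)) (z (t+1+r))
          rw [show t+1+r = t+r+1 by omega]
          exact hstep (t+r) (by omega))
        (fun t ht i => hball (t+r) (by omega) i)
      have h6 : f (z (0+r)) = f (z ((n-r)+r)) := h5
      rw [show 0+r = r by omega, show n-r+r = n by omega] at h6
      exact h6

def stair (x y : Pt d) (t : ℕ) : Pt d := fun i => if (i:ℕ) < t then y i else x i

lemma stair_zero (x y : Pt d) : stair x y 0 = x := by
  funext i; simp [stair]

lemma stair_d (x y : Pt d) : stair x y d = y := by
  funext i; simp [stair, i.isLt]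

lemma stair_ball (x y : Pt d) (h : ∀ i, (x i - y i).natAbs ≤ 1) (t : ℕ) (i : Fin d) :
    (stair x y t i - x i).natAbs ≤ 1 := by
  by_cases ht : (i:ℕ) < t
  · simp only [stair, if_pos ht]
    have := h i
    omega
  · simp only [stair, if_neg ht]
    omega

lemma stair_step (x y : Pt d) (h : ∀ i, (x i - y i).natAbs ≤ 1) (t : ℕ) :
    wstep (stair x y t) (stair x y (t+1)) := by
  by_cases ht : t < d
  · by_cases hxy : x ⟨t, ht⟩ = y ⟨t, ht⟩
    · right
      funext m
      simp only [stair]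
      by_cases hm : (m:ℕ) = t
      · have hm' : m = ⟨t, ht⟩ := Fin.ext hm
        rw [if_neg (by omega : ¬ (m:ℕ) < t), if_pos (by omega : (m:ℕ) < t+1), hm']
        exact hxy
      · have : ((m:ℕ) < t+1) ↔ ((m:ℕ) < t) := by omega
        by_cases h2 : (m:ℕ) < t
        · rw [if_pos h2, if_pos (by omega)]
        · rw [if_neg h2, if_neg (by omega)]
    · left
      rw [nnAdj_iff]
      refine ⟨⟨t, ht⟩, ?_, fun j hj => ?_⟩
      · simp only [stair]
        rw [if_neg (by omega : ¬ t < t), if_pos (by omega : t < t + 1)]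
        have := h ⟨t, ht⟩
        have hne : x ⟨t, ht⟩ - y ⟨t, ht⟩ ≠ 0 := fun hc => hxy (by omega)
        omega
      · have hjt : (j:ℕ) ≠ t := fun hc => hj (Fin.ext hc)
        simp only [stair]
        by_cases h2 : (j:ℕ) < t
        · rw [if_pos h2, if_pos (by omega)]
        · rw [if_neg h2, if_neg (by omega)]
  · right
    funext m
    have h1 : (m:ℕ) < t := by have := m.isLt; omega
    simp only [stair, if_pos h1, if_pos (by omega : (m:ℕ) < t+1)]

lemma ladj_f (f : Pt d → ZMod 2)
    (hedge : ∀ a b, nnAdj a b → f a + f b = phi C u₀ a b)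
    {x y : Pt d} (hx : x ∈ C) (hy : y ∈ C) (hxy : lAdj x y) : f x = f y := by
  have h := walk_parity C u₀ f hedge x hx d (stair x y)
    (by rw [stair_zero]; exact hx) (by rw [stair_d]; exact hy)
    (fun t _ => stair_step x y hxy.2 t)
    (fun t _ i => stair_ball x y hxy.2 t i)
  rwa [stair_zero, stair_d] at h

lemma cpath_f (f : Pt d → ZMod 2)
    (hedge : ∀ a b, nnAdj a b → f a + f b = phi C u₀ a b)
    (hconn : lConnSet C) {c₁ c₂ : Pt d} (h₁ : c₁ ∈ C) (h₂ : c₂ ∈ C) : f c₁ = f c₂ := by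
  have h := hconn c₁ h₁ c₂ h₂
  induction h with
  | refl => rfl
  | tail hr hstepc ih =>
    rw [ih hstepc.2.1]
    exact ladj_f C u₀ f hedge hstepc.2.1 hstepc.2.2 hstepc.1

lemma boundary_edge {u : Pt d} (hu : u ∈ AV C) :
    ∃ c k, c ∈ C ∧ k ∉ C ∧ Vis C k ∧ (∃ w ∈ C, lAdj k w) ∧ nnAdj c k ∧ rA C u k := by
  obtain ⟨⟨w, hwC, hlw⟩, hvis⟩ := hu
  have huC : u ∉ C := hvis.1
  have hz0 : stair u w 0 = u := stair_zero u w
  have hzd : stair u w d = w := stair_d u w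
  have hex : ∃ t, t ≤ d ∧ stair u w t ∈ C := ⟨d, le_rfl, by rw [hzd]; exact hwC⟩
  obtain ⟨⟨ht₀d, ht₀C⟩, hmin0⟩ : ((Nat.find hex ≤ d ∧ stair u w (Nat.find hex) ∈ C) ∧
      ∀ t, t < Nat.find hex → ¬(t ≤ d ∧ stair u w t ∈ C)) :=
    ⟨Nat.find_spec hex, fun t ht => Nat.find_min hex ht⟩
  set t₀ := Nat.find hex with ht₀def
  have ht₀1 : 1 ≤ t₀ := by
    by_contra hc
    have h0 : t₀ = 0 := by omega
    rw [h0, hz0] at ht₀C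
    exact huC ht₀C
  have hpre : ∀ t, t ≤ t₀ - 1 → stair u w t ∉ C := by
    intro t ht hc
    exact hmin0 t (by omega) ⟨by omega, hc⟩
  have hsteps : ∀ t, wstep (stair u w t) (stair u w (t+1)) :=
    fun t => stair_step u w hlw.2 t
  have hvis' : ∀ t, t ≤ t₀ - 1 → Vis C (stair u w t) := by
    intro t ht
    have hreach : Reach C (stair u w 0) (stair u w t) :=
      seg_reach C (stair u w) 0 t (by omega) (fun s _ _ => hsteps s)
        (fun s _ hs => hpre s (by omega))
    rw [hz0] at hreach
    exact vis_of_reach hvis hreach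
  have hmem : ∀ t, t ≤ t₀ - 1 → stair u w t ∈ AV C := by
    intro t ht
    refine ⟨⟨w, hwC, ⟨?_, fun i => ?_⟩⟩, hvis' t ht⟩
    · intro hc
      exact hpre t ht (by rw [hc]; exact hwC)
    · simp only [stair]
      by_cases h2 : (i:ℕ) < t
      · rw [if_pos h2]; omega
      · rw [if_neg h2]; exact hlw.2 i
  have hrA : rA C u (stair u w (t₀ - 1)) := by
    have := seg_rA C (stair u w) 0 (t₀-1) (by omega) (fun s _ _ => hsteps s)
      (fun s _ hs => hmem s hs)
    rwa [hz0] at this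
  have er : t₀ - 1 + 1 = t₀ := by omega
  have hadj : nnAdj (stair u w t₀) (stair u w (t₀ - 1)) := by
    rcases hsteps (t₀ - 1) with hadj | heq
    · rw [er] at hadj
      exact nnAdj_symm hadj
    · exfalso
      rw [er] at heq
      rw [← heq] at ht₀C
      exact hpre (t₀-1) le_rfl ht₀C
  exact ⟨stair u w t₀, stair u w (t₀ - 1), ht₀C, hpre (t₀-1) le_rfl,
    hvis' (t₀-1) le_rfl, (hmem (t₀-1) le_rfl).1, hadj, hrA⟩

end main

end
end S6

/-- Kesten's Lemma 2.23; first part of Lemma lemtop. If `C ⊆ ℤ^d` is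
finite and `ℒ`-connected, then its exterior boundary — the sites `v ∉ C` that are
`ℒ`-adjacent to some `w ∈ C` and from which there is an infinite self-avoiding
nearest-neighbour path disjoint from `C` — is connected in the nearest-neighbour graph. -/
theorem stmt6 (d : ℕ) (hd : 2 ≤ d) (C : Set (Pt d)) (hfin : C.Finite)
    (hconn : lConnSet C) :
    connSet {v : Pt d | v ∉ C ∧ (∃ w ∈ C, lAdj v w) ∧
      ∃ p : ℕ → Pt d, p 0 = v ∧ Function.Injective p ∧
        (∀ n, nnAdj (p n) (p (n+1))) ∧ ∀ n, p n ∉ C} := by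
  classical
  rw [S6.set_eq hfin]
  intro u₀ hu₀ v₀ hv₀
  by_contra hnot
  have hnot' : ¬ S6.rA C u₀ v₀ := hnot
  obtain ⟨c₁, k₁, hc₁, hk₁C, hk₁v, hk₁w, hadj₁, hrx⟩ := S6.boundary_edge C hu₀
  obtain ⟨c₂, k₂, hc₂, hk₂C, hk₂v, hk₂w, hadj₂, hry⟩ := S6.boundary_edge C hv₀
  obtain ⟨f, hedge⟩ := S6.exists_potential (S6.phi C u₀) (S6.phi_symm C u₀)
    (fun x i j hij => S6.phi_sq C u₀ x i j hij)
  have h1 : f c₁ + f k₁ = 1 := by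
    rw [hedge _ _ hadj₁, S6.phi_cross C u₀ hc₁ hk₁C, S6.indA,
      if_pos ⟨hk₁v, S6.rA_symm hrx⟩]
  have h2 : f c₂ + f k₂ = 0 := by
    rw [hedge _ _ hadj₂, S6.phi_cross C u₀ hc₂ hk₂C, S6.indA, if_neg ?_]
    rintro ⟨_, hr2⟩
    exact hnot' (S6.rA_symm (hry.trans hr2))
  have h3 : f k₁ = f k₂ := S6.reach_f C u₀ f hedge (S6.vis_connect hd hfin hk₁v hk₂v)
  have h4 : f c₁ = f c₂ := S6.cpath_f C u₀ f hedge hconn hc₁ hc₂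
  have hcontra : (1 : ZMod 2) = 0 := by rw [← h1, ← h2, h3, h4]
  exact one_ne_zero hcontra
end
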